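/- arXiv:2502.16512 — 6 statements merged into one kernel-verified Lean document; each statement's English description precedes it below -/
import Mathlib

section
/- Let E be a nonempty finite index set and let (L_e)_{e∈E} be a family of positive real numbers that is linearly independent over ℚ. For each e ∈ E let (γ_{e,ℓ})_{ℓ∈ℕ} be a sequence of real numbers such that γ_{e,ℓ} converges to some γ_e in the extended real line [−∞,∞] and γ_{e,ℓ}/ℓ → 0 as ℓ → ∞. Then there exists a sequence (λ_ℓ)_{ℓ∈ℕ} in (0,∞) with λ_ℓ → ∞ as ℓ → ∞ such that for every e ∈ E one has ℓ·sin(√(λ_ℓ)·L_e) → γ_e in [−∞,∞] and cos(√(λ_ℓ)·L_e) → 1 as ℓ → ∞. -/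
open Filter Topology

open Finset Complex

lemma int_indep {E : Type*} [Fintype E] {L : E → ℝ} (h : LinearIndependent ℚ L)
    (n : E → ℤ) (hn : ∑ e, (n e : ℝ) * L e = 0) : ∀ e, n e = 0 := by
  rw [Fintype.linearIndependent_iff] at h
  have h2 := h (fun e => (n e : ℚ)) ?_
  · intro e
    exact_mod_cast h2 e
  · rw [← hn]
    apply Finset.sum_congr rfl
    intro e _
    rw [Rat.smul_def]
    norm_num

lemma trig_close {x y δ : ℝ} (hδ : 0 ≤ δ) (h : 1 - Real.cos (x - y) ≤ δ) :
    |Real.sin x - Real.sin y| ≤ Real.sqrt (2 * δ) ∧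
      |Real.cos x - Real.cos y| ≤ Real.sqrt (2 * δ) := by
  have key : (Real.sin x - Real.sin y) ^ 2 + (Real.cos x - Real.cos y) ^ 2
      = 2 - 2 * Real.cos (x - y) := by
    rw [Real.cos_sub]
    nlinarith [Real.sin_sq_add_cos_sq x, Real.sin_sq_add_cos_sq y]
  constructor
  · apply Real.abs_le_sqrt
    nlinarith [sq_nonneg (Real.cos x - Real.cos y)]
  · apply Real.abs_le_sqrt
    nlinarith [sq_nonneg (Real.sin x - Real.sin y)]

lemma ereal_perturb {f g : ℕ → ℝ} {G : EReal}
    (hf : Filter.Tendsto (fun n => ((f n : ℝ) : EReal)) atTop (nhds G))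
    (hfg : Filter.Tendsto (fun n => g n - f n) atTop (nhds 0)) :
    Filter.Tendsto (fun n => ((g n : ℝ) : EReal)) atTop (nhds G) := by
  induction G with
  | bot =>
    rw [EReal.tendsto_nhds_bot_iff_real] at hf ⊢
    intro x
    filter_upwards [hf (x - 1), hfg.eventually (eventually_le_nhds (by norm_num : (0:ℝ) < 1))]
      with n h1 h2
    rw [EReal.coe_lt_coe_iff] at h1 ⊢
    linarith
  | coe x =>
    rw [EReal.tendsto_coe] at hf ⊢
    have := hf.add hfg
    simpa using this
  | top =>
    rw [EReal.tendsto_nhds_top_iff_real] at hf ⊢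
    intro x
    filter_upwards [hf (x + 1), hfg.eventually (eventually_ge_nhds (by norm_num : (-1:ℝ) < 0))]
      with n h1 h2
    rw [EReal.coe_lt_coe_iff] at h1 ⊢
    linarith

lemma factor_pow_expand (N : ℕ) (x : ℝ) :
    (((1 + Real.cos x) / 2 : ℝ) : ℂ) ^ N =
      (∑ j ∈ Finset.range (2 * N + 1),
        ((2 * N).choose j : ℂ) * Complex.exp ((((j : ℝ) - N) * x : ℝ) * Complex.I)) / 4 ^ N := by
  set v : ℂ := Complex.exp (((x / 2 : ℝ) : ℂ) * Complex.I) with hv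
  have hvne : v ≠ 0 := Complex.exp_ne_zero _
  have hvinv : v⁻¹ = Complex.exp (-(((x / 2 : ℝ) : ℂ) * Complex.I)) := by
    rw [hv, ← Complex.exp_neg]
  have h1 : (((1 + Real.cos x) / 2 : ℝ) : ℂ) = ((v + v⁻¹) / 2) ^ 2 := by
    rw [hv, hvinv, Complex.exp_mul_I]
    rw [show -(((x / 2 : ℝ) : ℂ) * Complex.I) = (-(x/2 : ℝ) : ℂ) * Complex.I by push_cast; ring,
      Complex.exp_mul_I]
    have hc : Complex.cos ((-(x/2:ℝ) : ℂ)) = Complex.cos ((x/2 : ℝ) : ℂ) := by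
      rw [show ((-(x/2:ℝ)) : ℂ) = -((x/2:ℝ):ℂ) by push_cast; ring, Complex.cos_neg]
    have hs : Complex.sin ((-(x/2:ℝ) : ℂ)) = -Complex.sin ((x/2 : ℝ) : ℂ) := by
      rw [show ((-(x/2:ℝ)) : ℂ) = -((x/2:ℝ):ℂ) by push_cast; ring, Complex.sin_neg]
    rw [hc, hs]
    have : (Complex.cos ((x/2:ℝ):ℂ) + Complex.sin ((x/2:ℝ):ℂ) * Complex.I
        + (Complex.cos ((x/2:ℝ):ℂ) + -Complex.sin ((x/2:ℝ):ℂ) * Complex.I)) / 2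
        = Complex.cos ((x/2:ℝ):ℂ) := by ring
    rw [this, Complex.cos_sq]
    rw [show (2 : ℂ) * ((x/2:ℝ):ℂ) = ((x:ℝ):ℂ) by push_cast; ring]
    rw [← Complex.ofReal_cos]
    push_cast
    ring
  rw [h1, ← pow_mul]
  rw [div_pow]
  rw [show ((2:ℂ))^(2*N) = 4^N by rw [pow_mul]; norm_num]
  congr 1
  rw [add_pow]
  rw [mul_comm 2 N]  -- range (N*2+1)?
  apply Finset.sum_congr rfl
  intro j hj
  rw [Finset.mem_range] at hj
  have hj' : j ≤ 2 * N := by omega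
  have hxj : v ^ j = Complex.exp ((j : ℂ) * (((x / 2 : ℝ) : ℂ) * Complex.I)) := by
    rw [Complex.exp_nat_mul]
  have hxk : (v⁻¹) ^ (N * 2 - j) = Complex.exp (((N * 2 - j : ℕ) : ℂ) * -(((x / 2 : ℝ) : ℂ) * Complex.I)) := by
    rw [hvinv, Complex.exp_nat_mul]
  rw [hxj, hxk, ← Complex.exp_add, mul_comm]
  congr 1
  push_cast [Nat.cast_sub (by omega : j ≤ N * 2)]
  ring

set_option maxHeartbeats 1000000 in
lemma kronecker_flow {E : Type*} [Fintype E] (L : E → ℝ)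
    (hindep : ∀ n : E → ℤ, ∑ e, (n e : ℝ) * L e = 0 → ∀ e, n e = 0)
    (θ : E → ℝ) {ε : ℝ} (hε : 0 < ε) (hε1 : ε ≤ 1) (T : ℝ) :
    ∃ t, T ≤ t ∧ ∀ e, 1 - Real.cos (t * L e - θ e) < ε := by
  classical
  set m := Fintype.card E with hm
  -- choose N
  obtain ⟨N, hN1, hNkey⟩ : ∃ N : ℕ, 1 ≤ N ∧
      (1 - ε / 2) ^ N < ((2 * (N:ℝ))⁻¹) ^ m / 2 := by
    have hr0 : (0:ℝ) ≤ 1 - ε / 2 := by linarith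
    have hr1 : 1 - ε / 2 < 1 := by linarith
    have h := tendsto_pow_const_mul_const_pow_of_lt_one m hr0 hr1
    have h2 : ∀ᶠ n : ℕ in atTop, (n:ℝ) ^ m * (1 - ε/2) ^ n < (2:ℝ)⁻¹ ^ m / 2 := by
      have hpos : (0:ℝ) < (2:ℝ)⁻¹ ^ m / 2 := by positivity
      exact h.eventually (eventually_lt_nhds hpos) |>.mono (fun n hn => hn)
    obtain ⟨N, hN⟩ := (h2.and (eventually_ge_atTop 1)).exists
    refine ⟨N, hN.2, ?_⟩
    have hNpos : (0:ℝ) < N := by exact_mod_cast hN.2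
    have heq : ((2 * (N:ℝ))⁻¹) ^ m = (2:ℝ)⁻¹ ^ m / (N:ℝ) ^ m := by
      rw [division_def]; ring
    rw [heq]
    rw [div_div, lt_div_iff₀ (by positivity)]
    calc (1 - ε / 2) ^ N * ((N:ℝ) ^ m * 2) = ((N:ℝ) ^ m * (1 - ε/2)^N) * 2 := by ring
      _ < ((2:ℝ)⁻¹ ^ m / 2) * 2 := by nlinarith [hN.1]
      _ = (2:ℝ)⁻¹ ^ m := by ring
  -- basic objects
  set S : Finset (E → ℕ) := Fintype.piFinset (fun _ => Finset.range (2 * N + 1)) with hS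
  set a : (E → ℕ) → ℝ := fun j => ∑ e, ((j e : ℝ) - N) * L e with ha
  set b : (E → ℕ) → ℝ := fun j => ∑ e, ((j e : ℝ) - N) * θ e with hb
  set coef : (E → ℕ) → ℂ := fun j =>
    (∏ e, ((2 * N).choose (j e) : ℂ)) * Complex.exp (-((b j : ℝ) : ℂ) * Complex.I) / 4 ^ (N * m)
    with hcoef
  set F : ℝ → ℝ := fun t => ∏ e, ((1 + Real.cos (t * L e - θ e)) / 2) ^ N with hF
  set D : E → ℕ := fun _ => N with hD
  have hDS : D ∈ S := by
    rw [hS, Fintype.mem_piFinset]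
    intro e
    simp only [hD, Finset.mem_range]
    omega
  -- pointwise expansion
  have hexp : ∀ t : ℝ, ((F t : ℝ) : ℂ) =
      ∑ j ∈ S, coef j * Complex.exp ((a j : ℂ) * Complex.I * t) := by
    intro t
    rw [hF]
    rw [Complex.ofReal_prod]
    simp only [Complex.ofReal_pow]
    calc (∏ e, (((1 + Real.cos (t * L e - θ e)) / 2 : ℝ) : ℂ) ^ N)
        = ∏ e, ((∑ j ∈ Finset.range (2 * N + 1), ((2 * N).choose j : ℂ) *
            Complex.exp ((((j : ℝ) - N) * (t * L e - θ e) : ℝ) * Complex.I)) / 4 ^ N) :=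
          Finset.prod_congr rfl fun e _ => factor_pow_expand N (t * L e - θ e)
      _ = (∏ e, (∑ j ∈ Finset.range (2 * N + 1), ((2 * N).choose j : ℂ) *
            Complex.exp ((((j : ℝ) - N) * (t * L e - θ e) : ℝ) * Complex.I))) / 4 ^ (N * m) := by
          rw [Finset.prod_div_distrib, Finset.prod_const, ← pow_mul, Finset.card_univ, ← hm]
      _ = ∑ j ∈ S, coef j * Complex.exp ((a j : ℂ) * Complex.I * t) := by
          rw [Finset.prod_univ_sum]
          rw [Finset.sum_div]
          apply Finset.sum_congr rfl
          intro p hp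
          rw [Finset.prod_mul_distrib, ← Complex.exp_sum, hcoef]
          have hsum : (∑ e, ((((p e : ℝ) - N) * (t * L e - θ e) : ℝ) : ℂ) * Complex.I)
              = (a p : ℂ) * Complex.I * t + -((b p : ℝ) : ℂ) * Complex.I := by
            have hre : ∑ e, ((p e : ℝ) - N) * (t * L e - θ e) = a p * t - b p := by
              simp only [ha, hb]
              rw [Finset.sum_mul, ← Finset.sum_sub_distrib]
              exact Finset.sum_congr rfl fun e _ => by ring
            rw [← Finset.sum_mul, ← Complex.ofReal_sum, hre]
            push_cast
            ring
          rw [hsum, Complex.exp_add]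
          ring
  -- nonzero frequencies off the diagonal
  have hane : ∀ j ∈ S.erase D, a j ≠ 0 := by
    intro j hj h0
    have hjD := Finset.ne_of_mem_erase hj
    have hz := hindep (fun e => (j e : ℤ) - N) ?_
    · apply hjD
      simp only [hD]
      funext e
      have := hz e
      omega
    · rw [← h0]
      simp only [ha]
      exact Finset.sum_congr rfl fun e _ => by push_cast; ring
  -- continuity
  have hFcont : Continuous F := by
    rw [hF]; fun_prop
  have hterm_cont : ∀ j : E → ℕ,
      Continuous (fun t : ℝ => Complex.exp ((a j : ℂ) * Complex.I * t)) := by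
    intro j; fun_prop
  -- the diagonal coefficient
  set c0 : ℝ := ((2 * N).choose N : ℝ) / 4 ^ N with hc0
  have hcoefD : coef D = ((c0 ^ m : ℝ) : ℂ) := by
    have hbD : b D = 0 := by
      simp only [hb, hD]
      simp
    rw [hD] at hbD
    simp only [hcoef, hD, hbD, Complex.ofReal_zero, neg_zero, zero_mul, Complex.exp_zero, mul_one,
      Finset.prod_const, Finset.card_univ, ← hm, hc0]
    push_cast
    rw [div_pow, ← pow_mul]
  -- the error constant
  set Cc : ℝ := ∑ j ∈ S.erase D, ‖coef j‖ * (2 / |a j|) with hCc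
  have hCcnonneg : 0 ≤ Cc := Finset.sum_nonneg fun j _ => by positivity
  have hIbound : ∀ T' : ℝ, |(∫ s in (0:ℝ)..T', F s) - c0 ^ m * T'| ≤ Cc := by
    intro T'
    have hInt : ((∫ s in (0:ℝ)..T', F s : ℝ) : ℂ)
        = ∑ j ∈ S, coef j * ∫ s in (0:ℝ)..T', Complex.exp ((a j : ℂ) * Complex.I * s) := by
      rw [← intervalIntegral.integral_ofReal]
      rw [intervalIntegral.integral_congr
        (g := fun s => ∑ j ∈ S, coef j * Complex.exp ((a j : ℂ) * Complex.I * s))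
        (fun s _ => hexp s)]
      rw [intervalIntegral.integral_finset_sum
        (f := fun j s => coef j * Complex.exp ((a j : ℂ) * Complex.I * s)) (fun j _ => ((continuous_const.mul (hterm_cont j)).intervalIntegrable _ _))]
      exact Finset.sum_congr rfl fun j _ => intervalIntegral.integral_const_mul _ _
    have haD : a D = 0 := by
      simp only [ha, hD]
      simp
    have hdiag : coef D * (∫ s in (0:ℝ)..T', Complex.exp ((a D : ℂ) * Complex.I * s))
        = ((c0 ^ m * T' : ℝ) : ℂ) := by
      rw [haD, hcoefD]
      simp
    rw [← Finset.add_sum_erase _ _ hDS, hdiag] at hInt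
    have hdiff : (((∫ s in (0:ℝ)..T', F s) - c0 ^ m * T' : ℝ) : ℂ)
        = ∑ j ∈ S.erase D, coef j * ∫ s in (0:ℝ)..T', Complex.exp ((a j : ℂ) * Complex.I * s) := by
      push_cast
      rw [sub_eq_iff_eq_add]
      rw [hInt]
      push_cast
      ring
    have habs : |(∫ s in (0:ℝ)..T', F s) - c0 ^ m * T'|
        = ‖((((∫ s in (0:ℝ)..T', F s) - c0 ^ m * T' : ℝ) : ℂ))‖ := by
      rw [Complex.norm_real, Real.norm_eq_abs]
    rw [habs, hdiff]
    calc ‖(∑ j ∈ S.erase D, coef j * ∫ s in (0:ℝ)..T',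
            Complex.exp ((a j : ℂ) * Complex.I * s))‖
        ≤ ∑ j ∈ S.erase D, ‖(coef j * ∫ s in (0:ℝ)..T',
            Complex.exp ((a j : ℂ) * Complex.I * s))‖ := by
          exact norm_sum_le _ _
      _ ≤ Cc := by
          rw [hCc]
          apply Finset.sum_le_sum
          intro j hj
          rw [norm_mul]
          apply mul_le_mul_of_nonneg_left _ (by positivity)
          have hne : ((a j : ℂ) * Complex.I) ≠ 0 :=
            mul_ne_zero (Complex.ofReal_ne_zero.mpr (hane j hj)) Complex.I_ne_zero
          rw [show (fun s : ℝ => Complex.exp ((a j : ℂ) * Complex.I * ↑s))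
              = fun s : ℝ => Complex.exp (((a j : ℂ) * Complex.I) * ↑s) from rfl]
          rw [integral_exp_mul_complex hne]
          rw [norm_div]
          have h1 : ‖((a j : ℂ) * Complex.I)‖ = |a j| := by
            rw [norm_mul, Complex.norm_I, Complex.norm_real, Real.norm_eq_abs, mul_one]
          rw [h1]
          have hapos : 0 < |a j| := abs_pos.mpr (hane j hj)
          have e1 : ‖(Complex.exp ((a j : ℂ) * Complex.I * ((T' : ℝ) : ℂ)))‖ = 1 := by
            rw [Complex.norm_exp]
            simp [Complex.mul_re, Complex.mul_im]
          have e2 : ‖(Complex.exp ((a j : ℂ) * Complex.I * (((0 : ℝ) : ℝ) : ℂ)))‖ = 1 := by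
            rw [Complex.norm_exp]
            simp [Complex.mul_re, Complex.mul_im]
          have hnum : ‖(Complex.exp ((a j : ℂ) * Complex.I * ((T' : ℝ) : ℂ))
              - Complex.exp ((a j : ℂ) * Complex.I * (((0 : ℝ) : ℝ) : ℂ)))‖ ≤ 2 := by
            apply (norm_sub_le _ _).trans
            rw [e1, e2]
            norm_num
          gcongr
  -- lower bound on c0
  have hchoosepos : 0 < (((2 * N).choose N : ℕ) : ℝ) := by
    exact_mod_cast Nat.choose_pos (by omega)
  have hc0pos : 0 < c0 := by
    rw [hc0]; positivity
  have hc0ge : (2 * (N : ℝ))⁻¹ ≤ c0 := by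
    have hNpos : (0:ℝ) < N := by exact_mod_cast hN1
    rw [hc0, le_div_iff₀ (by positivity), inv_mul_le_iff₀ (by positivity)]
    have h4 : ((4:ℕ):ℝ) ^ N ≤ 2 * (N:ℝ) * (((2 * N).choose N : ℕ) : ℝ) := by
      have hh := Nat.four_pow_le_two_mul_self_mul_centralBinom N (by omega)
      rw [Nat.centralBinom_eq_two_mul_choose] at hh
      exact_mod_cast hh
    calc (4:ℝ) ^ N = ((4:ℕ):ℝ) ^ N := by norm_num
      _ ≤ 2 * (N:ℝ) * (((2 * N).choose N : ℕ) : ℝ) := h4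
  set B : ℝ := c0 ^ m / 2 with hB
  have hBpos : 0 < B := by positivity
  -- there exists a large time where F is not small
  obtain ⟨t, ht0, htB⟩ : ∃ t, max T 0 ≤ t ∧ B ≤ F t := by
    by_contra hcon
    push_neg at hcon
    set T0 := max T 0 with hT0def
    have hT0 : 0 ≤ T0 := le_max_right _ _
    set T1 : ℝ := max T0 ((T0 + Cc + 1) / B) with hT1
    have hT01 : T0 ≤ T1 := le_max_left _ _
    have hIsplit : (∫ s in (0:ℝ)..T0, F s) + ∫ s in T0..T1, F s = ∫ s in (0:ℝ)..T1, F s :=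
      intervalIntegral.integral_add_adjacent_intervals
        (hFcont.intervalIntegrable _ _) (hFcont.intervalIntegrable _ _)
    have hFbounds : ∀ s : ℝ, 0 ≤ F s ∧ F s ≤ 1 := by
      intro s
      constructor
      · apply Finset.prod_nonneg
        intro e _
        apply pow_nonneg
        nlinarith [Real.neg_one_le_cos (s * L e - θ e)]
      · apply Finset.prod_le_one
        · intro e _
          apply pow_nonneg
          nlinarith [Real.neg_one_le_cos (s * L e - θ e)]
        · intro e _
          apply pow_le_one₀
          · nlinarith [Real.neg_one_le_cos (s * L e - θ e)]
          · nlinarith [Real.cos_le_one (s * L e - θ e)]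
    have hIa : ∫ s in (0:ℝ)..T0, F s ≤ T0 := by
      calc ∫ s in (0:ℝ)..T0, F s ≤ ∫ _ in (0:ℝ)..T0, (1:ℝ) := by
            apply intervalIntegral.integral_mono_on hT0
              (hFcont.intervalIntegrable _ _) (intervalIntegrable_const)
            intro x _
            exact (hFbounds x).2
        _ = T0 := by simp
    have hIb : ∫ s in T0..T1, F s ≤ B * (T1 - T0) := by
      calc ∫ s in T0..T1, F s ≤ ∫ _ in T0..T1, B := by
            apply intervalIntegral.integral_mono_on hT01
              (hFcont.intervalIntegrable _ _) (intervalIntegrable_const)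
            intro x hx
            exact le_of_lt (hcon x hx.1)
        _ = B * (T1 - T0) := by
            rw [intervalIntegral.integral_const, smul_eq_mul, mul_comm]
    have hlow := (abs_le.mp (hIbound T1)).1
    have hT1big : T0 + Cc + 1 ≤ B * T1 := by
      have h1 : (T0 + Cc + 1) / B ≤ T1 := le_max_right _ _
      calc T0 + Cc + 1 = B * ((T0 + Cc + 1) / B) := by field_simp
        _ ≤ B * T1 := by nlinarith
    have hexpand : B * (T1 - T0) = B * T1 - B * T0 := by ring
    have hBT0 : 0 ≤ B * T0 := by positivity
    have hc0m : c0 ^ m * T1 = 2 * (B * T1) := by rw [hB]; ring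
    linarith [hlow, hIa, hIb, hIsplit]
  -- conclude
  refine ⟨t, le_trans (le_max_left _ _) ht0, ?_⟩
  intro e
  by_contra hcos
  push_neg at hcos
  set fa : ℝ := (1 + Real.cos (t * L e - θ e)) / 2 with hfa
  have hfa0 : 0 ≤ fa := by
    rw [hfa]; nlinarith [Real.neg_one_le_cos (t * L e - θ e)]
  have hfale : fa ≤ 1 - ε / 2 := by
    rw [hfa]; linarith
  have hFle : F t ≤ fa ^ N := by
    simp only [hF]
    rw [← Finset.mul_prod_erase _ _ (Finset.mem_univ e)]
    have h1 : (∏ e' ∈ Finset.univ.erase e, ((1 + Real.cos (t * L e' - θ e')) / 2) ^ N) ≤ 1 := by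
      apply Finset.prod_le_one
      · intro e' _
        apply pow_nonneg
        nlinarith [Real.neg_one_le_cos (t * L e' - θ e')]
      · intro e' _
        apply pow_le_one₀
        · nlinarith [Real.neg_one_le_cos (t * L e' - θ e')]
        · nlinarith [Real.cos_le_one (t * L e' - θ e')]
    calc ((1 + Real.cos (t * L e - θ e)) / 2) ^ N *
          (∏ e' ∈ Finset.univ.erase e, ((1 + Real.cos (t * L e' - θ e')) / 2) ^ N)
        ≤ ((1 + Real.cos (t * L e - θ e)) / 2) ^ N * 1 := by
          apply mul_le_mul_of_nonneg_left h1
          apply pow_nonneg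
          nlinarith [Real.neg_one_le_cos (t * L e - θ e)]
      _ = fa ^ N := by rw [mul_one, hfa]
  have hfaN : fa ^ N ≤ (1 - ε / 2) ^ N := pow_le_pow_left₀ hfa0 hfale N
  have hlast : ((2 * (N:ℝ))⁻¹) ^ m ≤ c0 ^ m := by
    apply pow_le_pow_left₀ _ hc0ge
    positivity
  have : F t < B := by
    calc F t ≤ fa ^ N := hFle
      _ ≤ (1 - ε / 2) ^ N := hfaN
      _ < ((2 * (N:ℝ))⁻¹) ^ m / 2 := hNkey
      _ ≤ c0 ^ m / 2 := by linarith
      _ = B := by rw [hB]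
  linarith

/-- Let `E` be a nonempty finite index set and `(L_e)` a family of positive
reals, linearly independent over `ℚ`. For each `e` let `(γ_{e,ℓ})` be a real sequence converging
in the extended real line to `γlim e` with `γ_{e,ℓ}/ℓ → 0`. Then there is a sequence
`(λ_ℓ)` in `(0,∞)` with `λ_ℓ → ∞` such that for every `e`,
`ℓ·sin(√λ_ℓ·L_e) → γlim e` in `[−∞,∞]` and `cos(√λ_ℓ·L_e) → 1`. -/
theorem ergodic_lemma {E : Type*} [Fintype E] [Nonempty E]
    (L : E → ℝ) (hLpos : ∀ e, 0 < L e)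
    (hindep : LinearIndependent ℚ L)
    (γ : E → ℕ → ℝ) (γlim : E → EReal)
    (hγ : ∀ e, Tendsto (fun ℓ : ℕ => ((γ e ℓ : ℝ) : EReal)) atTop (nhds (γlim e)))
    (hγdiv : ∀ e, Tendsto (fun ℓ : ℕ => γ e ℓ / (ℓ : ℝ)) atTop (nhds 0)) :
    ∃ lam : ℕ → ℝ, (∀ ℓ, 0 < lam ℓ) ∧ Tendsto lam atTop atTop ∧
      ∀ e, Tendsto (fun ℓ : ℕ => (((ℓ : ℝ) * Real.sin (Real.sqrt (lam ℓ) * L e) : ℝ) : EReal))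
            atTop (nhds (γlim e)) ∧
        Tendsto (fun ℓ : ℕ => Real.cos (Real.sqrt (lam ℓ) * L e)) atTop (nhds 1) := by
  classical
  have hZ : ∀ n : E → ℤ, ∑ e, (n e : ℝ) * L e = 0 → ∀ e, n e = 0 := int_indep hindep
  set c : ℕ → E → ℝ := fun ℓ e => max (-1) (min 1 (γ e ℓ / ℓ)) with hc
  set θ : ℕ → E → ℝ := fun ℓ e => Real.arcsin (c ℓ e) with hθ
  have hc_mem : ∀ ℓ e, -1 ≤ c ℓ e ∧ c ℓ e ≤ 1 := by
    intro ℓ e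
    refine ⟨le_max_left _ _, max_le (by norm_num) (min_le_left _ _)⟩
  set ε : ℕ → ℝ := fun ℓ => (((ℓ : ℝ) + 1)⁻¹) ^ 4 with hε
  have hεpos : ∀ ℓ, 0 < ε ℓ := by intro ℓ; rw [hε]; positivity
  have hε1 : ∀ ℓ, ε ℓ ≤ 1 := by
    intro ℓ
    rw [hε]
    apply pow_le_one₀ (by positivity)
    rw [inv_le_one_iff₀]
    right
    have : (0:ℝ) ≤ (ℓ : ℝ) := Nat.cast_nonneg ℓ
    linarith
  have hch : ∀ ℓ : ℕ, ∃ s, ((ℓ : ℝ) + 1) ≤ s ∧ ∀ e, 1 - Real.cos (s * L e - θ ℓ e) < ε ℓ :=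
    fun ℓ => kronecker_flow L hZ (θ ℓ) (hεpos ℓ) (hε1 ℓ) _
  choose t ht htcos using hch
  have ht1 : ∀ ℓ, (1 : ℝ) ≤ t ℓ := by
    intro ℓ
    have := ht ℓ
    have : (0:ℝ) ≤ ℓ := Nat.cast_nonneg ℓ
    linarith [ht ℓ]
  have hsq : ∀ ℓ, Real.sqrt (t ℓ ^ 2) = t ℓ := fun ℓ => Real.sqrt_sq (by linarith [ht1 ℓ])
  refine ⟨fun ℓ => t ℓ ^ 2, fun ℓ => ?_, ?_, ?_⟩
  · show (0:ℝ) < t ℓ ^ 2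
    nlinarith [ht1 ℓ]
  · have hmono : ∀ ℓ : ℕ, (ℓ : ℝ) ≤ t ℓ ^ 2 := fun ℓ => by
      nlinarith [ht ℓ, ht1 ℓ, (Nat.cast_nonneg ℓ : (0:ℝ) ≤ (ℓ:ℝ))]
    exact tendsto_atTop_mono hmono
      (tendsto_natCast_atTop_atTop : Tendsto (Nat.cast : ℕ → ℝ) atTop atTop)
  intro e
  -- uniform bounds
  have hbound : ∀ ℓ, |Real.sin (t ℓ * L e) - c ℓ e| ≤ Real.sqrt (2 * ε ℓ) ∧
      |Real.cos (t ℓ * L e) - Real.cos (θ ℓ e)| ≤ Real.sqrt (2 * ε ℓ) := by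
    intro ℓ
    have h := trig_close (le_of_lt (hεpos ℓ)) (le_of_lt (htcos ℓ e))
    have hsin : Real.sin (θ ℓ e) = c ℓ e :=
      Real.sin_arcsin (hc_mem ℓ e).1 (hc_mem ℓ e).2
    exact ⟨by rw [← hsin]; exact h.1, h.2⟩
  have hc0 : Tendsto (fun ℓ => c ℓ e) atTop (nhds 0) := by
    have h1 : Tendsto (fun ℓ : ℕ => max (-1 : ℝ) (min 1 (γ e ℓ / ℓ))) atTop
        (nhds (max (-1) (min 1 0))) :=
      tendsto_const_nhds.max (tendsto_const_nhds.min (hγdiv e))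
    simpa using h1
  have hsqrteps : Tendsto (fun ℓ => Real.sqrt (2 * ε ℓ)) atTop (nhds 0) := by
    have h1 : Tendsto (fun ℓ : ℕ => ((ℓ : ℝ) + 1)⁻¹) atTop (nhds 0) := by
      have := tendsto_one_div_add_atTop_nhds_zero_nat (𝕜 := ℝ)
      simpa [one_div] using this
    have h2 : Tendsto (fun ℓ : ℕ => 2 * (((ℓ : ℝ) + 1)⁻¹) ^ 4) atTop (nhds 0) := by
      have := (h1.pow 4).const_mul (2:ℝ)
      simpa using this
    have h3 := (Real.continuous_sqrt.tendsto 0).comp h2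
    simp only [Function.comp_def] at h3
    rw [Real.sqrt_zero] at h3
    exact h3
  constructor
  · -- sine part
    have hgoal : (fun ℓ : ℕ => (((ℓ : ℝ) * Real.sin (Real.sqrt (t ℓ ^ 2) * L e) : ℝ) : EReal))
        = fun ℓ : ℕ => (((ℓ : ℝ) * Real.sin (t ℓ * L e) : ℝ) : EReal) := by
      funext ℓ
      rw [hsq ℓ]
    rw [hgoal]
    apply ereal_perturb (hγ e)
    -- ℓ sin(t L) - γ → 0
    apply squeeze_zero_norm' (a := fun ℓ : ℕ => Real.sqrt 2 * ((ℓ : ℝ) + 1)⁻¹)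
    · have hev1 : ∀ᶠ ℓ : ℕ in atTop, γ e ℓ / ℓ ≤ 1 :=
        (hγdiv e).eventually (eventually_le_nhds (by norm_num : (0:ℝ) < 1))
      have hev2 : ∀ᶠ ℓ : ℕ in atTop, -1 ≤ γ e ℓ / ℓ :=
        (hγdiv e).eventually (eventually_ge_nhds (by norm_num : (-1:ℝ) < 0))
      filter_upwards [hev1, hev2, eventually_ge_atTop 1] with ℓ h1 h2 h3
      have hℓpos : (0:ℝ) < ℓ := by exact_mod_cast h3
      have hceq : c ℓ e = γ e ℓ / ℓ := by
        show max (-1 : ℝ) (min 1 (γ e ℓ / ℓ)) = γ e ℓ / ℓ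
        rw [min_eq_right h1]
        exact max_eq_right h2
      have hrw : (ℓ : ℝ) * Real.sin (t ℓ * L e) - γ e ℓ
          = (ℓ : ℝ) * (Real.sin (t ℓ * L e) - c ℓ e) := by
        rw [hceq]
        field_simp
      rw [hrw, norm_mul, Real.norm_natCast]
      have hb := (hbound ℓ).1
      have hv : ((ℓ : ℝ) + 1) * ((ℓ : ℝ) + 1)⁻¹ = 1 := by
        field_simp
      have hsqrtval : Real.sqrt (2 * ε ℓ) = Real.sqrt 2 * (((ℓ : ℝ) + 1)⁻¹) ^ 2 := by
        show Real.sqrt (2 * (((ℓ : ℝ) + 1)⁻¹) ^ 4) = _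
        rw [Real.sqrt_mul (by norm_num)]
        congr 1
        rw [show (((ℓ:ℝ)+1)⁻¹) ^ 4 = ((((ℓ:ℝ)+1)⁻¹) ^ 2) ^ 2 by ring]
        exact Real.sqrt_sq (by positivity)
      calc (ℓ : ℝ) * ‖Real.sin (t ℓ * L e) - c ℓ e‖
          ≤ (ℓ : ℝ) * Real.sqrt (2 * ε ℓ) := by
            apply mul_le_mul_of_nonneg_left _ (Nat.cast_nonneg ℓ)
            exact hb
        _ = Real.sqrt 2 * ((ℓ : ℝ) * (((ℓ : ℝ) + 1)⁻¹) ^ 2) := by rw [hsqrtval]; ring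
        _ ≤ Real.sqrt 2 * ((ℓ : ℝ) + 1)⁻¹ := by
            apply mul_le_mul_of_nonneg_left _ (Real.sqrt_nonneg 2)
            have hvpos : (0:ℝ) < ((ℓ : ℝ) + 1)⁻¹ := by positivity
            nlinarith [hv, hvpos]
    · have h1 : Tendsto (fun ℓ : ℕ => ((ℓ : ℝ) + 1)⁻¹) atTop (nhds 0) := by
        have := tendsto_one_div_add_atTop_nhds_zero_nat (𝕜 := ℝ)
        simpa [one_div] using this
      have := h1.const_mul (Real.sqrt 2)
      simpa using this
  · -- cosine part
    have hgoal : (fun ℓ : ℕ => Real.cos (Real.sqrt (t ℓ ^ 2) * L e))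
        = fun ℓ : ℕ => Real.cos (t ℓ * L e) := by
      funext ℓ
      rw [hsq ℓ]
    rw [hgoal]
    have hcθ : Tendsto (fun ℓ => Real.cos (θ ℓ e)) atTop (nhds 1) := by
      have hcont : Continuous (fun x : ℝ => Real.cos (Real.arcsin x)) :=
        Real.continuous_cos.comp Real.continuous_arcsin
      have := (hcont.tendsto 0).comp hc0
      simp only [Function.comp_def] at this
      simpa [hθ] using this
    have hdiff : Tendsto (fun ℓ => Real.cos (t ℓ * L e) - Real.cos (θ ℓ e)) atTop (nhds 0) := by
      apply squeeze_zero_norm' (a := fun ℓ => Real.sqrt (2 * ε ℓ))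
      · filter_upwards with ℓ
        exact (hbound ℓ).2
      · exact hsqrteps
    have := hdiff.add hcθ
    simpa using this
end

section
/- Let E be a nonempty finite index set and let (L_e)_{e∈E} be a family of positive real numbers that is linearly independent over ℚ. For each e ∈ E let (γ_{e,ℓ})_{ℓ∈ℕ} be a sequence of real numbers such that γ_{e,ℓ} converges to some γ_e in the extended real line [−∞,∞] and γ_{e,ℓ}/ℓ → 0 as ℓ → ∞, and let ε : E → {−1,+1} be any sign choice. Then there exists a sequence (λ_ℓ)_{ℓ∈ℕ} in (0,∞) with λ_ℓ → ∞ such that for every e ∈ E one has ℓ·sin(√(λ_ℓ)·L_e) → γ_e in [−∞,∞], cos(√(λ_ℓ)·L_e) → 1 as ℓ → ∞, and in addition ε(e)·sin(√(λ_ℓ)·L_e) > 0 for all ℓ ∈ ℕ whenever γ_e = 0. -/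
open Filter Topology

namespace ErgAux
open Complex


lemma indep_int {E : Type*} [Fintype E] {L : E → ℝ} (hindep : LinearIndependent ℚ L)
    (k : E → ℤ) (hk : ∑ e, (k e : ℝ) * L e = 0) : ∀ e, k e = 0 := by
  have h := Fintype.linearIndependent_iff.mp hindep (fun e => (k e : ℚ)) ?_
  · intro e; exact_mod_cast h e
  · rw [← hk]
    refine Finset.sum_congr rfl fun e _ => ?_
    rw [Rat.smul_def]; push_cast; ring

lemma factor_expand (m : ℕ) (x : ℝ) :
    (((2 + 2 * Real.cos x) ^ m : ℝ) : ℂ) =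
      ∑ j ∈ Finset.range (2 * m + 1),
        ((2 * m).choose j : ℂ) * Complex.exp ((((j : ℝ) - (m : ℝ)) * x : ℝ) * I) := by
  have hprod : Complex.exp (-((x:ℂ) * I)) * Complex.exp ((x:ℂ) * I) = 1 := by
    rw [← Complex.exp_add]; simp
  have base : ((2 + 2 * Real.cos x : ℝ) : ℂ)
      = Complex.exp (-((x:ℂ) * I)) * (Complex.exp ((x:ℂ)*I) + 1) ^ 2 := by
    have h1 : ((2 + 2 * Real.cos x : ℝ) : ℂ)
        = 2 + (Complex.exp ((x:ℂ)*I) + Complex.exp (-((x:ℂ)*I))) := by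
      rw [show -((x:ℂ)*I) = (-x : ℂ) * I by ring, Complex.exp_mul_I, Complex.exp_mul_I,
        Complex.cos_neg, Complex.sin_neg]
      push_cast [Complex.ofReal_cos]
      ring
    rw [h1]; linear_combination (-(2 + Complex.exp ((x:ℂ)*I))) * hprod
  calc (((2 + 2 * Real.cos x) ^ m : ℝ) : ℂ)
      = (((2 + 2 * Real.cos x : ℝ) : ℂ)) ^ m := by push_cast; ring
    _ = Complex.exp (-((x:ℂ)*I)) ^ m * (Complex.exp ((x:ℂ)*I) + 1) ^ (2*m) := by
        rw [base, mul_pow, ← pow_mul]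
    _ = ∑ j ∈ Finset.range (2 * m + 1),
        ((2 * m).choose j : ℂ) * Complex.exp ((((j : ℝ) - (m : ℝ)) * x : ℝ) * I) := by
        rw [add_pow, Finset.mul_sum]
        refine Finset.sum_congr rfl fun j hj => ?_
        rw [one_pow, mul_one, ← Complex.exp_nat_mul, ← Complex.exp_nat_mul,
          show ((((j : ℝ) - (m : ℝ)) * x : ℝ) : ℂ) * I
            = (j:ℂ) * ((x:ℂ)*I) + (m:ℂ) * -((x:ℂ)*I) by push_cast; ring,
          Complex.exp_add]
        ring

lemma abs_sin_sub_le (x : ℝ) (hx : |x| ≤ 1) : |Real.sin x - x| ≤ |x|^3 := by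
  have key : ∀ y : ℝ, 0 < y → y ≤ 1 → |Real.sin y - y| ≤ |y|^3 := by
    intro y hy hy1
    have h1 := Real.sin_lt hy
    have h2 := Real.sin_gt_sub_cube hy
    rw [abs_of_pos hy, abs_sub_comm, abs_of_pos (by linarith)]
    nlinarith
  rcases lt_trichotomy x 0 with h | h | h
  · have := key (-x) (by linarith) (by rw [abs_of_neg h] at hx; linarith)
    rw [Real.sin_neg] at this
    rw [show |Real.sin x - x| = |-Real.sin x - -x| by rw [← abs_neg]; ring_nf,
      show |x| = |-x| by rw [abs_neg]]
    exact this
  · simp [h]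
  · exact key x h (by rwa [abs_of_pos h] at hx)

lemma close_of_cos {x θ δ : ℝ} (hδ : 0 < δ) (h : 1 - δ < Real.cos (x - θ)) :
    |Real.sin x - Real.sin θ| ≤ Real.sqrt (2*δ) + δ ∧
    |Real.cos x - Real.cos θ| ≤ Real.sqrt (2*δ) + δ := by
  set d := x - θ with hd
  have hx : x = d + θ := by rw [hd]; ring
  have hcle : Real.cos d ≤ 1 := Real.cos_le_one d
  have hc : |Real.cos d - 1| ≤ δ := by rw [abs_le]; constructor <;> linarith
  have hs2 : (Real.sin d)^2 ≤ 2*δ := by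
    have : (Real.sin d)^2 = 1 - (Real.cos d)^2 := by
      have := Real.sin_sq_add_cos_sq d; linarith
    rw [this]
    nlinarith [Real.neg_one_le_cos d]
  have hs : |Real.sin d| ≤ Real.sqrt (2*δ) := by
    rw [← Real.sqrt_sq_eq_abs]
    exact Real.sqrt_le_sqrt hs2
  have hsθ := Real.neg_one_le_sin θ
  have hsθ' := Real.sin_le_one θ
  have hcθ := Real.neg_one_le_cos θ
  have hcθ' := Real.cos_le_one θ
  constructor
  · rw [hx, Real.sin_add]
    have : Real.sin d * Real.cos θ + Real.cos d * Real.sin θ - Real.sin θ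
        = Real.sin d * Real.cos θ + (Real.cos d - 1) * Real.sin θ := by ring
    rw [this]
    calc _ ≤ |Real.sin d * Real.cos θ| + |(Real.cos d - 1) * Real.sin θ| := abs_add_le _ _
      _ ≤ |Real.sin d| * 1 + |Real.cos d - 1| * 1 := by
          rw [abs_mul, abs_mul]
          gcongr <;> rw [abs_le] <;> constructor <;> linarith
      _ ≤ Real.sqrt (2*δ) + δ := by rw [mul_one, mul_one]; exact add_le_add hs hc
  · rw [hx, Real.cos_add]
    have : Real.cos d * Real.cos θ - Real.sin d * Real.sin θ - Real.cos θ
        = (Real.cos d - 1) * Real.cos θ - Real.sin d * Real.sin θ := by ring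
    rw [this]
    calc _ ≤ |(Real.cos d - 1) * Real.cos θ| + |Real.sin d * Real.sin θ| := abs_sub _ _
      _ ≤ |Real.cos d - 1| * 1 + |Real.sin d| * 1 := by
          rw [abs_mul, abs_mul]
          gcongr <;> rw [abs_le] <;> constructor <;> linarith
      _ ≤ Real.sqrt (2*δ) + δ := by rw [mul_one, mul_one]; rw [add_comm]; exact add_le_add hs hc

lemma ereal_cases (x : EReal) : x = ⊥ ∨ x = ⊤ ∨ ∃ r : ℝ, x = r := by
  induction x using EReal.rec
  · left; rfl
  · right; right; exact ⟨_, rfl⟩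
  · right; left; rfl

lemma prod_cos_bound {E : Type*} [Fintype E] [DecidableEq E] (w : E → ℝ) (m : ℕ) {δ : ℝ}
    (hδ1 : δ ≤ 1) (e₀ : E) (hbad : Real.cos (w e₀) ≤ 1 - δ) :
    ∏ e, (2 + 2*Real.cos (w e))^m ≤ (4 - 2*δ)^m * 4^(m*(Fintype.card E - 1)) := by
  rw [← Finset.mul_prod_erase _ _ (Finset.mem_univ e₀)]
  have hnn : ∀ e : E, (0:ℝ) ≤ 2 + 2*Real.cos (w e) := by
    intro e; linarith [Real.neg_one_le_cos (w e)]
  have hf1 : (2 + 2*Real.cos (w e₀))^m ≤ (4 - 2*δ)^m := by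
    apply pow_le_pow_left₀ (hnn e₀); linarith
  have hf2 : ∏ e ∈ Finset.univ.erase e₀, (2 + 2*Real.cos (w e))^m
      ≤ 4^(m*(Fintype.card E - 1)) := by
    calc ∏ e ∈ Finset.univ.erase e₀, (2 + 2*Real.cos (w e))^m
        ≤ ∏ _e ∈ Finset.univ.erase e₀, (4:ℝ)^m := by
          apply Finset.prod_le_prod
          · intro e _; exact pow_nonneg (hnn e) m
          · intro e _
            apply pow_le_pow_left₀ (hnn e)
            linarith [Real.cos_le_one (w e)]
      _ = ((4:ℝ)^m)^(Fintype.card E - 1) := by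
          rw [Finset.prod_const, Finset.card_erase_of_mem (Finset.mem_univ _),
            Finset.card_univ]
      _ = 4^(m*(Fintype.card E - 1)) := by rw [← pow_mul]
  exact mul_le_mul hf1 hf2
    (Finset.prod_nonneg fun e _ => pow_nonneg (hnn e) m) (pow_nonneg (by linarith) m)

set_option maxHeartbeats 1000000 in
lemma kron {E : Type*} [Fintype E] [Nonempty E] (L : E → ℝ) (hindep : LinearIndependent ℚ L)
    (θ : E → ℝ) {δ : ℝ} (hδ : 0 < δ) (hδ1 : δ ≤ 1) (T₀ : ℝ) :
    ∃ t : ℝ, T₀ ≤ t ∧ ∀ e, 1 - δ < Real.cos (L e * t - θ e) := by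
  classical
  set n := Fintype.card E with hn
  have hn1 : 1 ≤ n := Fintype.card_pos
  set r : ℝ := 1 - δ/2 with hr
  have hr0 : 0 ≤ r := by rw [hr]; linarith
  have hr1 : r < 1 := by rw [hr]; linarith
  -- choose m
  obtain ⟨m, hm1, hmlt⟩ : ∃ m : ℕ, 1 ≤ m ∧ ((2*(m:ℝ)+1))^n * r^m < 1 := by
    have h0 : Tendsto (fun m : ℕ => (3:ℝ)^n * ((m:ℝ)^n * r^m)) atTop (𝓝 0) := by
      simpa using (tendsto_pow_const_mul_const_pow_of_lt_one n hr0 hr1).const_mul ((3:ℝ)^n)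
    obtain ⟨m, hlt, hm1⟩ := ((h0.eventually (gt_mem_nhds one_pos)).and (eventually_ge_atTop 1)).exists
    refine ⟨m, hm1, lt_of_le_of_lt ?_ hlt⟩
    have h2 : (2*(m:ℝ)+1)^n ≤ (3*(m:ℝ))^n := by
      apply pow_le_pow_left₀ (by positivity)
      have : (1:ℝ) ≤ (m:ℝ) := by exact_mod_cast hm1
      linarith
    calc (2*(m:ℝ)+1)^n * r^m ≤ (3*(m:ℝ))^n * r^m := by
          apply mul_le_mul_of_nonneg_right h2 (by positivity)
      _ = 3^n * ((m:ℝ)^n * r^m) := by rw [mul_pow]; ring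
  -- setup
  set S := Fintype.piFinset (fun _ : E => Finset.range (2*m+1)) with hS
  set ω : (E → ℕ) → ℝ := fun J => ∑ e, ((J e : ℝ) - m) * L e with hω
  set β : (E → ℕ) → ℝ := fun J => ∑ e, ((J e : ℝ) - m) * θ e with hβ
  set c : (E → ℕ) → ℂ := fun J => ∏ e, ((2*m).choose (J e) : ℂ) with hc
  set g : ℝ → ℝ := fun t => ∏ e, (2 + 2 * Real.cos (L e * t - θ e)) ^ m with hg
  have hgcont : Continuous g := by
    apply continuous_finset_prod
    intro e _
    fun_prop
  have hexp : ∀ t : ℝ, ((g t : ℝ) : ℂ)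
      = ∑ J ∈ S, c J * Complex.exp (((ω J * t - β J : ℝ) : ℂ) * I) := by
    intro t
    have h1 : ((g t : ℝ) : ℂ) = ∏ e, (((2 + 2*Real.cos (L e * t - θ e))^m : ℝ) : ℂ) := by
      push_cast [hg]; rfl
    rw [h1]
    simp_rw [factor_expand]
    rw [Finset.prod_univ_sum]
    refine Finset.sum_congr rfl fun J hJ => ?_
    rw [Finset.prod_mul_distrib, ← Complex.exp_sum]
    congr 1
    have h2 : ∑ e, ((((((J e:ℝ)) - (m:ℝ)) * (L e * t - θ e) : ℝ)):ℂ) * I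
        = ((∑ e, (((J e:ℝ)) - (m:ℝ)) * (L e * t - θ e) : ℝ):ℂ) * I := by
      rw [← Finset.sum_mul]; norm_cast
    rw [h2]
    congr 2
    rw [hω, hβ, Finset.sum_mul, ← Finset.sum_sub_distrib]
    exact Complex.ofReal_inj.mpr (Finset.sum_congr rfl fun e _ => by ring)
  -- zero frequency
  have hω0 : ∀ J : E → ℕ, ω J = 0 → ∀ e, J e = m := by
    intro J h e
    have h2 := indep_int hindep (fun e => (J e : ℤ) - m) ?_ e
    · omega
    · rw [← h, hω]; refine Finset.sum_congr rfl fun e _ => by push_cast; ring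
  have hJc : (fun _ : E => m) ∈ S := by
    simp [hS, Fintype.mem_piFinset]; omega
  have hωc : ω (fun _ => m) = 0 := by simp [hω]
  have hβc : β (fun _ => m) = 0 := by simp [hβ]
  have hcc : c (fun _ => m) = (((2*m).choose m : ℂ))^n := by
    simp [hc, Finset.prod_const, hn, Finset.card_univ]
  -- continuity of terms
  have hcontt : ∀ (a b : ℝ), Continuous fun s : ℝ => Complex.exp (((a * s - b : ℝ):ℂ) * I) := by
    intro a b
    apply Complex.continuous_exp.comp
    exact (Complex.continuous_ofReal.comp (by fun_prop)).mul continuous_const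
  -- oscillatory bound
  have hterm : ∀ (a b : ℝ), a ≠ 0 → ∀ T : ℝ,
      ‖∫ s in T₀..T, Complex.exp (((a * s - b : ℝ):ℂ) * I)‖ ≤ 2 / |a| := by
    intro a b ha T
    have hrw : ∀ s : ℝ, Complex.exp (((a * s - b : ℝ):ℂ) * I)
        = Complex.exp (((-b:ℝ):ℂ) * I) * Complex.exp ((((a:ℝ):ℂ) * I) * s) := by
      intro s; rw [← Complex.exp_add]; congr 1; push_cast; ring
    have hc0 : ((a:ℝ):ℂ) * I ≠ 0 := by
      simp [Complex.ext_iff, ha]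
    simp_rw [hrw]
    rw [intervalIntegral.integral_const_mul, integral_exp_mul_complex hc0]
    rw [norm_mul, norm_div, Complex.norm_exp_ofReal_mul_I]
    have e1 : ‖Complex.exp (((a:ℝ):ℂ) * I * (T:ℂ))‖ = 1 := by
      rw [show ((a:ℝ):ℂ) * I * (T:ℂ) = ((a*T : ℝ):ℂ) * I by push_cast; ring]
      exact Complex.norm_exp_ofReal_mul_I _
    have e2 : ‖Complex.exp (((a:ℝ):ℂ) * I * (T₀:ℂ))‖ = 1 := by
      rw [show ((a:ℝ):ℂ) * I * (T₀:ℂ) = ((a*T₀ : ℝ):ℂ) * I by push_cast; ring]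
      exact Complex.norm_exp_ofReal_mul_I _
    have e3 : ‖((a:ℝ):ℂ) * I‖ = |a| := by
      rw [norm_mul, Complex.norm_I, Complex.norm_real, Real.norm_eq_abs, mul_one]
    rw [one_mul, e3]
    have e4 : ‖Complex.exp (((a:ℝ):ℂ) * I * (T:ℂ)) - Complex.exp (((a:ℝ):ℂ) * I * (T₀:ℂ))‖ ≤ 2 := by
      have h5 := norm_sub_le (Complex.exp (((a:ℝ):ℂ) * I * (T:ℂ))) (Complex.exp (((a:ℝ):ℂ) * I * (T₀:ℂ)))
      rw [e1, e2] at h5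
      linarith
    gcongr
  -- the constant K
  set K : ℝ := ∑ J ∈ S.erase (fun _ => m), ‖c J‖ * (2 / |ω J|) with hK
  have hK0 : 0 ≤ K := Finset.sum_nonneg fun J _ => by positivity
  have hωne : ∀ J ∈ S.erase (fun _ => m), ω J ≠ 0 := by
    intro J hJ hzero
    have := hω0 J hzero
    exact (Finset.mem_erase.mp hJ).1 (funext this)
  -- key integral estimate
  set Cr : ℝ := ((2*m).choose m : ℝ) with hCr
  have key : ∀ T : ℝ, T₀ ≤ T → |(∫ s in T₀..T, g s) - (T - T₀) * Cr^n| ≤ K := by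
    intro T hT
    have hIeq : (∫ s in T₀..T, ((g s:ℝ):ℂ))
        = (((T:ℂ) - T₀) * ((2*m).choose m : ℂ)^n)
          + ∑ J ∈ S.erase (fun _ => m),
              c J * ∫ s in T₀..T, Complex.exp (((ω J * s - β J : ℝ):ℂ) * I) := by
      calc (∫ s in T₀..T, ((g s:ℝ):ℂ))
          = ∫ s in T₀..T, ∑ J ∈ S, c J * Complex.exp (((ω J * s - β J : ℝ):ℂ) * I) := by
            apply intervalIntegral.integral_congr; intro s _; exact hexp s
        _ = ∑ J ∈ S, ∫ s in T₀..T, c J * Complex.exp (((ω J * s - β J : ℝ):ℂ) * I) := by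
            apply intervalIntegral.integral_finset_sum
            intro J _
            exact ((continuous_const.mul (hcontt (ω J) (β J))).intervalIntegrable _ _)
        _ = (∫ s in T₀..T, c (fun _ => m) * Complex.exp (((ω (fun _ => m) * s - β (fun _ => m) : ℝ):ℂ) * I))
            + ∑ J ∈ S.erase (fun _ => m), ∫ s in T₀..T, c J * Complex.exp (((ω J * s - β J : ℝ):ℂ) * I) := by
            rw [← Finset.add_sum_erase _ _ hJc]
        _ = _ := by
            congr 1
            · rw [hωc, hβc, hcc]
              simp [intervalIntegral.integral_const, mul_comm]
            · refine Finset.sum_congr rfl fun J _ => intervalIntegral.integral_const_mul _ _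
    have hre : ((((∫ s in T₀..T, g s) - (T - T₀) * Cr^n : ℝ)):ℂ)
        = ∑ J ∈ S.erase (fun _ => m),
            c J * ∫ s in T₀..T, Complex.exp (((ω J * s - β J : ℝ):ℂ) * I) := by
      rw [Complex.ofReal_sub, ← intervalIntegral.integral_ofReal, hIeq]
      push_cast [hCr]
      ring
    calc |(∫ s in T₀..T, g s) - (T - T₀) * Cr^n|
        = ‖(((((∫ s in T₀..T, g s) - (T - T₀) * Cr^n : ℝ))):ℂ)‖ := by rw [Complex.norm_real, Real.norm_eq_abs]
      _ = ‖∑ J ∈ S.erase (fun _ => m),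
            c J * ∫ s in T₀..T, Complex.exp (((ω J * s - β J : ℝ):ℂ) * I)‖ := by rw [hre]
      _ ≤ ∑ J ∈ S.erase (fun _ => m),
            ‖c J * ∫ s in T₀..T, Complex.exp (((ω J * s - β J : ℝ):ℂ) * I)‖ := by
            exact norm_sum_le _ _
      _ ≤ K := by
            rw [hK]
            refine Finset.sum_le_sum fun J hJ => ?_
            rw [norm_mul]
            exact mul_le_mul_of_nonneg_left (hterm (ω J) (β J) (hωne J hJ) T) (by positivity)
  -- binomial lower bound
  have hCrpos : (0:ℝ) < Cr := by
    rw [hCr]; exact_mod_cast Nat.choose_pos (by omega : m ≤ 2*m)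
  have hCb : (4:ℝ)^m ≤ (2*(m:ℝ)+1) * Cr := by
    have h := Nat.four_pow_le_two_mul_add_one_mul_central_binom m
    rw [hCr]
    exact_mod_cast h
  set Bb : ℝ := (4 - 2*δ)^m * 4^(m*(n-1)) with hBb
  have hmn : m*(n-1)+m = m*n := by
    have h : n-1+1 = n := by omega
    calc m*(n-1)+m = m*((n-1)+1) := by rw [Nat.mul_succ]
      _ = m*n := by rw [h]
  have hgap : Bb < Cr^n := by
    have hp1 : (0:ℝ) < (2*(m:ℝ)+1)^n := by positivity
    have h1 : (4:ℝ)^m / (2*(m:ℝ)+1) ≤ Cr := by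
      rw [div_le_iff₀ (by positivity)]; linarith
    have h2 : ((4:ℝ)^m / (2*(m:ℝ)+1))^n ≤ Cr^n := pow_le_pow_left₀ (by positivity) h1 n
    have h5 : ((4:ℝ) - 2*δ)^m = 4^m * r^m := by
      rw [show (4:ℝ) - 2*δ = 4 * r by rw [hr]; ring, mul_pow]
    have h6 : Bb * (2*(m:ℝ)+1)^n < (4:ℝ)^(m*n) := by
      calc Bb * (2*(m:ℝ)+1)^n = (4:ℝ)^(m*(n-1)+m) * ((2*(m:ℝ)+1)^n * r^m) := by
            rw [hBb, h5, pow_add]; ring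
        _ = (4:ℝ)^(m*n) * ((2*(m:ℝ)+1)^n * r^m) := by rw [hmn]
        _ < (4:ℝ)^(m*n) * 1 := mul_lt_mul_of_pos_left hmlt (by positivity)
        _ = (4:ℝ)^(m*n) := mul_one _
    have h7 : Bb < (4:ℝ)^(m*n) / (2*(m:ℝ)+1)^n := by
      rw [lt_div_iff₀ hp1]; exact h6
    have h8 : ((4:ℝ)^m / (2*(m:ℝ)+1))^n = (4:ℝ)^(m*n) / (2*(m:ℝ)+1)^n := by
      rw [div_pow, ← pow_mul]
    rw [h8] at h2
    linarith
  have hgappos : 0 < Cr^n - Bb := by linarith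
  set Tf : ℝ := T₀ + (K+1)/(Cr^n - Bb) with hTf
  have hTT : T₀ ≤ Tf := by
    rw [hTf]
    have : 0 ≤ (K+1)/(Cr^n-Bb) := by positivity
    linarith
  by_contra hcon
  push_neg at hcon
  have hgb : ∀ t ∈ Set.Icc T₀ Tf, g t ≤ Bb := by
    intro t ht
    obtain ⟨e₀, he₀⟩ := hcon t ht.1
    rw [hBb, hg]
    exact prod_cos_bound (fun e => L e * t - θ e) m hδ1 e₀ he₀
  have hup : (∫ s in T₀..Tf, g s) ≤ (Tf - T₀) * Bb := by
    have h := intervalIntegral.integral_mono_on (μ := MeasureTheory.volume) hTT (hgcont.intervalIntegrable _ _)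
      intervalIntegrable_const hgb
    rw [intervalIntegral.integral_const, smul_eq_mul] at h
    exact h
  have h9 := (abs_le.mp (key Tf hTT)).1
  have h10 : (Tf - T₀) * (Cr^n - Bb) ≤ K := by nlinarith
  have h11 : Tf - T₀ = (K+1)/(Cr^n - Bb) := by rw [hTf]; ring
  rw [h11, div_mul_cancel₀ _ (ne_of_gt hgappos)] at h10
  linarith


end ErgAux

open ErgAux


set_option maxHeartbeats 2000000 in
/-- As Statement 0, and additionally any sign choice `ε : E → {−1,+1}` can be
prescribed so that whenever `γlim e = 0` one has `ε e · sin(√λ_ℓ·L_e) > 0` for all `ℓ`. -/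
theorem ergodic_lemma_with_signs {E : Type*} [Fintype E] [Nonempty E]
    (L : E → ℝ) (hLpos : ∀ e, 0 < L e)
    (hindep : LinearIndependent ℚ L)
    (γ : E → ℕ → ℝ) (γlim : E → EReal)
    (hγ : ∀ e, Tendsto (fun ℓ : ℕ => ((γ e ℓ : ℝ) : EReal)) atTop (nhds (γlim e)))
    (hγdiv : ∀ e, Tendsto (fun ℓ : ℕ => γ e ℓ / (ℓ : ℝ)) atTop (nhds 0))
    (ε : E → ℝ) (hε : ∀ e, ε e = 1 ∨ ε e = -1) :
    ∃ lam : ℕ → ℝ, (∀ ℓ, 0 < lam ℓ) ∧ Tendsto lam atTop atTop ∧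
      (∀ e, Tendsto (fun ℓ : ℕ => (((ℓ : ℝ) * Real.sin (Real.sqrt (lam ℓ) * L e) : ℝ) : EReal))
            atTop (nhds (γlim e)) ∧
        Tendsto (fun ℓ : ℕ => Real.cos (Real.sqrt (lam ℓ) * L e)) atTop (nhds 1)) ∧
      (∀ e, γlim e = 0 → ∀ ℓ : ℕ, 0 < ε e * Real.sin (Real.sqrt (lam ℓ) * L e)) := by
  classical
  -- auxiliary sequences
  set q : ℕ → ℝ := fun ℓ => ((ℓ:ℝ)+2)⁻¹ with hq
  set u : ℕ → ℝ := fun ℓ => q ℓ ^ 2 with hu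
  set ρ : ℕ → ℝ := fun ℓ => q ℓ ^ 4 with hρ
  have hqpos : ∀ ℓ, 0 < q ℓ := fun ℓ => by rw [hq]; positivity
  have hqhalf : ∀ ℓ, q ℓ ≤ 1/2 := by
    intro ℓ
    rw [hq]
    rw [inv_le_comm₀ (by positivity) (by norm_num)]
    have h0 : (0:ℝ) ≤ (ℓ:ℝ) := Nat.cast_nonneg ℓ
    norm_num
  have hupos : ∀ ℓ, 0 < u ℓ := fun ℓ => by rw [hu]; positivity
  have hρpos : ∀ ℓ, 0 < ρ ℓ := fun ℓ => by rw [hρ]; positivity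
  have hρu : ∀ ℓ, ρ ℓ = u ℓ ^ 2 := fun ℓ => by rw [hρ, hu, ← pow_mul]
  have hu14 : ∀ ℓ, u ℓ ≤ 1/4 := fun ℓ => by
    rw [hu]; nlinarith [hqhalf ℓ, hqpos ℓ]
  have hρ1 : ∀ ℓ, ρ ℓ ≤ 1 := fun ℓ => by nlinarith [hρu ℓ, hu14 ℓ, hupos ℓ]
  -- target angles
  set θf : ℕ → E → ℝ := fun ℓ e =>
    if γlim e = ⊤ then min (max (γ e ℓ / ℓ) (q ℓ)) 1
    else if γlim e = ⊥ then max (min (γ e ℓ / ℓ) (-q ℓ)) (-1)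
    else if γlim e = 0 then ε e * u ℓ
    else max (min (γ e ℓ / ℓ) 1) (-1) with hθf
  -- choose t
  have hex : ∀ ℓ : ℕ, ∃ t : ℝ, ((ℓ:ℝ)+1) ≤ t ∧
      ∀ e, 1 - (ρ ℓ^2/8) < Real.cos (L e * t - θf ℓ e) := by
    intro ℓ
    exact kron L hindep (θf ℓ) (by positivity) (by nlinarith [hρ1 ℓ, hρpos ℓ]) _
  choose t ht hcos using hex
  have htpos : ∀ ℓ, 0 < t ℓ := fun ℓ => lt_of_lt_of_le (by positivity) (ht ℓ)
  set lam : ℕ → ℝ := fun ℓ => (t ℓ)^2 with hlam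
  have hsq : ∀ ℓ, Real.sqrt (lam ℓ) = t ℓ := fun ℓ => Real.sqrt_sq (htpos ℓ).le
  -- approximation bounds
  have happrox : ∀ ℓ e, |Real.sin (L e * t ℓ) - Real.sin (θf ℓ e)| ≤ ρ ℓ ∧
      |Real.cos (L e * t ℓ) - Real.cos (θf ℓ e)| ≤ ρ ℓ := by
    intro ℓ e
    have h := close_of_cos (by positivity : (0:ℝ) < ρ ℓ^2/8) (hcos ℓ e)
    have hb : Real.sqrt (2*(ρ ℓ^2/8)) + ρ ℓ^2/8 ≤ ρ ℓ := by
      have h1 : Real.sqrt (2*(ρ ℓ^2/8)) = ρ ℓ / 2 := by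
        rw [show 2*(ρ ℓ^2/8) = (ρ ℓ/2)^2 by ring]
        exact Real.sqrt_sq (by positivity)
      rw [h1]
      nlinarith [hρ1 ℓ, hρpos ℓ]
    exact ⟨h.1.trans hb, h.2.trans hb⟩
  -- limit facts for the auxiliary sequences
  have hq0 : Tendsto q atTop (𝓝 0) := by
    rw [hq]
    exact tendsto_inv_atTop_zero.comp
      (tendsto_atTop_add_const_right _ 2 tendsto_natCast_atTop_atTop)
  have hq3 : Tendsto (fun ℓ => q ℓ ^ 3) atTop (𝓝 0) := by
    simpa using hq0.pow 3
  have hlq : ∀ (k : ℕ), Tendsto (fun ℓ : ℕ => (ℓ:ℝ) * q ℓ ^ (k+2)) atTop (𝓝 0) := by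
    intro k
    have hg : Tendsto (fun ℓ : ℕ => q ℓ ^ (k+1)) atTop (𝓝 0) := by
      simpa using hq0.pow (k+1)
    refine squeeze_zero (fun ℓ => by positivity) (fun ℓ => ?_) hg
    have h1 : (ℓ:ℝ) ≤ ((ℓ:ℝ)+2) := by linarith
    have h2 : (ℓ:ℝ) * q ℓ ≤ 1 := by
      rw [hq]
      rw [show (ℓ:ℝ) * ((ℓ:ℝ)+2)⁻¹ = (ℓ:ℝ) / ((ℓ:ℝ)+2) by ring]
      rw [div_le_one (by positivity)]
      linarith
    calc (ℓ:ℝ) * q ℓ ^ (k+2) = ((ℓ:ℝ) * q ℓ) * q ℓ ^ (k+1) := by ring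
      _ ≤ 1 * q ℓ ^ (k+1) := mul_le_mul_of_nonneg_right h2 (by positivity)
      _ = q ℓ ^ (k+1) := one_mul _
  have hlρ0 : Tendsto (fun ℓ : ℕ => (ℓ:ℝ) * ρ ℓ) atTop (𝓝 0) := by
    simpa [hρ] using hlq 2
  have hlu0 : Tendsto (fun ℓ : ℕ => (ℓ:ℝ) * u ℓ) atTop (𝓝 0) := by
    simpa [hu] using hlq 0
  have hρ0 : Tendsto ρ atTop (𝓝 0) := by
    rw [hρ]; simpa using hq0.pow 4
  have hu0 : Tendsto u atTop (𝓝 0) := by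
    rw [hu]; simpa using hq0.pow 2
  refine ⟨lam, fun ℓ => pow_pos (htpos ℓ) 2, ?_, ?_, ?_⟩
  · -- lam → ∞
    apply tendsto_atTop_mono (fun ℓ => ?_) tendsto_natCast_atTop_atTop
    have h1 := ht ℓ
    have h2 : (0:ℝ) ≤ (ℓ:ℝ) := Nat.cast_nonneg ℓ
    calc (ℓ:ℝ) ≤ ((ℓ:ℝ)+1) * 1 := by linarith
      _ ≤ t ℓ * t ℓ := mul_le_mul h1 (by linarith) one_pos.le (by linarith)
      _ = t ℓ ^ 2 := by ring
      _ = lam ℓ := rfl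
  · -- main limits
    intro e
    have hsin : ∀ ℓ, |Real.sin (L e * t ℓ) - Real.sin (θf ℓ e)| ≤ ρ ℓ :=
      fun ℓ => (happrox ℓ e).1
    have hcosb : ∀ ℓ, |Real.cos (L e * t ℓ) - Real.cos (θf ℓ e)| ≤ ρ ℓ :=
      fun ℓ => (happrox ℓ e).2
    have hrwsin : ∀ ℓ : ℕ, Real.sin (Real.sqrt (lam ℓ) * L e) = Real.sin (L e * t ℓ) :=
      fun ℓ => by rw [hsq ℓ, mul_comm]
    have hrwcos : ∀ ℓ : ℕ, Real.cos (Real.sqrt (lam ℓ) * L e) = Real.cos (L e * t ℓ) :=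
      fun ℓ => by rw [hsq ℓ, mul_comm]
    -- θ tends to 0 in all cases
    have hθ0 : Tendsto (fun ℓ => θf ℓ e) atTop (𝓝 0) := by
      have hbound : ∀ ℓ, |θf ℓ e| ≤ |γ e ℓ / ℓ| + u ℓ + q ℓ := by
        intro ℓ
        have h1 := hqpos ℓ
        have h2 := hupos ℓ
        have h3 := abs_nonneg (γ e ℓ / (ℓ:ℝ))
        have h4 := le_abs_self (γ e ℓ / (ℓ:ℝ))
        have h5 := neg_abs_le (γ e ℓ / (ℓ:ℝ))
        simp only [hθf]
        split_ifs with c1 c2 c3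
        · have h9 : 0 ≤ min (max (γ e ℓ / (ℓ:ℝ)) (q ℓ)) 1 :=
            le_min (le_trans h1.le (le_max_right _ _)) one_pos.le
          rw [abs_of_nonneg h9]
          have h6 := min_le_left (max (γ e ℓ / (ℓ:ℝ)) (q ℓ)) 1
          rcases max_cases (γ e ℓ / (ℓ:ℝ)) (q ℓ) with ⟨hA, hB⟩ | ⟨hA, hB⟩ <;> linarith
        · have h9 : max (min (γ e ℓ/(ℓ:ℝ)) (-q ℓ)) (-1) ≤ 0 :=
            max_le ((min_le_right _ _).trans (by linarith)) (by norm_num)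
          rw [abs_of_nonpos h9]
          rcases max_cases (min (γ e ℓ/(ℓ:ℝ)) (-q ℓ)) (-1) with ⟨hA, hB⟩ | ⟨hA, hB⟩ <;>
            rcases min_cases (γ e ℓ/(ℓ:ℝ)) (-q ℓ) with ⟨hC, hD⟩ | ⟨hC, hD⟩ <;>
            rw [hA] <;> linarith
        · rcases hε e with h | h <;> rw [h]
          · rw [one_mul, abs_of_nonneg h2.le]; linarith
          · rw [neg_one_mul, abs_neg, abs_of_nonneg h2.le]; linarith
        · rw [abs_le]
          constructor <;>
            (rcases max_cases (min (γ e ℓ/(ℓ:ℝ)) 1) (-1) with ⟨hA, hB⟩ | ⟨hA, hB⟩ <;>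
             rcases min_cases (γ e ℓ/(ℓ:ℝ)) 1 with ⟨hC, hD⟩ | ⟨hC, hD⟩ <;>
             rw [hA] <;> linarith)
      apply squeeze_zero_norm hbound
      have := ((hγdiv e).abs.add hu0).add hq0
      simpa using this
    have hcoslim : Tendsto (fun ℓ : ℕ => Real.cos (Real.sqrt (lam ℓ) * L e)) atTop (𝓝 1) := by
      have h1 : Tendsto (fun ℓ => Real.cos (L e * t ℓ) - 1) atTop (𝓝 0) := by
        apply squeeze_zero_norm (a := fun ℓ => ρ ℓ + |Real.cos (θf ℓ e) - 1|)
        · intro ℓ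
          have h2 := hcosb ℓ
          calc |Real.cos (L e * t ℓ) - 1|
              ≤ |Real.cos (L e * t ℓ) - Real.cos (θf ℓ e)| + |Real.cos (θf ℓ e) - 1| :=
                abs_sub_le _ _ _
            _ ≤ ρ ℓ + |Real.cos (θf ℓ e) - 1| := by linarith
        · have h3 : Tendsto (fun ℓ => Real.cos (θf ℓ e) - 1) atTop (𝓝 0) := by
            have := (Real.continuous_cos.tendsto 0).comp hθ0
            simp only [Real.cos_zero] at this
            simpa using this.sub_const 1
          simpa using hρ0.add h3.abs
      have h2 := h1.add_const 1
      simp only [sub_add_cancel, zero_add] at h2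
      exact h2.congr fun ℓ => by rw [hrwcos ℓ]
    refine ⟨?_, hcoslim⟩
    rcases ereal_cases (γlim e) with hbot | htop | ⟨x, hx⟩
    · -- γlim e = ⊥
      rw [hbot]
      have hγB : Tendsto (γ e) atTop atBot := by
        have h := hγ e; rw [hbot] at h
        rw [EReal.tendsto_nhds_bot_iff_real] at h
        rw [tendsto_atBot]
        intro b
        exact (h b).mono fun ℓ hb => le_of_lt (by exact_mod_cast hb)
      have hθeq : ∀ ℓ, θf ℓ e = max (min (γ e ℓ / ℓ) (-q ℓ)) (-1) := by
        intro ℓ; simp only [hθf]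
        rw [if_neg (by rw [hbot]; simp), if_pos hbot]
      have hvev : ∀ᶠ ℓ : ℕ in atTop, |γ e ℓ / (ℓ:ℝ)| ≤ 1 := by
        have h := (hγdiv e).abs
        simp only [abs_zero] at h
        exact h.eventually_le_const one_pos
      have hT : Tendsto (fun ℓ : ℕ => (ℓ:ℝ) * Real.sin (L e * t ℓ)) atTop atBot := by
        apply tendsto_atBot_mono' atTop ?_
          (tendsto_atBot_add_const_right _ 1 (hγB.atBot_div_const two_pos))
        filter_upwards [hvev, eventually_ge_atTop 1,
          hlρ0.eventually_le_const one_pos] with ℓ hv1 hℓ1 hρ1'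
        have hℓR : (1:ℝ) ≤ (ℓ:ℝ) := by exact_mod_cast hℓ1
        have habs := abs_le.mp hv1
        have hq1 := hqpos ℓ
        have hq2 := hqhalf ℓ
        set θ : ℝ := min (γ e ℓ / ℓ) (-q ℓ) with hθd
        have hθmax : θf ℓ e = θ := by
          rw [hθeq ℓ, max_eq_left]
          exact le_min (by linarith [habs.1]) (by linarith)
        have hθub : θ ≤ -q ℓ := min_le_right _ _
        have hθlb : -1 ≤ θ := le_min (by linarith [habs.1]) (by linarith)
        have hsinθ : Real.sin θ ≤ (3/4) * θ := by
          have h2 := Real.sin_gt_sub_cube (show 0 < -θ by linarith)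
          rw [show (-θ) ^ 3 = -(θ^3) by ring] at h2
          rw [Real.sin_neg] at h2
          have h4 : θ ≤ θ^3 := by
            have h5 : 0 ≤ θ * (θ - 1) := by
              nlinarith [show θ ≤ 0 by linarith, show θ - 1 ≤ 0 by linarith]
            nlinarith [mul_nonneg h5 (show 0 ≤ θ + 1 by linarith)]
          linarith
        have hsb := abs_le.mp ((hθmax ▸ hsin ℓ))
        have hvθ : θ ≤ γ e ℓ / ℓ := min_le_left _ _
        have hlv : (ℓ:ℝ) * (γ e ℓ / ℓ) = γ e ℓ := by
          field_simp
        have h3 : (ℓ:ℝ) * Real.sin (L e * t ℓ) ≤ (ℓ:ℝ) * ((3/4) * θ + ρ ℓ) := by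
          apply mul_le_mul_of_nonneg_left _ (by linarith)
          linarith [hsb.2]
        have h4 : (ℓ:ℝ) * ((3/4) * θ + ρ ℓ) ≤ γ e ℓ / 2 + 1 := by
          have h5 : (ℓ:ℝ) * θ ≤ (ℓ:ℝ) * (γ e ℓ / ℓ) :=
            mul_le_mul_of_nonneg_left hvθ (by linarith)
          rw [hlv] at h5
          have h6 : (ℓ:ℝ) * ((3/4) * θ + ρ ℓ) = (3/4) * ((ℓ:ℝ) * θ) + (ℓ:ℝ) * ρ ℓ := by ring
          have h7 : (ℓ:ℝ) * θ ≤ 0 := mul_nonpos_of_nonneg_of_nonpos (by linarith) (by linarith)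
          nlinarith
        linarith
      rw [EReal.tendsto_nhds_bot_iff_real]
      intro b
      have h8 : ∀ᶠ ℓ : ℕ in atTop, (ℓ:ℝ) * Real.sin (L e * t ℓ) < b := hT.eventually_lt_atBot b
      filter_upwards [h8] with ℓ h9
      rw [hrwsin ℓ]
      exact_mod_cast h9
    · -- γlim e = ⊤
      rw [htop]
      have hγT : Tendsto (γ e) atTop atTop := by
        have h := hγ e; rw [htop] at h
        rw [EReal.tendsto_nhds_top_iff_real] at h
        rw [tendsto_atTop]
        intro b
        exact (h b).mono fun ℓ hb => le_of_lt (by exact_mod_cast hb)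
      have hθeq : ∀ ℓ, θf ℓ e = min (max (γ e ℓ / ℓ) (q ℓ)) 1 := by
        intro ℓ; simp only [hθf]; rw [if_pos htop]
      have hvev : ∀ᶠ ℓ : ℕ in atTop, |γ e ℓ / (ℓ:ℝ)| ≤ 1 := by
        have h := (hγdiv e).abs
        simp only [abs_zero] at h
        exact h.eventually_le_const one_pos
      have hT : Tendsto (fun ℓ : ℕ => (ℓ:ℝ) * Real.sin (L e * t ℓ)) atTop atTop := by
        apply tendsto_atTop_mono' atTop ?_
          (tendsto_atTop_add_const_right _ (-1) (hγT.atTop_div_const two_pos))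
        filter_upwards [hvev, eventually_ge_atTop 1,
          hlρ0.eventually_le_const one_pos] with ℓ hv1 hℓ1 hρ1'
        have hℓR : (1:ℝ) ≤ (ℓ:ℝ) := by exact_mod_cast hℓ1
        have habs := abs_le.mp hv1
        have hq1 := hqpos ℓ
        have hq2 := hqhalf ℓ
        set θ : ℝ := max (γ e ℓ / ℓ) (q ℓ) with hθd
        have hθmax : θf ℓ e = θ := by
          rw [hθeq ℓ, min_eq_left]
          exact max_le (by linarith [habs.2]) (by linarith)
        have hθlb : q ℓ ≤ θ := le_max_right _ _
        have hθub : θ ≤ 1 := max_le (by linarith [habs.2]) (by linarith)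
        have hsinθ : (3/4) * θ ≤ Real.sin θ := by
          have h2 := Real.sin_gt_sub_cube (show 0 < θ by linarith)
          have h4 : θ^3 ≤ θ := by
            nlinarith [mul_nonneg (mul_nonneg (show (0:ℝ) ≤ θ by linarith)
              (show 0 ≤ 1 - θ by linarith)) (show 0 ≤ 1 + θ by linarith)]
          linarith
        have hsb := abs_le.mp ((hθmax ▸ hsin ℓ))
        have hvθ : γ e ℓ / ℓ ≤ θ := le_max_left _ _
        have hlv : (ℓ:ℝ) * (γ e ℓ / ℓ) = γ e ℓ := by
          field_simp
        have h3 : (ℓ:ℝ) * ((3/4) * θ - ρ ℓ) ≤ (ℓ:ℝ) * Real.sin (L e * t ℓ) := by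
          apply mul_le_mul_of_nonneg_left _ (by linarith)
          linarith [hsb.1]
        have h4 : γ e ℓ / 2 - 1 ≤ (ℓ:ℝ) * ((3/4) * θ - ρ ℓ) := by
          have h5 : (ℓ:ℝ) * (γ e ℓ / ℓ) ≤ (ℓ:ℝ) * θ :=
            mul_le_mul_of_nonneg_left hvθ (by linarith)
          rw [hlv] at h5
          have h7 : 0 ≤ (ℓ:ℝ) * θ := mul_nonneg (by linarith) (by linarith)
          nlinarith
        linarith
      rw [EReal.tendsto_nhds_top_iff_real]
      intro b
      filter_upwards [hT.eventually_gt_atTop b] with ℓ h9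
      rw [hrwsin ℓ]
      exact_mod_cast h9
    · -- γlim e = x real
      rw [hx]
      rw [EReal.tendsto_coe]
      have hγx : Tendsto (γ e) atTop (𝓝 x) := by
        have h := hγ e; rw [hx] at h; exact EReal.tendsto_coe.mp h
      have hxcases : x = 0 ∨ x ≠ 0 := by tauto
      have hdiff : Tendsto (fun ℓ : ℕ => (ℓ:ℝ) * Real.sin (L e * t ℓ) - γ e ℓ) atTop (𝓝 0) := by
        rcases hxcases with h0 | hne
        · -- x = 0 case : θf = ε * u
          have hθeq : ∀ ℓ, θf ℓ e = ε e * u ℓ := by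
            intro ℓ; simp only [hθf]
            rw [if_neg (by rw [hx, h0]; simp), if_neg (by rw [hx, h0]; simp),
              if_pos (by rw [hx, h0]; simp)]
          apply squeeze_zero_norm (a := fun ℓ : ℕ => (ℓ:ℝ) * ρ ℓ + 2 * ((ℓ:ℝ) * u ℓ) + |γ e ℓ|)
          · intro ℓ
            have hsb := abs_le.mp ((hθeq ℓ ▸ hsin ℓ))
            have hεa : |ε e * u ℓ| = u ℓ := by
              rcases hε e with h | h <;> rw [h] <;>
                simp [abs_of_nonneg (hupos ℓ).le]
            have hsinu : |Real.sin (ε e * u ℓ)| ≤ 2 * u ℓ := by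
              have h2 := abs_sin_sub_le (ε e * u ℓ) (by rw [hεa]; linarith [hu14 ℓ])
              have h3 : |Real.sin (ε e * u ℓ)| - |ε e * u ℓ|
                  ≤ |Real.sin (ε e * u ℓ) - (ε e * u ℓ)| := abs_sub_abs_le_abs_sub _ _
              rw [hεa] at h2 h3
              have h4 : u ℓ ^ 3 ≤ u ℓ := by
                have h5 : u ℓ * u ℓ ≤ 1 := by nlinarith [hupos ℓ, hu14 ℓ]
                nlinarith [hupos ℓ, h5]
              linarith
            have hsL : |Real.sin (L e * t ℓ)| ≤ ρ ℓ + 2 * u ℓ := by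
              have h5 : |Real.sin (L e * t ℓ)| - |Real.sin (ε e * u ℓ)|
                  ≤ |Real.sin (L e * t ℓ) - Real.sin (ε e * u ℓ)| := abs_sub_abs_le_abs_sub _ _
              have h6 := abs_le.mpr hsb
              linarith
            have hl0 : (0:ℝ) ≤ (ℓ:ℝ) := Nat.cast_nonneg ℓ
            calc |(ℓ:ℝ) * Real.sin (L e * t ℓ) - γ e ℓ|
                ≤ |(ℓ:ℝ) * Real.sin (L e * t ℓ)| + |γ e ℓ| := abs_sub _ _
              _ = (ℓ:ℝ) * |Real.sin (L e * t ℓ)| + |γ e ℓ| := by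
                  rw [abs_mul, abs_of_nonneg hl0]
              _ ≤ (ℓ:ℝ) * (ρ ℓ + 2 * u ℓ) + |γ e ℓ| := by
                  have := mul_le_mul_of_nonneg_left hsL hl0
                  linarith
              _ ≤ (ℓ:ℝ) * ρ ℓ + 2 * ((ℓ:ℝ) * u ℓ) + |γ e ℓ| := by ring_nf; linarith
          · have hγ0 : Tendsto (fun ℓ => |γ e ℓ|) atTop (𝓝 0) := by
              have := hγx.abs
              rw [h0] at this
              simpa using this
            have := (hlρ0.add ((hlu0.const_mul 2))).add hγ0
            simpa using this
        · -- x ≠ 0 : θf = clamp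
          have hθeq : ∀ ℓ, θf ℓ e = max (min (γ e ℓ / ℓ) 1) (-1) := by
            intro ℓ; simp only [hθf]
            rw [if_neg (by rw [hx]; exact fun h => EReal.coe_ne_top x h),
              if_neg (by rw [hx]; exact fun h => EReal.coe_ne_bot x h),
              if_neg (by rw [hx]; simpa using hne)]
          have hvev : ∀ᶠ ℓ : ℕ in atTop, |γ e ℓ / (ℓ:ℝ)| ≤ 1 := by
            have h := (hγdiv e).abs
            simp only [abs_zero] at h
            exact h.eventually_le_const one_pos
          apply squeeze_zero_norm'
            (a := fun ℓ : ℕ => (ℓ:ℝ) * ρ ℓ + |γ e ℓ| * (γ e ℓ / ℓ) ^ 2)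
          · filter_upwards [hvev, eventually_ge_atTop 1] with ℓ hv1 hℓ1
            have hℓR : (1:ℝ) ≤ (ℓ:ℝ) := by exact_mod_cast hℓ1
            have habs := abs_le.mp hv1
            have hθv : θf ℓ e = γ e ℓ / ℓ := by
              rw [hθeq ℓ, min_eq_left habs.2, max_eq_left habs.1]
            have hsb := abs_le.mp ((hθv ▸ hsin ℓ))
            have h2 := abs_sin_sub_le (γ e ℓ / ℓ) hv1
            have hlv : (ℓ:ℝ) * (γ e ℓ / ℓ) = γ e ℓ := by field_simp
            have h3 : |(ℓ:ℝ) * Real.sin (L e * t ℓ) - γ e ℓ|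
                ≤ (ℓ:ℝ) * |Real.sin (L e * t ℓ) - γ e ℓ / ℓ| := by
              rw [show (ℓ:ℝ) * Real.sin (L e * t ℓ) - γ e ℓ
                  = (ℓ:ℝ) * (Real.sin (L e * t ℓ) - γ e ℓ / ℓ) by rw [mul_sub, hlv],
                abs_mul, abs_of_nonneg (by linarith : (0:ℝ) ≤ (ℓ:ℝ))]
            have h4 : |Real.sin (L e * t ℓ) - γ e ℓ / ℓ| ≤ ρ ℓ + |γ e ℓ / ℓ|^3 := by
              have h5 := abs_sub_le (Real.sin (L e * t ℓ)) (Real.sin (γ e ℓ / ℓ)) (γ e ℓ / ℓ)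
              have h6 := abs_le.mpr hsb
              linarith
            have h7 : (ℓ:ℝ) * |γ e ℓ / ℓ|^3 = |γ e ℓ| * (γ e ℓ / ℓ)^2 := by
              have h9 : (ℓ:ℝ) * |γ e ℓ / ℓ| = |γ e ℓ| := by
                rw [abs_div, Nat.abs_cast]
                field_simp
              calc (ℓ:ℝ) * |γ e ℓ / ℓ|^3
                  = ((ℓ:ℝ) * |γ e ℓ / ℓ|) * |γ e ℓ / ℓ|^2 := by ring
                _ = |γ e ℓ| * (γ e ℓ / ℓ)^2 := by rw [h9, sq_abs]
            calc |(ℓ:ℝ) * Real.sin (L e * t ℓ) - γ e ℓ|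
                ≤ (ℓ:ℝ) * (ρ ℓ + |γ e ℓ / ℓ|^3) := by
                  refine h3.trans (mul_le_mul_of_nonneg_left h4 (by linarith))
              _ = (ℓ:ℝ) * ρ ℓ + (ℓ:ℝ) * |γ e ℓ / ℓ|^3 := by ring
              _ = (ℓ:ℝ) * ρ ℓ + |γ e ℓ| * (γ e ℓ / ℓ) ^ 2 := by rw [h7]
          · have h8 : Tendsto (fun ℓ : ℕ => |γ e ℓ| * (γ e ℓ / ℓ) ^ 2) atTop (𝓝 0) := by
              have := hγx.abs.mul ((hγdiv e).pow 2)
              simpa using this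
            simpa using hlρ0.add h8
      have := hdiff.add hγx
      rw [zero_add] at this
      exact this.congr fun ℓ => by rw [hrwsin ℓ]; ring
  · -- sign clause
    intro e he ℓ
    have hθeq : θf ℓ e = ε e * u ℓ := by
      simp only [hθf]
      rw [if_neg (by rw [he]; simp), if_neg (by rw [he]; simp), if_pos he]
    have h1 : |Real.sin (L e * t ℓ) - Real.sin (ε e * u ℓ)| ≤ ρ ℓ := by
      have := (happrox ℓ e).1; rwa [hθeq] at this
    have hu1 := hupos ℓ
    have hu2 := hu14 ℓ
    have hsinu : Real.sin (u ℓ) ≥ (3/4) * u ℓ := by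
      have h2 := Real.sin_gt_sub_cube hu1
      have h4 : u ℓ ^ 3 ≤ u ℓ := by
        have h5 : u ℓ * u ℓ ≤ 1 := by nlinarith [hupos ℓ, hu14 ℓ]
        nlinarith [hupos ℓ, h5]
      linarith
    have hρu2 : ρ ℓ ≤ u ℓ / 4 := by nlinarith [hρu ℓ]
    have habs := abs_le.mp h1
    rw [hsq ℓ, mul_comm (t ℓ) (L e)]
    rcases hε e with h | h <;> rw [h] at habs ⊢
    · rw [one_mul] at habs ⊢
      linarith [habs.1, hsinu, hρu2, hu1]
    · rw [neg_one_mul] at habs ⊢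
      rw [Real.sin_neg] at habs
      have hgoal : Real.sin (L e * t ℓ) < 0 := by linarith [habs.2]
      linarith
end

section
/- Assume the edge lengths (L_{kj})_{(k,j)∈E} are linearly independent over ℚ, and for each edge (k,j) ∈ E let γ_{kj} ∈ [−∞,∞] \ {0} with γ_{kj} = γ_{jk}. Then there exists a sequence (λ_ℓ)_{ℓ∈ℕ} in (0,∞) with λ_ℓ → ∞ such that sin(√(λ_ℓ)·L_{kj}) ≠ 0 for every edge (k,j) and every ℓ (so D_{λ_ℓ,V} is defined), and (1/(ℓ√(λ_ℓ)))·D_{λ_ℓ,V} converges entrywise as ℓ → ∞ to the symmetric matrix Q ∈ ℝ^{n×n} defined by Q_{kj} = Q_{jk} = −1/γ_{kj} if (k,j) ∈ E (with the convention 1/(±∞) = 0), Q_{kj} = 0 if k ≠ j and (k,j) ∉ E, and Q_{kk} = −Σ_{j≠k} Q_{kj}. Moreover, if γ_{kj} = 1 for all edges, then −Q = A_G − D_G, where A_G is the adjacency matrix of G and D_G is the diagonal matrix of vertex degrees (i.e., −Q is the graph Laplacian L_G = A_G − D_G). -/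
open Filter Topology Finset

lemma abs_sin_sub_sin (a b : ℝ) : |Real.sin a - Real.sin b| ≤ |a - b| := by
  rw [Real.sin_sub_sin, abs_mul, abs_mul]
  have h2 : |(2:ℝ)| = 2 := by norm_num
  rw [h2]
  have hs : |Real.sin ((a - b)/2)| ≤ |a - b|/2 := by
    have := Real.abs_sin_le_abs (x := (a - b)/2)
    rwa [abs_div, abs_two] at this
  nlinarith [Real.abs_cos_le_one ((a + b)/2), abs_nonneg (Real.sin ((a - b)/2)),
    abs_nonneg (Real.cos ((a + b)/2))]

lemma abs_cos_sub_cos (a b : ℝ) : |Real.cos a - Real.cos b| ≤ |a - b| := by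
  rw [Real.cos_sub_cos, abs_mul, abs_mul]
  have h2 : |(-2:ℝ)| = 2 := by norm_num
  rw [h2]
  have hs : |Real.sin ((a - b)/2)| ≤ |a - b|/2 := by
    have := Real.abs_sin_le_abs (x := (a - b)/2)
    rwa [abs_div, abs_two] at this
  nlinarith [Real.abs_sin_le_one ((a + b)/2), abs_nonneg (Real.sin ((a - b)/2)),
    abs_nonneg (Real.sin ((a + b)/2))]

lemma exists_int_near {x ε : ℝ} (hε : 0 < ε) (hεπ : ε ≤ Real.pi)
    (h : Real.cos ε < Real.cos x) : ∃ m : ℤ, |x - m * (2 * Real.pi)| < ε := by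
  have hπ := Real.pi_pos
  set m := round (x / (2 * Real.pi)) with hm
  refine ⟨m, ?_⟩
  have hrep : x - m * (2 * Real.pi) = (2 * Real.pi) * (x / (2 * Real.pi) - m) := by
    field_simp
  have hy : |x - m * (2 * Real.pi)| ≤ Real.pi := by
    rw [hrep, abs_mul, abs_of_pos (by linarith : (0:ℝ) < 2 * Real.pi)]
    have := abs_sub_round (x / (2 * Real.pi))
    nlinarith [abs_nonneg (x / (2 * Real.pi) - (m:ℝ))]
  have hcos : Real.cos (x - m * (2 * Real.pi)) = Real.cos x :=
    Real.cos_periodic.sub_int_mul_eq m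
  by_contra hcon
  push_neg at hcon
  have h1 : Real.cos |x - m * (2 * Real.pi)| = Real.cos x := by
    rw [Real.cos_abs, hcos]
  have h2 : Real.cos |x - m * (2 * Real.pi)| ≤ Real.cos ε := by
    rcases eq_or_lt_of_le hcon with h' | h'
    · rw [← h']
    · exact le_of_lt (Real.cos_lt_cos_of_nonneg_of_le_pi hε.le hy h')
  rw [h1] at h2
  linarith

lemma clamp_mem {z : ℝ} : -1 ≤ max (-1) (min 1 z) ∧ max (-1) (min 1 z) ≤ 1 :=
  ⟨le_max_left _ _, max_le (by norm_num) (min_le_left _ _)⟩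

lemma clamp_abs_ge (z : ℝ) : min 1 |z| ≤ |max (-1) (min 1 z)| := by
  rcases le_or_gt 0 z with hz | hz
  · have h0 : (0:ℝ) ≤ min 1 z := le_min (by norm_num) hz
    have h1 : max (-1) (min 1 z) = min 1 z := max_eq_right (by linarith)
    rw [h1, abs_of_nonneg h0, abs_of_nonneg hz]
  · have h1 : max (-1) (min 1 z) = max (-1) z := by
      rw [min_eq_right (by linarith : z ≤ 1)]
    rw [h1, abs_of_neg hz]
    rcases le_or_gt (-1) z with h2 | h2
    · rw [max_eq_right h2, abs_of_nonpos (by linarith : z ≤ 0)]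
      exact min_le_right _ _
    · rw [max_eq_left h2.le]
      simpa using min_le_left (1:ℝ) |z|

lemma clamp_abs_le (z : ℝ) : |max (-1) (min 1 z)| ≤ |z| := by
  rcases le_or_gt 0 z with hz | hz
  · have h0 : (0:ℝ) ≤ min 1 z := le_min (by norm_num) hz
    have h1 : max (-1) (min 1 z) = min 1 z := max_eq_right (by linarith)
    rw [h1, abs_of_nonneg h0, abs_of_nonneg hz]
    exact min_le_right _ _
  · have h1 : max (-1) (min 1 z) = max (-1) z := by
      rw [min_eq_right (by linarith : z ≤ 1)]
    rw [h1, abs_of_neg hz]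
    rcases le_or_gt (-1) z with h2 | h2
    · rw [max_eq_right h2, abs_of_nonpos (by linarith : z ≤ 0)]
    · rw [max_eq_left h2.le]
      norm_num
      linarith


section Kron
open Complex

-- single factor expansion
lemma cos_pow_expand (K : ℕ) (u : ℝ) :
    (Complex.cos ((u/2 : ℝ))) ^ (2*K)
      = ∑ j ∈ Finset.range (2*K+1),
          (Nat.choose (2*K) j : ℂ) / 4^K * Complex.exp (I * ((j:ℝ) - (K:ℝ)) * u) := by
  have hu : ((u/2 : ℝ) : ℂ) = (u:ℂ)/2 := by push_cast; ring
  rw [hu]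
  have hcos : Complex.cos ((u:ℂ)/2)
      = (Complex.exp ((u:ℂ)/2 * I) + Complex.exp (-((u:ℂ)/2) * I)) / 2 := by
    have := Complex.two_cos (x := (u:ℂ)/2)
    linear_combination this / 2
  rw [hcos, div_pow, add_pow]
  rw [Finset.sum_div]
  refine Finset.sum_congr rfl (fun j hj => ?_)
  have hj' : j ≤ 2*K := Nat.lt_succ_iff.mp (Finset.mem_range.mp hj)
  rw [← Complex.exp_nat_mul, ← Complex.exp_nat_mul, ← Complex.exp_add]
  have hcast : ((2*K - j : ℕ) : ℂ) = 2*(K:ℂ) - (j:ℂ) := by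
    push_cast [Nat.cast_sub hj']
    ring
  rw [hcast]
  have h2 : ((2:ℂ))^(2*K) = 4^K := by
    rw [pow_mul]; norm_num
  rw [h2]
  have harg : (j:ℂ) * ((u:ℂ)/2 * I) + (2*(K:ℂ) - (j:ℂ)) * (-((u:ℂ)/2) * I)
      = I * (((j:ℝ):ℂ) - ((K:ℝ):ℂ)) * (u:ℂ) := by
    push_cast
    ring
  rw [harg]
  ring

lemma kronecker {ι : Type*} [Fintype ι] [DecidableEq ι] (L : ι → ℝ)
    (hL : LinearIndependent ℚ L) (θ : ι → ℝ) {ε : ℝ} (hε : 0 < ε) (hεπ : ε < Real.pi)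
    (T₀ : ℝ) :
    ∃ t : ℝ, T₀ ≤ t ∧ ∀ i, Real.cos ε < Real.cos (t * L i - θ i) := by
  classical
  have hπ := Real.pi_pos
  set r : ℝ := 1/2 + Real.cos ε / 2 with hr
  have hcos1 : Real.cos ε < 1 := by
    have := Real.cos_lt_cos_of_nonneg_of_le_pi (le_refl 0) hεπ.le hε
    simpa using this
  have hcosm1 : -1 < Real.cos ε := by
    have := Real.cos_lt_cos_of_nonneg_of_le_pi hε.le (le_refl Real.pi) hεπ
    simpa [Real.cos_pi] using this
  have hr0 : 0 < r := by rw [hr]; linarith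
  have hr1 : r < 1 := by rw [hr]; linarith
  set m : ℕ := Fintype.card ι with hm
  -- choose K
  obtain ⟨K, hK1, hKlt⟩ : ∃ K : ℕ, 0 < K ∧ r ^ K * (2*(K:ℝ)+1) ^ m < 1 := by
    have h3 : Tendsto (fun K : ℕ => (3:ℝ)^m * ((K:ℝ)^m * r^K)) atTop (𝓝 0) := by
      have := tendsto_pow_const_mul_const_pow_of_lt_one m hr0.le hr1
      simpa using this.const_mul ((3:ℝ)^m)
    have hev : ∀ᶠ K : ℕ in atTop, (3:ℝ)^m * ((K:ℝ)^m * r^K) < 1 :=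
      (h3.eventually_lt_const one_pos)
    obtain ⟨K, hK, hK1⟩ := ((eventually_ge_atTop 1).and hev).exists
    refine ⟨K, hK, lt_of_le_of_lt ?_ hK1⟩
    have hb : (2*(K:ℝ)+1) ^ m ≤ (3:ℝ)^m * (K:ℝ)^m := by
      rw [← mul_pow]
      have h1 : (1:ℝ) ≤ (K:ℝ) := by exact_mod_cast hK
      exact pow_le_pow_left₀ (by positivity) (by linarith) m
    calc r ^ K * (2*(K:ℝ)+1) ^ m ≤ r^K * ((3:ℝ)^m * (K:ℝ)^m) := by
          nlinarith [pow_nonneg hr0.le K, pow_nonneg (by positivity : (0:ℝ) ≤ 2*(K:ℝ)+1) m]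
      _ = (3:ℝ)^m * ((K:ℝ)^m * r^K) := by ring
  set cK : ℝ := (Nat.choose (2*K) K : ℝ) / 4^K with hcK
  have hcK_pos : 0 < cK := by
    apply div_pos _ (by positivity)
    exact_mod_cast Nat.choose_pos (by omega)
  have hcK_ge : 1 / (2*(K:ℝ)+1) ≤ cK := by
    have h4 := Nat.four_pow_le_two_mul_add_one_mul_central_binom K
    have h4' : (4:ℝ)^K ≤ (2*(K:ℝ)+1) * (Nat.choose (2*K) K : ℝ) := by
      exact_mod_cast h4
    rw [hcK, div_le_div_iff₀ (by positivity) (by positivity)]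
    nlinarith [pow_pos (show (0:ℝ) < 4 by norm_num) K]
  set a₀ : ℝ := cK ^ m with ha₀def
  have ha₀pos : 0 < a₀ := pow_pos hcK_pos m
  have ha₀ : r ^ K < a₀ := by
    have h1 : (1 / (2*(K:ℝ)+1)) ^ m ≤ a₀ := pow_le_pow_left₀ (by positivity) hcK_ge m
    have h2 : r ^ K < (1 / (2*(K:ℝ)+1)) ^ m := by
      rw [div_pow, one_pow, lt_div_iff₀ (by positivity)]
      exact hKlt
    linarith
  by_contra hcon
  push_neg at hcon
  set g : ℝ → ℝ := fun t => ∏ i, Real.cos ((t * L i - θ i)/2) ^ (2*K) with hg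
  have hgfac01 : ∀ (t : ℝ) (i : ι), 0 ≤ Real.cos ((t * L i - θ i)/2) ^ (2*K) ∧
      Real.cos ((t * L i - θ i)/2) ^ (2*K) ≤ 1 := by
    intro t i
    constructor
    · exact (even_two_mul K).pow_nonneg _
    · rw [pow_mul]
      exact pow_le_one₀ (sq_nonneg _) (Real.cos_sq_le_one _)
  have hg0 : ∀ t, 0 ≤ g t := fun t => Finset.prod_nonneg fun i _ => (hgfac01 t i).1
  have hg1 : ∀ t, g t ≤ 1 :=
    fun t => Finset.prod_le_one (fun i _ => (hgfac01 t i).1) (fun i _ => (hgfac01 t i).2)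
  have hfac_id : ∀ (t:ℝ) (i:ι), Real.cos ((t * L i - θ i)/2) ^ (2*K)
      = (1/2 + Real.cos (t*L i - θ i)/2)^K := by
    intro t i
    rw [pow_mul, Real.cos_sq]
    have h : 2 * ((t*L i - θ i)/2) = t*L i - θ i := by ring
    rw [h]
  have hgB : ∀ t, T₀ ≤ t → g t ≤ r ^ K := by
    intro t ht
    obtain ⟨i, hi⟩ := hcon t ht
    have hfac : Real.cos ((t * L i - θ i)/2) ^ (2*K) ≤ r ^ K := by
      rw [hfac_id]
      apply pow_le_pow_left₀
      · nlinarith [Real.neg_one_le_cos (t*L i - θ i)]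
      · rw [hr]; linarith
    calc g t = Real.cos ((t * L i - θ i)/2) ^ (2*K) *
          ∏ j ∈ Finset.univ.erase i, Real.cos ((t * L j - θ j)/2) ^ (2*K) :=
          (Finset.mul_prod_erase _ _ (Finset.mem_univ i)).symm
      _ ≤ r^K * 1 := mul_le_mul hfac
          (Finset.prod_le_one (fun j _ => (hgfac01 t j).1) (fun j _ => (hgfac01 t j).2))
          (Finset.prod_nonneg fun j _ => (hgfac01 t j).1) (by positivity)
      _ = r^K := mul_one _
  -- complex expansion
  set σf : (ι → ℕ) → ℝ := fun p => ∑ i, ((p i : ℝ) - (K:ℝ)) * L i with hσf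
  set c : (ι → ℕ) → ℂ := fun p => ∏ i, ((Nat.choose (2*K) (p i) : ℂ) / 4^K *
      Complex.exp (-(I * (((p i : ℕ):ℝ) - (K:ℝ)) * ((θ i : ℝ):ℂ)))) with hcdef
  set P : Finset (ι → ℕ) := Fintype.piFinset fun _ => Finset.range (2*K+1) with hP
  set p₀ : ι → ℕ := fun _ => K with hp₀
  have hp₀P : p₀ ∈ P := by
    rw [hP, Fintype.mem_piFinset]
    intro i
    simp only [hp₀, Finset.mem_range]
    omega
  have expand : ∀ t : ℝ, ((g t : ℝ) : ℂ) = ∑ p ∈ P, c p * Complex.exp (I * (σf p) * t) := by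
    intro t
    have h1 : ((g t : ℝ) : ℂ) = ∏ i, (Complex.cos (((t * L i - θ i)/2 : ℝ))) ^ (2*K) := by
      rw [hg]
      push_cast
      rfl
    rw [h1, Finset.prod_congr rfl (fun i _ => cos_pow_expand K (t * L i - θ i)),
      Finset.prod_univ_sum]
    refine Finset.sum_congr rfl (fun p hp => ?_)
    have h3 : ∀ i : ι, (Nat.choose (2*K) (p i) : ℂ)/4^K *
        Complex.exp (I * (((p i : ℕ):ℝ) - (K:ℝ)) * ((t * L i - θ i : ℝ):ℂ))
        = ((Nat.choose (2*K) (p i) : ℂ)/4^K *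
            Complex.exp (-(I * (((p i : ℕ):ℝ) - (K:ℝ)) * ((θ i : ℝ):ℂ)))) *
          Complex.exp (I * ((((p i : ℕ):ℝ) - (K:ℝ)) * L i : ℝ) * t) := by
      intro i
      rw [mul_assoc ((Nat.choose (2*K) (p i) : ℂ)/4^K), ← Complex.exp_add]
      congr 2
      push_cast
      ring
    calc ∏ i, (Nat.choose (2*K) (p i) : ℂ)/4^K *
          Complex.exp (I * (((p i : ℕ):ℝ) - (K:ℝ)) * ((t * L i - θ i : ℝ):ℂ))
        = ∏ i, (((Nat.choose (2*K) (p i) : ℂ)/4^K *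
            Complex.exp (-(I * (((p i : ℕ):ℝ) - (K:ℝ)) * ((θ i : ℝ):ℂ)))) *
          Complex.exp (I * ((((p i : ℕ):ℝ) - (K:ℝ)) * L i : ℝ) * t)) :=
          Finset.prod_congr rfl (fun i _ => h3 i)
      _ = c p * ∏ i, Complex.exp (I * ((((p i : ℕ):ℝ) - (K:ℝ)) * L i : ℝ) * t) := by
          rw [Finset.prod_mul_distrib, hcdef]
      _ = c p * Complex.exp (I * (σf p) * t) := by
          rw [← Complex.exp_sum]
          congr 1
          rw [hσf]
          push_cast
          rw [Finset.mul_sum, Finset.sum_mul]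
  -- σf p = 0 iff p = p₀ (on P)
  have hσ0 : ∀ p, σf p = 0 → p = p₀ := by
    intro p hσp
    have hli := Fintype.linearIndependent_iff.mp hL (fun i => ((p i : ℚ) - (K:ℚ)))
    have hsum : ∑ i, (((p i : ℚ) - (K:ℚ))) • L i = 0 := by
      rw [← hσp, hσf]
      refine Finset.sum_congr rfl (fun i _ => ?_)
      rw [Rat.smul_def]
      push_cast
      ring
    have hz := hli hsum
    funext i
    have h := hz i
    have h2 : ((p i : ℚ)) = (K:ℚ) := by linarith
    rw [hp₀]
    exact_mod_cast h2
  have hσp₀ : σf p₀ = 0 := by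
    rw [hσf, hp₀]
    simp
  -- integrability
  have hInt : ∀ (p : ι → ℕ) (T : ℝ),
      IntervalIntegrable (fun t : ℝ => Complex.exp (I * (σf p) * t)) MeasureTheory.volume 0 T := by
    intro p T
    apply Continuous.intervalIntegrable
    exact Complex.continuous_exp.comp ((continuous_const).mul Complex.continuous_ofReal)
  have hgcont : Continuous g := by
    rw [hg]
    apply continuous_finset_prod
    intro i _
    apply Continuous.pow
    apply Real.continuous_cos.comp
    fun_prop
  -- average of each oscillating term tends to 0
  have hosc : ∀ p, σf p ≠ 0 →
      Tendsto (fun T : ℝ => (1/(T:ℂ)) * ∫ t in (0:ℝ)..T, Complex.exp (I * (σf p) * t))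
        atTop (𝓝 0) := by
    intro p hσp
    have hI : (I * ((σf p : ℝ):ℂ)) ≠ 0 := by
      apply mul_ne_zero Complex.I_ne_zero
      exact_mod_cast Complex.ofReal_ne_zero.mpr hσp
    have hval : ∀ T : ℝ, ∫ t in (0:ℝ)..T, Complex.exp (I * (σf p) * t)
        = (Complex.exp (I * (σf p) * T) - 1) / (I * (σf p)) := by
      intro T
      rw [integral_exp_mul_complex hI]
      norm_num
    rw [tendsto_zero_iff_norm_tendsto_zero]
    apply squeeze_zero' (Filter.Eventually.of_forall fun T => norm_nonneg _)
      (g := fun T => (2 / ‖I * ((σf p : ℝ):ℂ)‖) / T)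
    · filter_upwards [eventually_ge_atTop (1:ℝ)] with T hT
      have hT0 : (0:ℝ) < T := by linarith
      rw [hval T, norm_mul, norm_div, norm_div, norm_one, Complex.norm_real,
        Real.norm_eq_abs, abs_of_pos hT0]
      have hnorm1 : ‖Complex.exp (I * (σf p) * T)‖ = 1 := by
        rw [show I * ((σf p : ℝ):ℂ) * ((T:ℝ):ℂ) = ((σf p * T : ℝ):ℂ) * I by push_cast; ring]
        exact Complex.norm_exp_ofReal_mul_I _
      have hnum : ‖Complex.exp (I * (σf p) * T) - 1‖ ≤ 2 := by
        calc ‖Complex.exp (I * (σf p) * T) - 1‖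
            ≤ ‖Complex.exp (I * (σf p) * T)‖ + ‖(1:ℂ)‖ := norm_sub_le _ _
          _ ≤ 2 := by rw [hnorm1, norm_one]; norm_num
      have hden : 0 < ‖I * ((σf p : ℝ):ℂ)‖ := norm_pos_iff.mpr hI
      calc 1/T * (‖Complex.exp (I * (σf p) * T) - 1‖ / ‖I * ((σf p : ℝ):ℂ)‖)
          ≤ 1/T * (2 / ‖I * ((σf p : ℝ):ℂ)‖) := by gcongr
        _ = (2 / ‖I * ((σf p : ℝ):ℂ)‖) / T := by ring
    · apply Filter.Tendsto.const_div_atTop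
      exact tendsto_id
  -- the complex average tends to c p₀
  have havgC : Tendsto (fun T : ℝ => (1/(T:ℂ)) * ∫ t in (0:ℝ)..T, ((g t : ℝ):ℂ))
      atTop (𝓝 (c p₀)) := by
    have heq : ∀ T : ℝ, (1/(T:ℂ)) * ∫ t in (0:ℝ)..T, ((g t : ℝ):ℂ)
        = ∑ p ∈ P, c p * ((1/(T:ℂ)) * ∫ t in (0:ℝ)..T, Complex.exp (I * (σf p) * t)) := by
      intro T
      rw [intervalIntegral.integral_congr
        (g := fun t => ∑ p ∈ P, c p * Complex.exp (I * (σf p) * t)) (fun t _ => expand t)]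
      rw [intervalIntegral.integral_finset_sum (fun p _ => (hInt p T).const_mul (c p))]
      rw [Finset.mul_sum]
      refine Finset.sum_congr rfl (fun p _ => ?_)
      rw [intervalIntegral.integral_const_mul]
      ring
    have hlim : Tendsto (fun T : ℝ => ∑ p ∈ P,
        c p * ((1/(T:ℂ)) * ∫ t in (0:ℝ)..T, Complex.exp (I * (σf p) * t)))
        atTop (𝓝 (∑ p ∈ P, if p = p₀ then c p₀ else 0)) := by
      apply tendsto_finset_sum
      intro p hp
      by_cases hpp : p = p₀
      · subst hpp
        simp only [if_pos]
        have hev : ∀ᶠ T : ℝ in atTop,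
            c p₀ = c p₀ * ((1/(T:ℂ)) * ∫ t in (0:ℝ)..T, Complex.exp (I * (σf p₀) * t)) := by
          filter_upwards [eventually_ge_atTop (1:ℝ)] with T hT
          have hT0 : (T:ℂ) ≠ 0 := by
            exact_mod_cast Complex.ofReal_ne_zero.mpr (by linarith : T ≠ 0)
          have hint1 : (∫ t in (0:ℝ)..T, Complex.exp (I * (σf p₀) * t)) = T := by
            simp only [hσp₀, Complex.ofReal_zero, mul_zero, zero_mul, Complex.exp_zero]
            rw [intervalIntegral.integral_const]
            simp
          rw [hint1]
          field_simp
        exact tendsto_const_nhds.congr' hev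
      · have h0 : σf p ≠ 0 := fun h => hpp (hσ0 p h)
        simp only [if_neg hpp]
        have := (hosc p h0).const_mul (c p)
        simpa using this
    rw [Finset.sum_ite_eq' P p₀ (fun _ => c p₀), if_pos hp₀P] at hlim
    exact Tendsto.congr (fun T => (heq T).symm) hlim
  have hcp₀ : c p₀ = ((a₀ : ℝ) : ℂ) := by
    simp only [hcdef]
    have hfac : ∀ i : ι, ((Nat.choose (2*K) (p₀ i) : ℂ) / 4^K *
        Complex.exp (-(I * (((p₀ i : ℕ):ℝ) - (K:ℝ)) * ((θ i : ℝ):ℂ)))) = ((cK : ℝ):ℂ) := by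
      intro i
      simp only [hp₀, sub_self, Complex.ofReal_natCast]
      rw [mul_zero, zero_mul, neg_zero, Complex.exp_zero, mul_one, hcK]
      push_cast
      ring
    rw [Finset.prod_congr rfl (fun i _ => hfac i), Finset.prod_const, Finset.card_univ, ← hm,
      ha₀def]
    push_cast
    ring
  -- real average tends to a₀
  have havgR : Tendsto (fun T : ℝ => (1/T) * ∫ t in (0:ℝ)..T, g t) atTop (𝓝 a₀) := by
    have hre := (Complex.continuous_re.tendsto (c p₀)).comp havgC
    have heqre : ∀ T : ℝ, ((1/(T:ℂ)) * ∫ t in (0:ℝ)..T, ((g t : ℝ):ℂ)).re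
        = (1/T) * ∫ t in (0:ℝ)..T, g t := by
      intro T
      rw [intervalIntegral.integral_ofReal,
        show (1/(T:ℂ)) = ((1/T : ℝ):ℂ) by push_cast; ring,
        ← Complex.ofReal_mul, Complex.ofReal_re]
    have hre' : Tendsto (fun T : ℝ => (1/T) * ∫ t in (0:ℝ)..T, g t) atTop (𝓝 ((c p₀).re)) :=
      Tendsto.congr heqre hre
    rwa [hcp₀, Complex.ofReal_re] at hre'
  -- upper bound for the average
  have hgint : ∀ a b : ℝ, IntervalIntegrable g MeasureTheory.volume a b :=
    fun a b => hgcont.intervalIntegrable a b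
  set T₁ : ℝ := max T₀ 0 with hT₁
  have hT₁0 : 0 ≤ T₁ := le_max_right _ _
  have hub : ∀ T : ℝ, T₁ + 1 ≤ T → (1/T) * ∫ t in (0:ℝ)..T, g t ≤ T₁/T + r^K := by
    intro T hT
    have hTpos : 0 < T := by linarith
    have hT1T : T₁ ≤ T := by linarith
    have hsplit : ∫ t in (0:ℝ)..T, g t = (∫ t in (0:ℝ)..T₁, g t) + ∫ t in T₁..T, g t :=
      (intervalIntegral.integral_add_adjacent_intervals (hgint 0 T₁) (hgint T₁ T)).symm
    have h1 : ∫ t in (0:ℝ)..T₁, g t ≤ T₁ := by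
      calc ∫ t in (0:ℝ)..T₁, g t ≤ ∫ t in (0:ℝ)..T₁, (1:ℝ) :=
            intervalIntegral.integral_mono_on hT₁0 (hgint 0 T₁) intervalIntegrable_const
              (fun x _ => hg1 x)
        _ = T₁ := by simp
    have h2 : ∫ t in T₁..T, g t ≤ (T - T₁) * r^K := by
      calc ∫ t in T₁..T, g t ≤ ∫ t in T₁..T, r^K :=
            intervalIntegral.integral_mono_on hT1T (hgint T₁ T) intervalIntegrable_const
              (fun x hx => hgB x (le_trans (le_max_left T₀ 0) hx.1))
        _ = (T - T₁) * r^K := by rw [intervalIntegral.integral_const, smul_eq_mul]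
    have hrK : (0:ℝ) ≤ r^K := by positivity
    have h3 : ∫ t in (0:ℝ)..T, g t ≤ T₁ + T * r^K := by
      rw [hsplit]
      nlinarith
    calc (1/T) * ∫ t in (0:ℝ)..T, g t ≤ (1/T) * (T₁ + T * r^K) := by
          apply mul_le_mul_of_nonneg_left h3 (by positivity)
      _ = T₁/T + r^K := by field_simp
  -- contradiction
  have hfr : ∀ᶠ T : ℝ in atTop, (a₀ + r^K)/2 < (1/T) * ∫ t in (0:ℝ)..T, g t := by
    apply havgR.eventually_const_lt
    have hrK : (0:ℝ) ≤ r^K := by positivity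
    linarith
  have h0T : Tendsto (fun T : ℝ => T₁/T) atTop (𝓝 0) :=
    Filter.Tendsto.const_div_atTop tendsto_id T₁
  have hev2 : ∀ᶠ T : ℝ in atTop, T₁/T < (a₀ - r^K)/2 :=
    h0T.eventually_lt_const (by linarith)
  obtain ⟨T, hTa, hTb, hTc⟩ := ((eventually_ge_atTop (T₁ + 1)).and (hfr.and hev2)).exists
  have := hub T hTa
  linarith

end Kron


lemma ereal_cases (x : EReal) (hx : x ≠ 0) :
    x = ⊤ ∨ x = ⊥ ∨ ∃ y : ℝ, y ≠ 0 ∧ x = (y : EReal) := by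
  induction x using EReal.rec with
  | bot => exact Or.inr (Or.inl rfl)
  | coe y => exact Or.inr (Or.inr ⟨y, by exact_mod_cast hx, rfl⟩)
  | top => exact Or.inl rfl

/-- `β_{kj}(λ)` for an edge of length `L` (zero entries are handled in `DtN` itself). -/
noncomputable def betaFn (L lam : ℝ) : ℝ :=
  if 0 < lam then Real.sqrt lam / Real.sin (Real.sqrt lam * L)
  else if lam = 0 then 1 / L
  else Real.sqrt (-lam) / Real.sinh (Real.sqrt (-lam) * L)

/-- `α_{kj}(λ)` for an edge of length `L`. -/
noncomputable def alphaFn (L lam : ℝ) : ℝ :=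
  if 0 < lam then Real.sqrt lam * Real.cos (Real.sqrt lam * L) / Real.sin (Real.sqrt lam * L)
  else if lam = 0 then 1 / L
  else Real.sqrt (-lam) * Real.cosh (Real.sqrt (-lam) * L) / Real.sinh (Real.sqrt (-lam) * L)

/-- The Dirichlet-to-Neumann matrix `D_{λ,V}` of a quantum graph with adjacency `G` and edge
lengths `L`: off-diagonal entries `−β_{kj}(λ)` on edges (`0` off edges), diagonal entries
`Σ_l α_{kl}(λ)` (where `α_{kl} = 0` unless `(k,l)` is an edge). -/
noncomputable def DtN {V : Type*} [Fintype V] [DecidableEq V]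
    (G : SimpleGraph V) [DecidableRel G.Adj] (L : V → V → ℝ) (lam : ℝ) :
    Matrix V V ℝ := fun k j =>
  if k = j then ∑ l, (if G.Adj k l then alphaFn (L k l) lam else 0)
  else if G.Adj k j then -betaFn (L k j) lam else 0

/-- The limit matrix `Q` of Corollary: `Q_{kj} = −1/γ_{kj}` on edges (with `1/(±∞) = 0`),
`Q_{kj} = 0` off edges for `k ≠ j`, and `Q_{kk} = −Σ_{j≠k} Q_{kj}`. -/
noncomputable def Qmat {n : ℕ} (G : SimpleGraph (Fin n)) [DecidableRel G.Adj]
    (γ : Fin n → Fin n → EReal) : Matrix (Fin n) (Fin n) ℝ := fun k j =>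
  if k = j then ∑ l, (if G.Adj k l then ((γ k l).toReal)⁻¹ else 0)
  else if G.Adj k j then -((γ k j).toReal)⁻¹ else 0

set_option maxHeartbeats 1600000 in
/-- If the edge lengths are linearly independent over `ℚ` and
`γ_{kj} ∈ [−∞,∞] \ {0}` are prescribed symmetric values on the edges, then there is a sequence
`λ_ℓ → ∞` of positive reals such that `sin(√λ_ℓ·L_{kj}) ≠ 0` on every edge (so `D_{λ_ℓ,V}` is
defined) and `(1/(ℓ√λ_ℓ))·D_{λ_ℓ,V} → Q` entrywise.  Moreover, if `γ_{kj} = 1` on all edges,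
then `−Q = A_G − D_G` is the graph Laplacian. -/
theorem dtn_rescaled_limit {n : ℕ} (hn : 2 ≤ n)
    (G : SimpleGraph (Fin n)) [DecidableRel G.Adj] (hconn : G.Connected)
    (L : Fin n → Fin n → ℝ) (hsymm : ∀ k j, L k j = L j k)
    (hLpos : ∀ k j, G.Adj k j → 0 < L k j)
    (hindep : LinearIndependent ℚ
      (fun e : G.edgeSet => Sym2.lift ⟨L, hsymm⟩ (e : Sym2 (Fin n))))
    (γ : Fin n → Fin n → EReal) (hγsymm : ∀ k j, γ k j = γ j k)
    (hγne : ∀ k j, G.Adj k j → γ k j ≠ 0) :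
    (∃ lam : ℕ → ℝ, (∀ ℓ, 0 < lam ℓ) ∧ Tendsto lam atTop atTop ∧
      (∀ ℓ k j, G.Adj k j → Real.sin (Real.sqrt (lam ℓ) * L k j) ≠ 0) ∧
      (∀ k j, Tendsto
        (fun ℓ : ℕ => (1 / ((ℓ : ℝ) * Real.sqrt (lam ℓ))) * DtN G L (lam ℓ) k j)
        atTop (nhds (Qmat G γ k j)))) ∧
    ((∀ k j, G.Adj k j → γ k j = 1) →
      ∀ k j, -(Qmat G γ k j) =
        (if G.Adj k j then (1 : ℝ) else 0) - (if k = j then (G.degree k : ℝ) else 0)) := by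
  classical
  constructor
  · -- edge-level data
    set LE : G.edgeSet → ℝ := fun e => Sym2.lift ⟨L, hsymm⟩ (e : Sym2 (Fin n)) with hLEdef
    have hLE : LinearIndependent ℚ LE := hindep
    set γE : G.edgeSet → EReal := fun e => Sym2.lift ⟨γ, hγsymm⟩ (e : Sym2 (Fin n)) with hγEdef
    have hγE0 : ∀ e : G.edgeSet, γE e ≠ 0 := by
      rintro ⟨s, hs⟩
      revert hs
      induction s using Sym2.ind with
      | _ a b =>
        intro hs
        rw [SimpleGraph.mem_edgeSet] at hs
        simpa [hγEdef] using hγne a b hs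
    set Pinf : G.edgeSet → Prop := fun e => γE e = ⊤ ∨ γE e = ⊥ with hPinfdef
    set w : G.edgeSet → ℝ := fun e => if Pinf e then 1 else min 1 |(γE e).toReal| with hwdef
    have hw : ∀ e, 0 < w e ∧ w e ≤ 1 := by
      intro e
      by_cases hp : Pinf e
      · simp [hwdef, hp]
      · rcases ereal_cases (γE e) (hγE0 e) with hc | hc | ⟨y, hy0, hc⟩
        · exact absurd (by simp only [hPinfdef]; left; exact hc) hp
        · exact absurd (by simp only [hPinfdef]; right; exact hc) hp
        · have htr : (γE e).toReal = y := by rw [hc]; exact EReal.toReal_coe y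
          constructor
          · simp only [hwdef, if_neg hp, htr]
            exact lt_min one_pos (abs_pos.mpr hy0)
          · simp only [hwdef, if_neg hp]
            exact min_le_left _ _
    set M : ℝ := ∏ e, w e with hMdef
    have hM0 : 0 < M := Finset.prod_pos (fun e _ => (hw e).1)
    have hM1 : M ≤ 1 := Finset.prod_le_one (fun e _ => (hw e).1.le) (fun e _ => (hw e).2)
    have hMw : ∀ e, M ≤ w e := by
      intro e
      calc M = w e * ∏ e' ∈ Finset.univ.erase e, w e' :=
            (Finset.mul_prod_erase _ _ (Finset.mem_univ e)).symm
        _ ≤ w e * 1 := by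
            apply mul_le_mul_of_nonneg_left _ (hw e).1.le
            exact Finset.prod_le_one (fun e' _ => (hw e').1.le) (fun e' _ => (hw e').2)
        _ = w e := mul_one _
    set εs : ℕ → ℝ := fun ℓ => M / (2 * ((ℓ:ℝ)+1)^2) with hεsdef
    have hεs_pos : ∀ ℓ, 0 < εs ℓ := fun ℓ => div_pos hM0 (by positivity)
    have hεs_le : ∀ ℓ : ℕ, εs ℓ ≤ 1/2 := by
      intro ℓ
      rw [hεsdef]
      have h1 : (1:ℝ) ≤ ((ℓ:ℝ)+1)^2 := by
        have h2 : (1:ℝ) ≤ (ℓ:ℝ)+1 := by linarith [Nat.cast_nonneg (α := ℝ) ℓ]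
        nlinarith
      rw [div_le_div_iff₀ (by positivity) (by norm_num)]
      nlinarith
    have hεs_pi : ∀ ℓ : ℕ, εs ℓ < Real.pi := fun ℓ =>
      lt_of_le_of_lt (hεs_le ℓ) (by linarith [Real.pi_gt_three])
    set θs : ℕ → G.edgeSet → ℝ := fun ℓ e => if Pinf e then Real.pi/2
      else Real.arcsin (max (-1) (min 1 ((γE e).toReal / ((ℓ:ℝ)+1)))) with hθsdef
    have hKr : ∀ ℓ : ℕ, ∃ tt : ℝ, ((ℓ:ℝ)+1) ≤ tt ∧
        ∀ e, Real.cos (εs ℓ) < Real.cos (tt * LE e - θs ℓ e) :=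
      fun ℓ => kronecker LE hLE (θs ℓ) (hεs_pos ℓ) (hεs_pi ℓ) _
    choose t ht htc using hKr
    have ht1 : ∀ ℓ, (1:ℝ) ≤ t ℓ := by
      intro ℓ
      have h0 : (0:ℝ) ≤ (ℓ:ℝ) := Nat.cast_nonneg ℓ
      linarith [ht ℓ]
    have hnat1 : Tendsto (fun ℓ : ℕ => (ℓ:ℝ)+1) atTop atTop :=
      tendsto_atTop_add_const_right atTop 1 tendsto_natCast_atTop_atTop
    -- core estimates per adjacent pair
    have core : ∀ k j, G.Adj k j →
        (∀ ℓ : ℕ, Real.sin (t ℓ * L k j) ≠ 0) ∧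
        Tendsto (fun ℓ : ℕ => ((ℓ:ℝ) * Real.sin (t ℓ * L k j))⁻¹) atTop
          (𝓝 (((γ k j).toReal)⁻¹)) ∧
        Tendsto (fun ℓ : ℕ => Real.cos (t ℓ * L k j) * ((ℓ:ℝ) * Real.sin (t ℓ * L k j))⁻¹)
          atTop (𝓝 (((γ k j).toReal)⁻¹)) := by
      intro k j hA
      set e : G.edgeSet := ⟨s(k,j), G.mem_edgeSet.mpr hA⟩ with hedef
      have hLEe : LE e = L k j := by simp [hLEdef, hedef]
      have hγEe : γE e = γ k j := by simp [hγEdef, hedef]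
      have hγ0 : γ k j ≠ 0 := hγne k j hA
      have hclose : ∀ ℓ : ℕ, |Real.sin (t ℓ * L k j) - Real.sin (θs ℓ e)| ≤ εs ℓ ∧
          |Real.cos (t ℓ * L k j) - Real.cos (θs ℓ e)| ≤ εs ℓ := by
        intro ℓ
        have h1 := htc ℓ e
        rw [hLEe] at h1
        obtain ⟨m, hm⟩ := exists_int_near (hεs_pos ℓ) (hεs_pi ℓ).le h1
        have harg : |t ℓ * L k j - (m:ℝ) * (2*Real.pi) - θs ℓ e| ≤ εs ℓ := by
          have hre : t ℓ * L k j - (m:ℝ) * (2*Real.pi) - θs ℓ e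
              = t ℓ * L k j - θs ℓ e - (m:ℝ) * (2*Real.pi) := by ring
          rw [hre]
          exact hm.le
        constructor
        · rw [← Real.sin_periodic.sub_int_mul_eq (x := t ℓ * L k j) m]
          exact le_trans (abs_sin_sub_sin _ _) harg
        · rw [← Real.cos_periodic.sub_int_mul_eq (x := t ℓ * L k j) m]
          exact le_trans (abs_cos_sub_cos _ _) harg
      by_cases hinf : γ k j = ⊤ ∨ γ k j = ⊥
      · -- infinite γ
        have hPe : Pinf e := by simp only [hPinfdef]; rw [hγEe]; exact hinf
        have hθ : ∀ ℓ, θs ℓ e = Real.pi/2 := fun ℓ => by rw [hθsdef]; exact if_pos hPe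
        have hslb : ∀ ℓ : ℕ, (1:ℝ)/2 ≤ Real.sin (t ℓ * L k j) := by
          intro ℓ
          have h1 := (hclose ℓ).1
          rw [hθ, Real.sin_pi_div_two] at h1
          have h2 := hεs_le ℓ
          have h3 := abs_le.mp h1
          linarith [h3.1]
        have hne : ∀ ℓ : ℕ, Real.sin (t ℓ * L k j) ≠ 0 :=
          fun ℓ => by linarith [hslb ℓ]
        have htoReal : ((γ k j).toReal)⁻¹ = 0 := by
          rcases hinf with h | h <;> rw [h] <;> simp
        have h2l : Tendsto (fun ℓ : ℕ => 2/(ℓ:ℝ)) atTop (𝓝 0) :=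
          Filter.Tendsto.const_div_atTop tendsto_natCast_atTop_atTop 2
        have key : ∀ (b : ℕ → ℝ), (∀ ℓ, |b ℓ| ≤ 1) →
            Tendsto (fun ℓ : ℕ => b ℓ * ((ℓ:ℝ) * Real.sin (t ℓ * L k j))⁻¹) atTop (𝓝 0) := by
          intro b hb
          rw [tendsto_zero_iff_abs_tendsto_zero]
          apply squeeze_zero' (Filter.Eventually.of_forall fun ℓ => abs_nonneg _) _ h2l
          filter_upwards [eventually_ge_atTop 1] with ℓ hℓ
          have hℓ0 : (0:ℝ) < (ℓ:ℝ) := by exact_mod_cast hℓ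
          have hsp : (0:ℝ) < Real.sin (t ℓ * L k j) := lt_of_lt_of_le (by norm_num) (hslb ℓ)
          have hms : (ℓ:ℝ)/2 ≤ (ℓ:ℝ) * Real.sin (t ℓ * L k j) := by nlinarith [hslb ℓ]
          have hmpos : (0:ℝ) < (ℓ:ℝ) * Real.sin (t ℓ * L k j) := by positivity
          rw [abs_mul, abs_inv, abs_of_pos hmpos]
          have hinv2 : ((ℓ:ℝ) * Real.sin (t ℓ * L k j))⁻¹ ≤ ((ℓ:ℝ)/2)⁻¹ :=
            inv_anti₀ (by positivity) hms
          have hid : ((ℓ:ℝ)/2)⁻¹ = 2/(ℓ:ℝ) := by field_simp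
          calc |b ℓ| * ((ℓ:ℝ) * Real.sin (t ℓ * L k j))⁻¹
              ≤ 1 * ((ℓ:ℝ)/2)⁻¹ := mul_le_mul (hb ℓ) hinv2 (by positivity) (by norm_num)
            _ = 2/(ℓ:ℝ) := by rw [one_mul, hid]
        refine ⟨hne, ?_, ?_⟩
        · rw [htoReal]
          have hk := key (fun _ => 1) (fun _ => by norm_num)
          simpa using hk
        · rw [htoReal]
          exact key _ (fun ℓ => Real.abs_cos_le_one _)
      · -- finite γ
        rcases ereal_cases (γ k j) hγ0 with hc | hc | ⟨y, hy0, hc⟩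
        · exact absurd (Or.inl hc) hinf
        · exact absurd (Or.inr hc) hinf
        have hPe : ¬ Pinf e := by simp only [hPinfdef]; rw [hγEe]; exact hinf
        have htr : (γ k j).toReal = y := by rw [hc]; exact EReal.toReal_coe y
        set Y : ℕ → ℝ := fun ℓ => max (-1) (min 1 (y / ((ℓ:ℝ)+1))) with hYdef
        have hθ : ∀ ℓ, θs ℓ e = Real.arcsin (Y ℓ) := by
          intro ℓ
          rw [hθsdef]
          simp only [if_neg hPe]
          rw [hγEe, htr, hYdef]
        have hsinθ : ∀ ℓ, Real.sin (θs ℓ e) = Y ℓ := by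
          intro ℓ
          rw [hθ ℓ, Real.sin_arcsin clamp_mem.1 clamp_mem.2]
        have hwe : w e = min 1 |y| := by
          rw [hwdef]
          simp only [if_neg hPe]
          rw [hγEe, htr]
        have hYlb : ∀ ℓ : ℕ, M / ((ℓ:ℝ)+1) ≤ |Y ℓ| := by
          intro ℓ
          have hl1 : (1:ℝ) ≤ (ℓ:ℝ)+1 := by linarith [Nat.cast_nonneg (α := ℝ) ℓ]
          have h1 : min 1 |y / ((ℓ:ℝ)+1)| ≤ |Y ℓ| := clamp_abs_ge _
          have h2 : M / ((ℓ:ℝ)+1) ≤ min 1 |y / ((ℓ:ℝ)+1)| := by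
            apply le_min
            · rw [div_le_one (by positivity : (0:ℝ) < (ℓ:ℝ)+1)]
              linarith
            · rw [abs_div, abs_of_pos (by positivity : (0:ℝ) < (ℓ:ℝ)+1)]
              have hMy : M ≤ |y| := by
                calc M ≤ w e := hMw e
                  _ = min 1 |y| := hwe
                  _ ≤ |y| := min_le_right _ _
              gcongr
          linarith
        have hslb : ∀ ℓ : ℕ, M / (2*((ℓ:ℝ)+1)) ≤ |Real.sin (t ℓ * L k j)| := by
          intro ℓ
          have h1 := (hclose ℓ).1
          rw [hsinθ ℓ] at h1
          have h2 := hYlb ℓ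
          have h3 : |Y ℓ| ≤ |Real.sin (t ℓ * L k j)| + εs ℓ := by
            have h4 := abs_sub_abs_le_abs_sub (Y ℓ) (Real.sin (t ℓ * L k j))
            rw [abs_sub_comm] at h1
            linarith
          have h4 : εs ℓ ≤ M / (2*((ℓ:ℝ)+1)) := by
            rw [hεsdef, div_le_div_iff₀ (by positivity) (by positivity)]
            have hl1 : (1:ℝ) ≤ (ℓ:ℝ)+1 := by linarith [Nat.cast_nonneg (α := ℝ) ℓ]
            nlinarith [hM0.le, mul_nonneg hM0.le
              (sub_nonneg.mpr (by nlinarith : ((ℓ:ℝ)+1) ≤ ((ℓ:ℝ)+1)^2))]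
          have h5 : M / ((ℓ:ℝ)+1) = 2 * (M / (2*((ℓ:ℝ)+1))) := by field_simp
          linarith
        have hne : ∀ ℓ : ℕ, Real.sin (t ℓ * L k j) ≠ 0 := by
          intro ℓ h
          have h6 := hslb ℓ
          rw [h, abs_zero] at h6
          have h7 : (0:ℝ) < M / (2*((ℓ:ℝ)+1)) := by positivity
          linarith
        have hls : Tendsto (fun ℓ : ℕ => (ℓ:ℝ) * Real.sin (t ℓ * L k j)) atTop (𝓝 y) := by
          rw [tendsto_iff_dist_tendsto_zero]
          apply squeeze_zero' (Filter.Eventually.of_forall fun ℓ => dist_nonneg)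
            (g := fun ℓ : ℕ => (|y| + 1)/((ℓ:ℝ)+1))
          · filter_upwards [eventually_ge_atTop (Nat.ceil |y|)] with ℓ hℓ
            rw [Real.dist_eq]
            have hl0 : (0:ℝ) < (ℓ:ℝ)+1 := by positivity
            have hyb : |y| ≤ (ℓ:ℝ)+1 := by
              have ha1 : |y| ≤ (⌈|y|⌉₊ : ℝ) := Nat.le_ceil _
              have ha2 : ((⌈|y|⌉₊ : ℕ) : ℝ) ≤ (ℓ:ℝ) := by exact_mod_cast hℓ
              linarith
            have hY : Y ℓ = y / ((ℓ:ℝ)+1) := by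
              simp only [hYdef]
              have hd : |y / ((ℓ:ℝ)+1)| ≤ 1 := by
                rw [abs_div, abs_of_pos hl0, div_le_one hl0]
                linarith
              rw [min_eq_right (abs_le.mp hd).2, max_eq_right (abs_le.mp hd).1]
            have hc1 := (hclose ℓ).1
            rw [hsinθ ℓ] at hc1
            have e1 : (ℓ:ℝ) * εs ℓ ≤ 1/((ℓ:ℝ)+1) := by
              rw [hεsdef, mul_div_assoc']
              rw [div_le_div_iff₀ (by positivity) hl0]
              nlinarith [Nat.cast_nonneg (α := ℝ) ℓ]
            have e2 : |(ℓ:ℝ) * Y ℓ - y| = |y|/((ℓ:ℝ)+1) := by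
              rw [hY]
              have he : (ℓ:ℝ) * (y/((ℓ:ℝ)+1)) - y = -(y/((ℓ:ℝ)+1)) := by
                field_simp
                ring
              rw [he, abs_neg, abs_div, abs_of_pos hl0]
            have e3 : |(ℓ:ℝ) * Real.sin (t ℓ * L k j) - (ℓ:ℝ) * Y ℓ| ≤ (ℓ:ℝ) * εs ℓ := by
              rw [← mul_sub, abs_mul, abs_of_nonneg (Nat.cast_nonneg ℓ)]
              exact mul_le_mul_of_nonneg_left hc1 (Nat.cast_nonneg ℓ)
            calc |(ℓ:ℝ) * Real.sin (t ℓ * L k j) - y|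
                ≤ |(ℓ:ℝ) * Real.sin (t ℓ * L k j) - (ℓ:ℝ) * Y ℓ| + |(ℓ:ℝ) * Y ℓ - y| :=
                  abs_sub_le _ _ _
              _ ≤ 1/((ℓ:ℝ)+1) + |y|/((ℓ:ℝ)+1) := by
                  rw [e2] at *
                  linarith [e1, e3]
              _ = (|y| + 1)/((ℓ:ℝ)+1) := by ring
          · exact Filter.Tendsto.const_div_atTop hnat1 _
        have hinv : Tendsto (fun ℓ : ℕ => ((ℓ:ℝ) * Real.sin (t ℓ * L k j))⁻¹) atTop (𝓝 y⁻¹) :=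
          hls.inv₀ hy0
        have hcost : Tendsto (fun ℓ : ℕ => Real.cos (t ℓ * L k j)) atTop (𝓝 1) := by
          rw [tendsto_iff_dist_tendsto_zero]
          apply squeeze_zero' (Filter.Eventually.of_forall fun ℓ => dist_nonneg)
            (g := fun ℓ : ℕ => (1 + y^2)/((ℓ:ℝ)+1))
          · apply Filter.Eventually.of_forall
            intro ℓ
            rw [Real.dist_eq]
            have hl0 : (0:ℝ) < (ℓ:ℝ)+1 := by positivity
            have hl1 : (1:ℝ) ≤ (ℓ:ℝ)+1 := by linarith [Nat.cast_nonneg (α := ℝ) ℓ]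
            have hY1 : |Y ℓ| ≤ |y|/((ℓ:ℝ)+1) := by
              calc |Y ℓ| ≤ |y/((ℓ:ℝ)+1)| := clamp_abs_le _
                _ = |y|/((ℓ:ℝ)+1) := by rw [abs_div, abs_of_pos hl0]
            have hY2 : (Y ℓ)^2 ≤ y^2/((ℓ:ℝ)+1) := by
              have h2 : (Y ℓ)^2 ≤ (|y|/((ℓ:ℝ)+1))^2 := by
                rw [← sq_abs (Y ℓ)]
                exact pow_le_pow_left₀ (abs_nonneg _) hY1 2
              have h3 : (|y|/((ℓ:ℝ)+1))^2 ≤ y^2/((ℓ:ℝ)+1) := by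
                rw [div_pow, sq_abs]
                apply div_le_div_of_nonneg_left (sq_nonneg y) hl0
                nlinarith
              linarith
            have hYle1 : (Y ℓ)^2 ≤ 1 := by
              rw [← sq_abs]
              apply pow_le_one₀ (abs_nonneg _)
              exact abs_le.mpr ⟨clamp_mem.1, clamp_mem.2⟩
            have hcarc : Real.cos (θs ℓ e) = Real.sqrt (1 - (Y ℓ)^2) := by
              rw [hθ ℓ, Real.cos_arcsin]
            have hub2 : Real.cos (θs ℓ e) ≤ 1 := by
              rw [hcarc]
              exact Real.sqrt_le_one.mpr (by nlinarith [sq_nonneg (Y ℓ)])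
            have hlb2 : 1 - (Y ℓ)^2 ≤ Real.cos (θs ℓ e) := by
              rw [hcarc]
              have h0 : 0 ≤ 1 - (Y ℓ)^2 := by linarith
              calc 1 - (Y ℓ)^2 = Real.sqrt ((1 - (Y ℓ)^2)^2) := (Real.sqrt_sq h0).symm
                _ ≤ Real.sqrt (1 - (Y ℓ)^2) := Real.sqrt_le_sqrt (by nlinarith)
            have hcc := abs_le.mp (hclose ℓ).2
            have hεb : εs ℓ ≤ 1/((ℓ:ℝ)+1) := by
              rw [hεsdef, div_le_div_iff₀ (by positivity) hl0]
              nlinarith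
            have hsplit2 : (1 + y^2)/((ℓ:ℝ)+1) = 1/((ℓ:ℝ)+1) + y^2/((ℓ:ℝ)+1) := by ring
            rw [abs_le]
            constructor
            · rw [hsplit2]
              linarith [hcc.1]
            · have hy2p : (0:ℝ) ≤ y^2/((ℓ:ℝ)+1) := by positivity
              rw [hsplit2]
              linarith [hcc.2]
          · exact Filter.Tendsto.const_div_atTop hnat1 _
        have hmul := hcost.mul hinv
        rw [one_mul] at hmul
        rw [htr]
        exact ⟨hne, hinv, hmul⟩
    -- assemble
    have htpos : ∀ ℓ, (0:ℝ) < t ℓ := fun ℓ => lt_of_lt_of_le one_pos (ht1 ℓ)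
    have hsqrt : ∀ ℓ, Real.sqrt ((t ℓ)^2) = t ℓ := fun ℓ => Real.sqrt_sq (htpos ℓ).le
    refine ⟨fun ℓ => (t ℓ)^2, fun ℓ => pow_pos (htpos ℓ) 2, ?_, ?_, ?_⟩
    · apply tendsto_atTop_mono _ tendsto_natCast_atTop_atTop
      intro ℓ
      nlinarith [ht ℓ, ht1 ℓ, Nat.cast_nonneg (α := ℝ) ℓ]
    · intro ℓ k j hA
      rw [hsqrt ℓ]
      exact (core k j hA).1 ℓ
    · intro k j
      by_cases hkj : k = j
      · subst hkj
        have hfun : ∀ ℓ : ℕ, (1 / ((ℓ:ℝ) * Real.sqrt ((t ℓ)^2))) * DtN G L ((t ℓ)^2) k k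
            = ∑ l, (if G.Adj k l then
                Real.cos (t ℓ * L k l) * ((ℓ:ℝ) * Real.sin (t ℓ * L k l))⁻¹ else 0) := by
          intro ℓ
          rw [hsqrt]
          simp only [DtN, eq_self_iff_true, if_true]
          rw [Finset.mul_sum]
          refine Finset.sum_congr rfl (fun l _ => ?_)
          by_cases hAl : G.Adj k l
          · rw [if_pos hAl, if_pos hAl, alphaFn, if_pos (pow_pos (htpos ℓ) 2), hsqrt]
            have hs := (core k l hAl).1 ℓ
            have htne : t ℓ ≠ 0 := (htpos ℓ).ne'
            rcases Nat.eq_zero_or_pos ℓ with h0 | hpos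
            · subst h0
              norm_num
            · have hℓne : ((ℓ:ℝ)) ≠ 0 := by positivity
              field_simp
          · rw [if_neg hAl, if_neg hAl, mul_zero]
        have hQ : Qmat G γ k k = ∑ l, (if G.Adj k l then ((γ k l).toReal)⁻¹ else 0) := by
          simp only [Qmat, eq_self_iff_true, if_true]
        rw [hQ]
        apply Tendsto.congr (fun ℓ => (hfun ℓ).symm)
        apply tendsto_finset_sum
        intro l _
        by_cases hAl : G.Adj k l
        · simp only [if_pos hAl]
          exact (core k l hAl).2.2
        · simp only [if_neg hAl]
          exact tendsto_const_nhds
      · by_cases hA : G.Adj k j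
        · have hfun : ∀ ℓ : ℕ, (1 / ((ℓ:ℝ) * Real.sqrt ((t ℓ)^2))) * DtN G L ((t ℓ)^2) k j
              = -(((ℓ:ℝ) * Real.sin (t ℓ * L k j))⁻¹) := by
            intro ℓ
            rw [hsqrt]
            simp only [DtN, if_neg hkj, if_pos hA]
            rw [betaFn, if_pos (pow_pos (htpos ℓ) 2), hsqrt]
            have hs := (core k j hA).1 ℓ
            have htne : t ℓ ≠ 0 := (htpos ℓ).ne'
            rcases Nat.eq_zero_or_pos ℓ with h0 | hpos
            · subst h0
              norm_num
            · have hℓne : ((ℓ:ℝ)) ≠ 0 := by positivity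
              field_simp
          have hQ : Qmat G γ k j = -(((γ k j).toReal)⁻¹) := by
            simp only [Qmat, if_neg hkj, if_pos hA]
          rw [hQ]
          apply Tendsto.congr (fun ℓ => (hfun ℓ).symm)
          exact (core k j hA).2.1.neg
        · have hfun : ∀ ℓ : ℕ, (1 / ((ℓ:ℝ) * Real.sqrt ((t ℓ)^2))) * DtN G L ((t ℓ)^2) k j
              = 0 := by
            intro ℓ
            simp only [DtN, if_neg hkj, if_neg hA, mul_zero]
          have hQ : Qmat G γ k j = 0 := by
            simp only [Qmat, if_neg hkj, if_neg hA]
          rw [hQ]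
          apply Tendsto.congr (fun ℓ => (hfun ℓ).symm)
          exact tendsto_const_nhds
  · -- the Laplacian identification
    intro h1 k j
    by_cases hkj : k = j
    · subst hkj
      have hQ : Qmat G γ k k = ∑ l, (if G.Adj k l then ((γ k l).toReal)⁻¹ else 0) := by
        simp only [Qmat, eq_self_iff_true, if_true]
      have hsum : ∑ l, (if G.Adj k l then ((γ k l).toReal)⁻¹ else 0)
          = ∑ l, (if G.Adj k l then (1:ℝ) else 0) := by
        refine Finset.sum_congr rfl (fun l _ => ?_)
        by_cases hAl : G.Adj k l
        · rw [if_pos hAl, if_pos hAl, h1 k l hAl, EReal.toReal_one, inv_one]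
        · rw [if_neg hAl, if_neg hAl]
      have hdeg : ∑ l, (if G.Adj k l then (1:ℝ) else 0) = (G.degree k : ℝ) := by
        rw [Finset.sum_boole]
        congr 1
        rw [SimpleGraph.degree, SimpleGraph.neighborFinset_eq_filter]
      rw [hQ, hsum, hdeg]
      simp [SimpleGraph.irrefl]
    · by_cases hA : G.Adj k j
      · have hQ : Qmat G γ k j = -(((γ k j).toReal)⁻¹) := by
          simp only [Qmat, if_neg hkj, if_pos hA]
        rw [hQ, h1 k j hA, EReal.toReal_one, inv_one]
        simp [hA, hkj]
      · have hQ : Qmat G γ k j = 0 := by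
          simp only [Qmat, if_neg hkj, if_neg hA]
        rw [hQ]
        simp [hA, hkj]
end

section
/- Let G = (V,E) be a finite connected simple graph on the vertex set {1,…,n}, partitioned into V₀ = {1,…,m} (with 1 ≤ m < n) and V₁ = {m+1,…,n}. Let Q ∈ ℂ^{n×n} belong to the class A(G) and have the block form Q = [[A, Bᵀ],[B, C]], where A ∈ ℂ^{m×m} corresponds to the rows and columns indexed by V₀, C ∈ ℂ^{(n−m)×(n−m)} to those indexed by V₁, and B ∈ ℂ^{(n−m)×m}. If C is invertible, then the Schur complement M := A + Bᵀ(−C)⁻¹B belongs to the class A(G₀); that is, M_{rs} = 0 for all distinct r,s ∈ V₀ that are not adjacent in the reduced graph G₀. -/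
open Matrix

def patternAlg {p : ℕ} (U : Set (Fin p)) : Subalgebra ℂ (Matrix (Fin p) (Fin p) ℂ) where
  carrier := {X | ∀ i ∈ U, ∀ j, j ∉ U → X i j = 0}
  mul_mem' := by
    intro X Y hX hY i hi j hj
    rw [Matrix.mul_apply]
    apply Finset.sum_eq_zero
    intro k _
    by_cases hk : k ∈ U
    · rw [hY k hk j hj, mul_zero]
    · rw [hX i hi k hk, zero_mul]
  add_mem' := by
    intro X Y hX hY i hi j hj
    simp only [Matrix.add_apply, hX i hi j hj, hY i hi j hj, add_zero]
  algebraMap_mem' := by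
    intro c i hi j hj
    have hij : i ≠ j := by rintro rfl; exact hj hi
    simp [Matrix.algebraMap_matrix_apply, hij]

lemma inv_pattern {p : ℕ} (U : Set (Fin p)) (C : Matrix (Fin p) (Fin p) ℂ)
    (hC : IsUnit C) (h : ∀ i ∈ U, ∀ j, j ∉ U → C i j = 0) :
    ∀ i ∈ U, ∀ j, j ∉ U → C⁻¹ i j = 0 := by
  set S := patternAlg U with hS
  have hCS : C ∈ S := h
  let f : S →ₗ[ℂ] S :=
    { toFun := fun x => ⟨C * x, S.mul_mem hCS x.2⟩
      map_add' := by intro x y; ext : 1; simp [mul_add]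
      map_smul' := by intro c x; ext : 1; simp [Matrix.mul_smul] }
  have hinj : Function.Injective f := by
    intro x y hxy
    have h2 : C * (x : Matrix (Fin p) (Fin p) ℂ) = C * y := congrArg Subtype.val hxy
    exact Subtype.ext (hC.mul_left_cancel h2)
  have hsurj := (LinearMap.injective_iff_surjective (f := f)).mp hinj
  obtain ⟨x, hx⟩ := hsurj ⟨1, fun i hi j hj => Matrix.one_apply_ne (by rintro rfl; exact hj hi)⟩
  have hx1 : C * (x : Matrix (Fin p) (Fin p) ℂ) = 1 := congrArg Subtype.val hx
  have hinv : C⁻¹ = x := Matrix.inv_eq_right_inv hx1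
  intro i hi j hj
  rw [hinv]; exact x.2 i hi j hj

/-- `r` and `s` in `V₀ = Fin m` are connected by a path in `G` all of whose intermediate
vertices lie in `V₁ = Fin p`. -/
def ConnThroughInner {m p : ℕ} (G : SimpleGraph (Fin m ⊕ Fin p)) (r s : Fin m) : Prop :=
  ∃ w : G.Walk (Sum.inl r) (Sum.inl s), w.IsPath ∧
    ∀ v ∈ w.support, v ≠ Sum.inl r → v ≠ Sum.inl s → ∃ i : Fin p, v = Sum.inr i

/-- Adjacency in the reduced graph `G₀` on `V₀ = Fin m`: distinct `r, s` are adjacent iff they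
are adjacent in `G` or connected by a path through `V₁`. -/
def ReducedAdj {m p : ℕ} (G : SimpleGraph (Fin m ⊕ Fin p)) (r s : Fin m) : Prop :=
  r ≠ s ∧ (G.Adj (Sum.inl r) (Sum.inl s) ∨ ConnThroughInner G r s)

/-- Let `G` be a finite connected simple graph on `V₀ ⊕ V₁` and let
`Q ∈ ℂ^{n×n}` belong to the class `A(G)`, written in block form `[[A, Bᵀ],[B, C]]`.  If `C` is
invertible, then the Schur complement `M = A + Bᵀ(−C)⁻¹B` belongs to the class `A(G₀)` of the
reduced graph: `M_{rs} = 0` for distinct `r, s ∈ V₀` that are not adjacent in `G₀`. -/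
theorem schur_complement_in_reduced_class {m p : ℕ} (hm : 1 ≤ m) (hp : 1 ≤ p)
    (G : SimpleGraph (Fin m ⊕ Fin p)) (hconn : G.Connected)
    (Q : Matrix (Fin m ⊕ Fin p) (Fin m ⊕ Fin p) ℂ)
    (hQ : ∀ k j, k ≠ j → ¬ G.Adj k j → Q k j = 0)
    (hsym : Q.toBlocks₁₂ = (Q.toBlocks₂₁)ᵀ)
    (hC : IsUnit Q.toBlocks₂₂) :
    ∀ r s : Fin m, r ≠ s → ¬ ReducedAdj G r s →
      (Q.toBlocks₁₁ + (Q.toBlocks₂₁)ᵀ * (-Q.toBlocks₂₂)⁻¹ * Q.toBlocks₂₁) r s = 0 := by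
  classical
  intro r s hrs hred
  have hnadj : ¬ G.Adj (Sum.inl r) (Sum.inl s) := fun h => hred ⟨hrs, Or.inl h⟩
  have hnconn : ¬ ConnThroughInner G r s := fun h => hred ⟨hrs, Or.inr h⟩
  set U : Set (Fin p) := {i | ∃ w : G.Walk (Sum.inl r) (Sum.inr i),
      ∀ v ∈ w.support, v ≠ Sum.inl r → ∃ k, v = Sum.inr k} with hU
  -- B entries nonzero at column r force membership in U
  have hBU : ∀ i, i ∉ U → Q.toBlocks₂₁ i r = 0 := by
    intro i hi
    by_contra hne
    have hadj : G.Adj (Sum.inr i) (Sum.inl r) := by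
      by_contra hna
      exact hne (hQ _ _ (by simp) hna)
    refine hi ⟨SimpleGraph.Walk.cons hadj.symm SimpleGraph.Walk.nil, ?_⟩
    intro v hv hvr
    simp only [SimpleGraph.Walk.support_cons, SimpleGraph.Walk.support_nil,
      List.mem_cons, List.mem_singleton] at hv
    rcases hv with rfl | hv
    · exact absurd rfl hvr
    · rcases hv with rfl | h
      · exact ⟨i, rfl⟩
      · simp at h
  -- C pattern
  have hCU : ∀ i ∈ U, ∀ j, j ∉ U → Q.toBlocks₂₂ i j = 0 := by
    intro i hi j hj
    by_contra hne
    have hij : i ≠ j := by rintro rfl; exact hj hi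
    have hadj : G.Adj (Sum.inr i) (Sum.inr j) := by
      by_contra hna
      exact hne (hQ _ _ (by simp [hij]) hna)
    obtain ⟨w, hw⟩ := hi
    refine hj ⟨w.concat hadj, ?_⟩
    intro v hv hvr
    rw [SimpleGraph.Walk.support_concat, List.mem_append] at hv
    rcases hv with hv | hv
    · exact hw v hv hvr
    · exact ⟨j, List.mem_singleton.mp hv⟩
  -- B entries at column s vanish on U
  have hBs : ∀ j ∈ U, Q.toBlocks₂₁ j s = 0 := by
    intro j hj
    by_contra hne
    have hadj : G.Adj (Sum.inr j) (Sum.inl s) := by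
      by_contra hna
      exact hne (hQ _ _ (by simp) hna)
    obtain ⟨w, hw⟩ := hj
    apply hnconn
    refine ⟨(w.concat hadj).bypass, SimpleGraph.Walk.bypass_isPath _, ?_⟩
    intro v hv hvr hvs
    have hv' := SimpleGraph.Walk.support_bypass_subset _ hv
    rw [SimpleGraph.Walk.support_concat, List.mem_append] at hv'
    rcases hv' with hv' | hv'
    · exact hw v hv' hvr
    · exact absurd (List.mem_singleton.mp hv') hvs
  have hNC : IsUnit (-Q.toBlocks₂₂) := hC.neg
  have hNinv := inv_pattern U (-Q.toBlocks₂₂) hNC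
    (by intro i hi j hj; simp [hCU i hi j hj])
  have hA : Q.toBlocks₁₁ r s = 0 := by
    have : Q (Sum.inl r) (Sum.inl s) = 0 := hQ _ _ (by simp [hrs]) hnadj
    simpa [Matrix.toBlocks₁₁] using this
  rw [Matrix.add_apply, hA, zero_add, Matrix.mul_apply]
  apply Finset.sum_eq_zero
  intro j _
  rcases Classical.em (j ∈ U) with hj | hj
  · rw [hBs j hj, mul_zero]
  · rw [Matrix.mul_apply]
    have : ∀ i ∈ Finset.univ, (Q.toBlocks₂₁)ᵀ r i * (-Q.toBlocks₂₂)⁻¹ i j = 0 := by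
      intro i _
      rcases Classical.em (i ∈ U) with hi | hi
      · rw [hNinv i hi j hj, mul_zero]
      · rw [Matrix.transpose_apply, hBU i hi, zero_mul]
    rw [Finset.sum_eq_zero this, zero_mul]
end

section
/- Let G = (V,E) be a finite connected simple graph on the vertex set {1,…,n}, partitioned into V₀ = {1,…,m} (with 1 ≤ m < n) and V₁ = {m+1,…,n}. Let Q ∈ ℝ^{n×n} belong to the class A(G) and have the block form Q = [[A, Bᵀ],[B, C]] with A ∈ ℝ^{m×m} corresponding to V₀ and C ∈ ℝ^{(n−m)×(n−m)} corresponding to V₁. Assume that Q_{kj} > 0 for every edge (k,j) ∈ E with k ≠ j, and that the spectral bound of C satisfies spb(C) < 0. Then C is invertible, the Schur complement M := A + Bᵀ(−C)⁻¹B exists, and M_{rs} > 0 for every pair of distinct r,s ∈ V₀ that are adjacent in the reduced graph G₀. -/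
open Matrix Filter Topology

attribute [local instance] Matrix.linftyOpNormedRing Matrix.linftyOpNormedAlgebra

lemma entry_norm_le_linfty {p : ℕ} (M : Matrix (Fin p) (Fin p) ℂ) (a b : Fin p) :
    ‖M a b‖ ≤ ‖M‖ := by
  have h1 : ‖M a b‖₊ ≤ ‖M‖₊ := by
    rw [Matrix.linfty_opNNNorm_def]
    exact le_trans (Finset.single_le_sum (f := fun j => ‖M a j‖₊) (fun _ _ => zero_le)
      (Finset.mem_univ b)) (Finset.le_sup (f := fun i => ∑ j, ‖M i j‖₊) (Finset.mem_univ a))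
  exact h1

lemma key_metzler {p : ℕ} (C : Matrix (Fin p) (Fin p) ℝ)
    (hoff : ∀ i j, i ≠ j → 0 ≤ C i j)
    (hspec : ∀ z ∈ spectrum ℂ (C.map Complex.ofReal), z.re < 0) :
    IsUnit C ∧ ∃ α : ℝ, 0 < α ∧ (∀ i, 0 < α + C i i) ∧
      ∀ (k : ℕ) (i j : Fin p),
        (α ^ (k+1))⁻¹ * (((α • (1 : Matrix (Fin p) (Fin p) ℝ) + C) ^ k) i j) ≤ (-C)⁻¹ i j := by
  set Cc : Matrix (Fin p) (Fin p) ℂ := C.map Complex.ofReal with hCc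
  -- invertibility
  have h0 : (0:ℂ) ∉ spectrum ℂ Cc := fun h => absurd (hspec 0 h) (by simp)
  have hCcu : IsUnit Cc := (spectrum.zero_notMem_iff ℂ).mp h0
  have hCdet : C.det ≠ 0 := by
    intro hd
    have : Cc.det = 0 := by
      have : C.map Complex.ofReal = Complex.ofRealHom.mapMatrix C := rfl
      rw [hCc, this, ← RingHom.map_det, hd]; simp
    exact (Matrix.isUnit_iff_isUnit_det Cc).mp hCcu |>.ne_zero this
  have hCu : IsUnit C := (Matrix.isUnit_iff_isUnit_det C).mpr (isUnit_iff_ne_zero.mpr hCdet)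
  refine ⟨hCu, ?_⟩
  classical
  -- choose α large
  have hfin := Matrix.finite_spectrum Cc
  set F : Finset ℝ := insert 0 ((hfin.toFinset.image fun z => ‖z‖^2 / (-(2 * z.re))) ∪
      (Finset.univ.image fun j : Fin p => -C j j)) with hFdef
  have hF0 : (0:ℝ) ∈ F := Finset.mem_insert_self _ _
  set α : ℝ := 1 + F.max' ⟨0, hF0⟩ with hαdef
  have hFlt : ∀ x ∈ F, x < α := by
    intro x hx
    have := F.le_max' x hx
    rw [hαdef]; linarith
  have hα0 : 0 < α := hFlt 0 hF0
  have hdiag : ∀ i, 0 < α + C i i := by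
    intro i
    have : -C i i ∈ F := by
      refine Finset.mem_insert_of_mem (Finset.mem_union_right _ ?_)
      exact Finset.mem_image_of_mem _ (Finset.mem_univ i)
    have := hFlt _ this
    linarith
  have hspecα : ∀ z ∈ spectrum ℂ Cc, ‖(α:ℂ) + z‖ < α := by
    intro z hz
    have hre : z.re < 0 := hspec z hz
    have hmem : ‖z‖^2 / (-(2 * z.re)) ∈ F := by
      refine Finset.mem_insert_of_mem (Finset.mem_union_left _ ?_)
      exact Finset.mem_image_of_mem _ (hfin.mem_toFinset.mpr hz)
    have hlt := hFlt _ hmem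
    have hden : 0 < -(2 * z.re) := by linarith
    have hnum : ‖z‖^2 < α * (-(2 * z.re)) := by
      rw [div_lt_iff₀ hden] at hlt; linarith [hlt]
    have h1 : ‖(α:ℂ) + z‖^2 = (α + z.re)^2 + z.im^2 := by
      rw [Complex.sq_norm]
      simp [Complex.normSq_apply, Complex.add_re, Complex.add_im]
      ring
    have h2 : ‖z‖^2 = z.re^2 + z.im^2 := by
      rw [Complex.sq_norm]
      simp [Complex.normSq_apply]
      ring
    have hsq : ‖(α:ℂ) + z‖^2 < α^2 := by
      rw [h1]; rw [h2] at hnum; nlinarith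
    exact lt_of_pow_lt_pow_left₀ 2 hα0.le hsq
  refine ⟨α, hα0, hdiag, ?_⟩
  set N : Matrix (Fin p) (Fin p) ℝ := α • (1 : Matrix (Fin p) (Fin p) ℝ) + C with hNdef
  set Nc : Matrix (Fin p) (Fin p) ℂ := N.map Complex.ofReal with hNcdef
  have hNcalg : Nc = algebraMap ℂ (Matrix (Fin p) (Fin p) ℂ) (α:ℂ) + Cc := by
    ext i j
    simp [hNcdef, hNdef, hCc, Matrix.map_apply, Matrix.add_apply, Matrix.smul_apply,
      Matrix.one_apply, Matrix.algebraMap_matrix_apply]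
    split_ifs <;> simp
  -- all eigenvalues of Nc have norm < α
  have hspecNc : ∀ μ ∈ spectrum ℂ Nc, ‖μ‖ < α := by
    intro μ hμ
    have : μ - α + α ∈ spectrum ℂ Nc := by simpa using hμ
    rw [hNcalg] at this
    have hz : (μ - α) ∈ spectrum ℂ Cc := by
      have h2 := spectrum.add_mem_iff.mp this
      simpa [neg_add_cancel_left] using h2
    have := hspecα _ hz
    simpa using this
  -- strict bound β on spectral radius
  have hfinN := Matrix.finite_spectrum Nc
  have hne : α/2 ∈ insert (α/2) (hfinN.toFinset.image fun z => ‖z‖) := Finset.mem_insert_self _ _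
  set β : ℝ := (insert (α/2) (hfinN.toFinset.image fun z => ‖z‖)).max' ⟨_, hne⟩ with hβdef
  have hβα : β < α := by
    have hβmem := (insert (α/2) (hfinN.toFinset.image fun z => ‖z‖)).max'_mem ⟨_, hne⟩
    rw [← hβdef] at hβmem
    rcases Finset.mem_insert.mp hβmem with h | h
    · rw [h]; linarith
    · obtain ⟨z, hz, hzeq⟩ := Finset.mem_image.mp h
      rw [← hzeq]
      exact hspecNc z (hfinN.mem_toFinset.mp hz)
  have hβhalf : α/2 ≤ β := Finset.le_max' _ _ hne
  have hβ0 : 0 < β := by linarith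
  have hρβ : spectralRadius ℂ Nc ≤ ENNReal.ofReal β := by
    rw [spectralRadius]
    apply iSup₂_le
    intro z hz
    have h1 : ‖z‖ ≤ β := Finset.le_max' _ _
      (Finset.mem_insert_of_mem (Finset.mem_image_of_mem _ (hfinN.mem_toFinset.mpr hz)))
    rw [← enorm_eq_nnnorm, ← ofReal_norm]
    exact ENNReal.ofReal_le_ofReal h1
  set θ : ℝ := (β + α)/2 with hθdef
  have hβθ : β < θ := by rw [hθdef]; linarith
  have hθα : θ < α := by rw [hθdef]; linarith
  have hθ0 : 0 < θ := by linarith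
  clear_value θ β α F
  clear hFdef hαdef hβdef hθdef hF0 hne hβhalf
  -- Gelfand's formula gives an eventual norm bound
  have hg := spectrum.pow_norm_pow_one_div_tendsto_nhds_spectralRadius Nc
  have hlt : ∀ᶠ (n : ℕ) in atTop, ENNReal.ofReal (‖Nc ^ n‖ ^ (1/(n:ℝ))) < ENNReal.ofReal θ :=
    hg.eventually_lt_const (lt_of_le_of_lt hρβ ((ENNReal.ofReal_lt_ofReal_iff hθ0).mpr hβθ))
  have hNbound : ∀ᶠ K in atTop, ‖Nc ^ K‖ ≤ θ ^ K := by
    filter_upwards [hlt, eventually_ge_atTop 1] with K hK hK1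
    have hKne : (K:ℝ) ≠ 0 := Nat.cast_ne_zero.mpr (by omega)
    have hx0 : (0:ℝ) ≤ ‖Nc ^ K‖ := norm_nonneg _
    have hθK : ‖Nc ^ K‖ ^ (1/(K:ℝ)) < θ := by
      have h2 := (ENNReal.ofReal_lt_ofReal_iff hθ0).mp hK
      exact h2
    have h3 : (‖Nc ^ K‖ ^ (1/(K:ℝ))) ^ (K:ℝ) < θ ^ (K:ℝ) :=
      Real.rpow_lt_rpow (Real.rpow_nonneg hx0 _) hθK (Nat.cast_pos.mpr (by omega))
    have h4 : (‖Nc ^ K‖ ^ (1/(K:ℝ))) ^ (K:ℝ) = ‖Nc ^ K‖ := by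
      rw [← Real.rpow_mul hx0, one_div, inv_mul_cancel₀ hKne, Real.rpow_one]
    rw [h4, Real.rpow_natCast] at h3
    exact h3.le
  -- invertibility of -C and telescoping identity
  have hDu : IsUnit (-C) := hCu.neg
  have hDdet : IsUnit (-C).det := (Matrix.isUnit_iff_isUnit_det _).mp hDu
  have hD : (-C) = α • (1 : Matrix (Fin p) (Fin p) ℝ) - N := by rw [hNdef]; module
  have hTS : ∀ K : ℕ, (-C) * (∑ k ∈ Finset.range K, (α^(k+1))⁻¹ • N^k)
      = 1 - (α^K)⁻¹ • N^K := by
    intro K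
    induction K with
    | zero => simp
    | succ K ih =>
      rw [Finset.sum_range_succ, mul_add, ih]
      have e1 : (-C) * ((α^(K+1))⁻¹ • N^K) = (α^K)⁻¹ • N^K - (α^(K+1))⁻¹ • N^(K+1) := by
        rw [hD, Matrix.mul_smul, sub_mul, Matrix.smul_mul, one_mul, ← pow_succ', smul_sub,
          smul_smul]
        congr 2
        rw [pow_succ, mul_inv, mul_assoc, inv_mul_cancel₀ hα0.ne', mul_one]
      rw [e1]
      abel
  have hSid : ∀ K : ℕ, (∑ k ∈ Finset.range K, (α^(k+1))⁻¹ • N^k)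
      = (-C)⁻¹ - (α^K)⁻¹ • ((-C)⁻¹ * N^K) := by
    intro K
    have h := congrArg (fun M => (-C)⁻¹ * M) (hTS K)
    rw [← Matrix.mul_assoc, Matrix.nonsing_inv_mul _ hDdet, one_mul, Matrix.mul_sub,
      Matrix.mul_one, Matrix.mul_smul] at h
    exact h
  -- entrywise nonnegativity of powers of N
  have hNnn : ∀ a b, 0 ≤ N a b := by
    intro a b
    by_cases h : a = b
    · subst h
      have := hdiag a
      simp [hNdef, Matrix.add_apply, Matrix.smul_apply, Matrix.one_apply]
      linarith
    · have := hoff a b h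
      simp [hNdef, Matrix.add_apply, Matrix.smul_apply, Matrix.one_apply_ne h]
      linarith
  have hNpow : ∀ (k : ℕ) (a b : Fin p), 0 ≤ (N^k) a b := by
    intro k
    induction k with
    | zero => intro a b; by_cases h : a = b <;> simp [pow_zero, Matrix.one_apply, h]
    | succ k ih =>
      intro a b
      rw [pow_succ, Matrix.mul_apply]
      exact Finset.sum_nonneg fun l _ => mul_nonneg (ih a l) (hNnn l b)
  have hmap : ∀ K : ℕ, Nc ^ K = (N ^ K).map Complex.ofReal := by
    intro K
    have : Nc = Complex.ofRealHom.mapMatrix N := rfl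
    rw [this, ← map_pow]
    rfl
  -- the final bound
  intro k i j
  have hterm : Tendsto (fun K : ℕ => (α^K)⁻¹ * (((-C)⁻¹ * N^K) i j)) atTop (𝓝 0) := by
    set c : ℝ := ∑ l, |(-C)⁻¹ i l| with hc
    have hc0 : 0 ≤ c := Finset.sum_nonneg fun l _ => abs_nonneg _
    apply squeeze_zero_norm' (a := fun K => c * (θ/α)^K)
    · filter_upwards [hNbound] with K hK
      have h1 : |((-C)⁻¹ * N^K) i j| ≤ c * θ^K := by
        rw [Matrix.mul_apply]
        calc |∑ l, (-C)⁻¹ i l * (N^K) l j| ≤ ∑ l, |(-C)⁻¹ i l * (N^K) l j| :=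
              Finset.abs_sum_le_sum_abs _ _
          _ ≤ ∑ l, |(-C)⁻¹ i l| * θ^K := by
              refine Finset.sum_le_sum fun l _ => ?_
              rw [abs_mul]
              refine mul_le_mul_of_nonneg_left ?_ (abs_nonneg _)
              have h2 : |(N^K) l j| = ‖(Nc ^ K) l j‖ := by
                rw [hmap K, Matrix.map_apply, Complex.norm_real, Real.norm_eq_abs]
              rw [h2]
              exact le_trans (entry_norm_le_linfty _ _ _) hK
          _ = c * θ^K := by rw [← Finset.sum_mul]
      have h5 : ‖(α^K)⁻¹ * (((-C)⁻¹ * N^K) i j)‖ = (α^K)⁻¹ * |((-C)⁻¹ * N^K) i j| := by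
        rw [Real.norm_eq_abs, abs_mul, abs_of_pos (inv_pos.mpr (pow_pos hα0 K))]
      rw [h5]
      calc (α^K)⁻¹ * |((-C)⁻¹ * N^K) i j| ≤ (α^K)⁻¹ * (c * θ^K) := by
            exact mul_le_mul_of_nonneg_left h1 (inv_nonneg.mpr (pow_nonneg hα0.le K))
        _ = c * (θ/α)^K := by rw [div_pow]; ring
    · have := (tendsto_pow_atTop_nhds_zero_of_lt_one (div_nonneg hθ0.le hα0.le)
        (by rw [div_lt_one hα0]; exact hθα)).const_mul c
      simpa using this
  have hentry : ∀ K : ℕ, (∑ l ∈ Finset.range K, (α^(l+1))⁻¹ * ((N^l) i j))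
      = (-C)⁻¹ i j - (α^K)⁻¹ * (((-C)⁻¹ * N^K) i j) := by
    intro K
    have h := congrArg (fun M => M i j) (hSid K)
    simp only [Matrix.sub_apply, Matrix.smul_apply, smul_eq_mul] at h
    simp only [Matrix.sum_apply, Matrix.sub_apply, Matrix.smul_apply, smul_eq_mul] at h
    exact h
  have hlim : Tendsto (fun K : ℕ => ∑ l ∈ Finset.range K, (α^(l+1))⁻¹ * ((N^l) i j))
      atTop (𝓝 ((-C)⁻¹ i j)) := by
    simp only [hentry]
    simpa using tendsto_const_nhds.sub hterm
  refine ge_of_tendsto hlim ?_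
  filter_upwards [eventually_ge_atTop (k+1)] with K hK
  exact Finset.single_le_sum (f := fun l => (α^(l+1))⁻¹ * ((N^l) i j))
    (fun l _ => mul_nonneg (inv_nonneg.mpr (pow_nonneg hα0.le _)) (hNpow l i j)) (Finset.mem_range.mpr (by omega))


lemma pow_entry_nonneg {p : ℕ} (N : Matrix (Fin p) (Fin p) ℝ) (hNn : ∀ a b, 0 ≤ N a b) :
    ∀ (k : ℕ) (a b : Fin p), 0 ≤ (N ^ k) a b := by
  intro k
  induction k with
  | zero => intro a b; by_cases h : a = b <;> simp [Matrix.one_apply, h]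
  | succ k ih =>
    intro a b
    rw [pow_succ, Matrix.mul_apply]
    exact Finset.sum_nonneg fun l _ => mul_nonneg (ih a l) (hNn l b)

lemma walk_aux {m p : ℕ} (G : SimpleGraph (Fin m ⊕ Fin p)) (N : Matrix (Fin p) (Fin p) ℝ)
    (hNn : ∀ a b, 0 ≤ N a b)
    (hNadj : ∀ a b, G.Adj (Sum.inr a) (Sum.inr b) → 0 < N a b) (s : Fin m) :
    ∀ (u t : Fin m ⊕ Fin p) (w : G.Walk u t), t = Sum.inl s →
      (∀ v ∈ w.support, v ≠ Sum.inl s → ∃ a : Fin p, v = Sum.inr a) →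
      ∀ i : Fin p, u = Sum.inr i →
      ∃ (k : ℕ) (j : Fin p), 0 < (N ^ k) i j ∧ G.Adj (Sum.inr j) (Sum.inl s) := by
  intro u t w
  induction w with
  | nil => rintro rfl _ i hi; exact absurd hi (by simp)
  | @cons u v _ h w ih =>
    rintro rfl hsupp i hu
    subst hu
    by_cases hvs : v = Sum.inl s
    · subst hvs
      exact ⟨0, i, by simp [Matrix.one_apply], h⟩
    · have hv : ∃ a, v = Sum.inr a := by
        refine hsupp v ?_ hvs
        rw [SimpleGraph.Walk.support_cons]
        exact List.mem_cons_of_mem _ w.start_mem_support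
      obtain ⟨a, rfl⟩ := hv
      have hsupp' : ∀ v' ∈ w.support, v' ≠ Sum.inl s → ∃ b : Fin p, v' = Sum.inr b := by
        intro v' hv' hvs'
        refine hsupp v' ?_ hvs'
        rw [SimpleGraph.Walk.support_cons]
        exact List.mem_cons_of_mem _ hv'
      obtain ⟨k, j, hkpos, hjadj⟩ := ih rfl hsupp' a rfl
      refine ⟨k + 1, j, ?_, hjadj⟩
      rw [pow_succ', Matrix.mul_apply]
      have h1 : 0 < N i a * (N ^ k) a j := mul_pos (hNadj _ _ h) hkpos
      refine Finset.sum_pos' (fun l _ => mul_nonneg (hNn i l) (pow_entry_nonneg N hNn k l j))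
        ⟨a, Finset.mem_univ a, h1⟩



/-- Let `G` be a finite connected simple graph on `V₀ ⊕ V₁`, and let
`Q ∈ ℝ^{n×n}` be in the class `A(G)` with block form `[[A, Bᵀ],[B, C]]`.  If `Q_{kj} > 0` on
all edges and the spectral bound of `C` is negative (all complex eigenvalues of `C` have
negative real part), then `C` is invertible and the Schur complement `M = A + Bᵀ(−C)⁻¹B`
satisfies `M_{rs} > 0` for all distinct `r, s ∈ V₀` adjacent in the reduced graph `G₀`. -/
theorem schur_complement_positive_entries {m p : ℕ} (hm : 1 ≤ m) (hp : 1 ≤ p)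
    (G : SimpleGraph (Fin m ⊕ Fin p)) (hconn : G.Connected)
    (Q : Matrix (Fin m ⊕ Fin p) (Fin m ⊕ Fin p) ℝ)
    (hQ : ∀ k j, k ≠ j → ¬ G.Adj k j → Q k j = 0)
    (hsym : Q.toBlocks₁₂ = (Q.toBlocks₂₁)ᵀ)
    (hpos : ∀ k j, G.Adj k j → 0 < Q k j)
    (hspb : ∀ z ∈ spectrum ℂ ((Q.toBlocks₂₂).map Complex.ofReal), z.re < 0) :
    IsUnit Q.toBlocks₂₂ ∧
      ∀ r s : Fin m, r ≠ s → ReducedAdj G r s →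
        0 < (Q.toBlocks₁₁ + (Q.toBlocks₂₁)ᵀ * (-Q.toBlocks₂₂)⁻¹ * Q.toBlocks₂₁) r s := by
  classical
  set A := Q.toBlocks₁₁ with hA
  set B := Q.toBlocks₂₁ with hB
  set C := Q.toBlocks₂₂ with hC
  have hCij : ∀ i j, C i j = Q (Sum.inr i) (Sum.inr j) := fun i j => rfl
  have hBij : ∀ i j, B i j = Q (Sum.inr i) (Sum.inl j) := fun i j => rfl
  have hAij : ∀ i j, A i j = Q (Sum.inl i) (Sum.inl j) := fun i j => rfl
  have hoff : ∀ i j, i ≠ j → 0 ≤ C i j := by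
    intro i j hij
    by_cases hadj : G.Adj (Sum.inr i) (Sum.inr j)
    · exact (hpos _ _ hadj).le
    · rw [hCij, hQ _ _ (by simpa using hij) hadj]
  obtain ⟨hCu, α, hα0, hdiag, hbound⟩ := key_metzler C hoff hspb
  refine ⟨hCu, ?_⟩
  set N : Matrix (Fin p) (Fin p) ℝ := α • (1 : Matrix (Fin p) (Fin p) ℝ) + C with hN
  have hNnn : ∀ a b, 0 ≤ N a b := by
    intro a b
    by_cases h : a = b
    · subst h
      have := hdiag a
      simp only [hN, Matrix.add_apply, Matrix.smul_apply, Matrix.one_apply_eq, smul_eq_mul,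
        mul_one]
      linarith
    · have := hoff a b h
      simp only [hN, Matrix.add_apply, Matrix.smul_apply, Matrix.one_apply_ne h, smul_eq_mul,
        mul_zero, zero_add]
      linarith
  have hNadj : ∀ a b, G.Adj (Sum.inr a) (Sum.inr b) → 0 < N a b := by
    intro a b hadj
    have hne : a ≠ b := by rintro rfl; exact G.loopless.irrefl _ hadj
    have hrw : N a b = C a b := by
      simp [hN, Matrix.add_apply, Matrix.smul_apply, Matrix.one_apply_ne hne]
    rw [hrw, hCij]
    exact hpos _ _ hadj
  have hinv_nonneg : ∀ i j, 0 ≤ (-C)⁻¹ i j := by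
    intro i j
    have h1 : (0:ℝ) ≤ (α ^ (0+1))⁻¹ * ((N ^ 0) i j) :=
      mul_nonneg (inv_nonneg.mpr (pow_nonneg hα0.le _)) (pow_entry_nonneg N hNnn 0 i j)
    exact le_trans h1 (hbound 0 i j)
  have hinv_pos : ∀ (i j : Fin p) (k : ℕ), 0 < (N ^ k) i j → 0 < (-C)⁻¹ i j := by
    intro i j k hk
    exact lt_of_lt_of_le (mul_pos (inv_pos.mpr (pow_pos hα0 _)) hk) (hbound k i j)
  have hBnn : ∀ (i : Fin p) (r : Fin m), 0 ≤ B i r := by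
    intro i r
    by_cases hadj : G.Adj (Sum.inr i) (Sum.inl r)
    · exact (hpos _ _ hadj).le
    · rw [hBij, hQ _ _ (by simp) hadj]
  intro r s hrs hred
  have hM : (A + Bᵀ * (-C)⁻¹ * B) r s
      = A r s + ∑ j, (∑ i, B i r * (-C)⁻¹ i j) * B j s := by
    simp [Matrix.add_apply, Matrix.mul_apply, Matrix.transpose_apply]
  have hsum_nonneg : 0 ≤ ∑ j, (∑ i, B i r * (-C)⁻¹ i j) * B j s := by
    refine Finset.sum_nonneg fun j _ => mul_nonneg ?_ (hBnn j s)
    exact Finset.sum_nonneg fun i _ => mul_nonneg (hBnn i r) (hinv_nonneg i j)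
  have hAnn : 0 ≤ A r s := by
    by_cases hadj : G.Adj (Sum.inl r) (Sum.inl s)
    · exact (hpos _ _ hadj).le
    · rw [hAij, hQ _ _ (by simpa using hrs) hadj]
  have hadjcase : G.Adj (Sum.inl r) (Sum.inl s) → 0 < (A + Bᵀ * (-C)⁻¹ * B) r s := by
    intro hadj
    rw [hM]
    have : 0 < A r s := by rw [hAij]; exact hpos _ _ hadj
    linarith
  obtain ⟨-, hadj | hct⟩ := hred
  · exact hadjcase hadj
  · obtain ⟨w, hpath, hsupp⟩ := hct
    cases w with
    | nil => exact absurd rfl hrs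
    | @cons _ v _ hadj1 w' =>
      by_cases hvs : v = Sum.inl s
      · subst hvs; exact hadjcase hadj1
      · have hnotmem : Sum.inl r ∉ w'.support :=
          ((SimpleGraph.Walk.cons_isPath_iff _ _).mp hpath).2
        have hv : ∃ a : Fin p, v = Sum.inr a := by
          refine hsupp v ?_ ?_ hvs
          · rw [SimpleGraph.Walk.support_cons]
            exact List.mem_cons_of_mem _ w'.start_mem_support
          · intro hre
            exact hnotmem (hre ▸ w'.start_mem_support)
        obtain ⟨i1, rfl⟩ := hv
        have hsupp' : ∀ v' ∈ w'.support, v' ≠ Sum.inl s → ∃ a : Fin p, v' = Sum.inr a := by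
          intro v' hv' hvs'
          refine hsupp v' ?_ ?_ hvs'
          · rw [SimpleGraph.Walk.support_cons]
            exact List.mem_cons_of_mem _ hv'
          · intro hre
            exact hnotmem (hre ▸ hv')
        obtain ⟨k, j, hkpos, hjadj⟩ := walk_aux G N hNnn hNadj s _ _ w' rfl hsupp' i1 rfl
        have hB1 : 0 < B i1 r := by rw [hBij]; exact hpos _ _ hadj1.symm
        have hB2 : 0 < B j s := by rw [hBij]; exact hpos _ _ hjadj
        have hinv : 0 < (-C)⁻¹ i1 j := hinv_pos i1 j k hkpos
        have hin : 0 < ∑ i, B i r * (-C)⁻¹ i j :=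
          Finset.sum_pos' (fun l _ => mul_nonneg (hBnn l r) (hinv_nonneg l j))
            ⟨i1, Finset.mem_univ i1, mul_pos hB1 hinv⟩
        have houter : 0 < ∑ j', (∑ i, B i r * (-C)⁻¹ i j') * B j' s :=
          Finset.sum_pos' (fun j' _ => mul_nonneg (Finset.sum_nonneg fun i _ =>
              mul_nonneg (hBnn i r) (hinv_nonneg i j')) (hBnn j' s))
            ⟨j, Finset.mem_univ j, mul_pos hin hB2⟩
        rw [hM]
        linarith
end

section
/- Let G = (V,E) be a finite connected simple graph on the vertex set {1,…,n}, partitioned into V₀ = {1,…,m} (with 1 ≤ m < n) and V₁ = {m+1,…,n}. Let Q ∈ ℝ^{n×n} belong to the class A(G) and have the block form Q = [[A, Bᵀ],[B, C]] with A ∈ ℝ^{m×m} corresponding to V₀ and C ∈ ℝ^{(n−m)×(n−m)} corresponding to V₁. Assume that Q_{kj} > 0 for every edge (k,j) ∈ E with k ≠ j and that spb(C) < 0, and let M := A + Bᵀ(−C)⁻¹B be the Schur complement. Then for all distinct r,s ∈ V₀ one has M_{rs} = A_{rs} if and only if there is no path in G from r to s that has at least one intermediate vertex and all of whose intermediate vertices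 lie in V₁. -/
open Matrix Filter
open scoped ENNReal NNReal Topology Pointwise

section GeomAux
variable {A : Type*} [NormedRing A] [NormedAlgebra ℂ A] [CompleteSpace A] [Nontrivial A]

lemma spectral_geom (x : A) (hx : ∀ z ∈ spectrum ℂ x, ‖z‖₊ < 1) :
    ∃ S : A, HasSum (fun n => x ^ n) S ∧ (1 - x) * S = 1 ∧ S * (1 - x) = 1 := by
  have hρ : spectralRadius ℂ x < (1 : ℝ≥0) := spectrum.spectralRadius_lt_of_forall_lt x hx
  obtain ⟨c, hc1, hc2⟩ := ENNReal.lt_iff_exists_nnreal_btwn.mp hρ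
  have hc2' : (c : ℝ) < 1 := by exact_mod_cast hc2
  have hgel := spectrum.pow_nnnorm_pow_one_div_tendsto_nhds_spectralRadius x
  have hev : ∀ᶠ n : ℕ in atTop, (‖x ^ n‖₊ : ℝ≥0∞) ^ (1 / (n : ℝ)) < (c : ℝ≥0∞) :=
    hgel.eventually_lt_const hc1
  have hev2 : ∀ᶠ n : ℕ in atTop, ‖x ^ n‖ ≤ (c : ℝ) ^ n := by
    filter_upwards [hev, eventually_ge_atTop 1] with n hn hn1
    have hn0 : (n : ℝ) ≠ 0 := by positivity
    have h2 := ENNReal.rpow_lt_rpow hn (by positivity : (0:ℝ) < (n:ℝ))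
    rw [← ENNReal.rpow_mul, one_div, inv_mul_cancel₀ hn0, ENNReal.rpow_one,
      ENNReal.rpow_natCast, ← ENNReal.coe_pow, ENNReal.coe_lt_coe] at h2
    have : ‖x ^ n‖₊ ≤ c ^ n := h2.le
    simpa [← NNReal.coe_le_coe] using this
  have hsum : Summable (fun n => x ^ n) :=
    Summable.of_norm_bounded_eventually_nat (summable_geometric_of_lt_one c.coe_nonneg hc2') hev2
  have hzero : Tendsto (fun n => x ^ n) atTop (𝓝 0) := by
    apply squeeze_zero_norm' hev2
    exact tendsto_pow_atTop_nhds_zero_of_lt_one c.coe_nonneg hc2'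
  obtain ⟨S, hS⟩ := hsum
  refine ⟨S, hS, ?_, ?_⟩
  · have h1 : HasSum (fun n => (1 - x) * x ^ n) ((1 - x) * S) := hS.mul_left _
    have h2 := h1.tendsto_sum_nat
    have h3 : Tendsto (fun K => ∑ n ∈ Finset.range K, (1 - x) * x ^ n) atTop (𝓝 1) := by
      have : ∀ K, ∑ n ∈ Finset.range K, (1 - x) * x ^ n = 1 - x ^ K := by
        intro K
        have := Finset.sum_range_sub' (fun n => x ^ n) K
        simp only [sub_mul, one_mul] at *
        rw [Finset.sum_sub_distrib] at this ⊢
        convert this using 2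
        · exact (Finset.sum_congr rfl (fun n _ => by rw [← pow_succ'])).symm
        · exact (pow_zero x).symm
      simp only [this]
      simpa using (tendsto_const_nhds.sub hzero : Tendsto (fun K : ℕ => 1 - x ^ K) atTop (𝓝 (1 - 0)))
    exact tendsto_nhds_unique h2 h3
  · have h1 : HasSum (fun n => x ^ n * (1 - x)) (S * (1 - x)) := hS.mul_right _
    have h2 := h1.tendsto_sum_nat
    have h3 : Tendsto (fun K => ∑ n ∈ Finset.range K, x ^ n * (1 - x)) atTop (𝓝 1) := by
      have : ∀ K, ∑ n ∈ Finset.range K, x ^ n * (1 - x) = 1 - x ^ K := by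
        intro K
        have := Finset.sum_range_sub' (fun n => x ^ n) K
        simp only [mul_sub, mul_one] at *
        rw [Finset.sum_sub_distrib] at this ⊢
        convert this using 2
        · exact (Finset.sum_congr rfl (fun n _ => by rw [← pow_succ])).symm
        · exact (pow_zero x).symm
      simp only [this]
      simpa using (tendsto_const_nhds.sub hzero : Tendsto (fun K : ℕ => 1 - x ^ K) atTop (𝓝 (1 - 0)))
    exact tendsto_nhds_unique h2 h3

end GeomAux

section MatAux
variable {p : ℕ}

attribute [local instance] Matrix.linftyOpNormedRing Matrix.linftyOpNormedAlgebra

lemma entry_norm_le {n : Type*} [Fintype n] [DecidableEq n] {α : Type*} [NormedRing α]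
    (M : Matrix n n α) (i j : n) : ‖M i j‖ ≤ ‖M‖ := by
  have h1 : ‖M i j‖₊ ≤ ∑ j' : n, ‖M i j'‖₊ :=
    Finset.single_le_sum (f := fun j' => ‖M i j'‖₊) (fun _ _ => zero_le) (Finset.mem_univ j)
  have h2 : (∑ j' : n, ‖M i j'‖₊) ≤ ‖M‖₊ := by
    rw [Matrix.linfty_opNNNorm_def]
    exact Finset.le_sup (f := fun i => ∑ j' : n, ‖M i j'‖₊) (Finset.mem_univ i)
  exact_mod_cast h1.trans h2

lemma entry_continuous {n : Type*} [Fintype n] [DecidableEq n] {α : Type*} [NormedRing α]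
    (i j : n) : Continuous fun M : Matrix n n α => M i j := by
  exact Continuous.matrix_elem continuous_id i j

lemma mul_entry_nonneg {n : Type*} [Fintype n] {A B : Matrix n n ℝ}
    (hA : ∀ i j, 0 ≤ A i j) (hB : ∀ i j, 0 ≤ B i j) : ∀ i j, 0 ≤ (A * B) i j := by
  intro i j
  rw [Matrix.mul_apply]
  exact Finset.sum_nonneg fun k _ => mul_nonneg (hA i k) (hB k j)

lemma pow_entry_nonneg_s7 {n : Type*} [Fintype n] [DecidableEq n] {A : Matrix n n ℝ}
    (hA : ∀ i j, 0 ≤ A i j) : ∀ (k : ℕ) i j, 0 ≤ (A ^ k) i j := by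
  intro k
  induction k with
  | zero => intro i j; simp [Matrix.one_apply]; split <;> norm_num
  | succ k ih => rw [pow_succ]; exact mul_entry_nonneg ih hA

lemma key_inverse (hp : 1 ≤ p) (C : Matrix (Fin p) (Fin p) ℝ)
    (hoff : ∀ i j, i ≠ j → 0 ≤ C i j)
    (hspec : ∀ z ∈ spectrum ℂ (C.map Complex.ofReal), z.re < 0) :
    ∃ (P : Matrix (Fin p) (Fin p) ℝ) (α : ℝ), 0 < α ∧
      (∀ i, 0 < C i i + α) ∧ (-C) * P = 1 ∧ (∀ i j, 0 ≤ P i j) := by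
  haveI : Nonempty (Fin p) := ⟨⟨0, hp⟩⟩
  haveI : CompleteSpace (Matrix (Fin p) (Fin p) ℂ) := FiniteDimensional.complete ℂ _
  haveI : CompleteSpace (Matrix (Fin p) (Fin p) ℝ) := FiniteDimensional.complete ℝ _
  -- the shift
  set α : ℝ := 1 + ∑ i, |C i i| with hα_def
  have hα : 0 < α := by positivity
  have hdiag : ∀ i, 0 < C i i + α := by
    intro i
    have h1 : |C i i| ≤ ∑ i', |C i' i'| :=
      Finset.single_le_sum (f := fun i' => |C i' i'|) (fun _ _ => abs_nonneg _)
        (Finset.mem_univ i)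
    have := neg_abs_le (C i i)
    nlinarith
  set N : Matrix (Fin p) (Fin p) ℝ := C + α • 1 with hN_def
  have hN : ∀ i j, 0 ≤ N i j := by
    intro i j
    by_cases h : i = j
    · subst h
      have : N i i = C i i + α := by simp [hN_def, Matrix.one_apply]
      rw [this]; exact (hdiag i).le
    · have : N i j = C i j := by simp [hN_def, Matrix.one_apply, h]
      rw [this]; exact hoff i j h
  -- big shift β
  set β : ℝ := α + ‖N‖ + 1 with hβ_def
  have hβpos : 0 < β := by positivity
  have hβα : α < β := by have := norm_nonneg N; linarith
  have hNβ : ‖N‖ < β := by linarith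
  -- real geometric series at β
  set x₀ : Matrix (Fin p) (Fin p) ℝ := β⁻¹ • N with hx₀_def
  have hx₀ : ‖x₀‖ < 1 := by
    rw [hx₀_def, norm_smul, norm_inv, Real.norm_of_nonneg hβpos.le]
    rw [inv_mul_lt_iff₀ hβpos, mul_one]
    exact hNβ
  have hsum0 : Summable (fun k => x₀ ^ k) := summable_geometric_of_norm_lt_one hx₀
  set T : Matrix (Fin p) (Fin p) ℝ := ∑' k, x₀ ^ k with hT_def
  have hT1 : (1 - x₀) * T = 1 := mul_neg_geom_series x₀ hx₀
  set Pβ : Matrix (Fin p) (Fin p) ℝ := β⁻¹ • T with hPβ_def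
  have hPβ1 : (β • 1 - N) * Pβ = 1 := by
    have h1 : β • (1 : Matrix (Fin p) (Fin p) ℝ) - N = β • (1 - x₀) := by
      rw [hx₀_def, smul_sub, smul_smul, mul_inv_cancel₀ hβpos.ne', one_smul]
    rw [h1, hPβ_def, smul_mul_assoc, mul_smul_comm, smul_smul,
      mul_inv_cancel₀ hβpos.ne', one_smul, hT1]
  have hT_nonneg : ∀ i j, 0 ≤ T i j := by
    intro i j
    have hhs : HasSum (fun k => x₀ ^ k) T := hsum0.hasSum
    have htd : Tendsto (fun s : Finset ℕ => (∑ k ∈ s, x₀ ^ k) i j) atTop (𝓝 (T i j)) :=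
      ((entry_continuous i j).continuousAt.tendsto.comp hhs)
    refine ge_of_tendsto' htd fun s => ?_
    rw [Matrix.sum_apply]
    refine Finset.sum_nonneg fun k _ => ?_
    have : x₀ ^ k = (β⁻¹) ^ k • N ^ k := by rw [hx₀_def, smul_pow]
    rw [this, Matrix.smul_apply, smul_eq_mul]
    exact mul_nonneg (by positivity) (pow_entry_nonneg_s7 hN k i j)
  have hPβ_nonneg : ∀ i j, 0 ≤ Pβ i j := by
    intro i j
    rw [hPβ_def, Matrix.smul_apply, smul_eq_mul]
    exact mul_nonneg (by positivity) (hT_nonneg i j)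
  -- complex side
  set φ : Matrix (Fin p) (Fin p) ℝ →+* Matrix (Fin p) (Fin p) ℂ :=
    Complex.ofRealHom.mapMatrix with hφ_def
  have hφ_apply : ∀ (M : Matrix (Fin p) (Fin p) ℝ) i j, φ M i j = (M i j : ℂ) := by
    intro M i j; simp [hφ_def]
  set Nc := φ N with hNc_def
  have hNc_eq : Nc = C.map Complex.ofReal + algebraMap ℂ _ ((α : ℂ)) := by
    ext i j
    simp only [hNc_def, hφ_apply, hN_def, Algebra.algebraMap_eq_smul_one, Matrix.add_apply,
      Matrix.smul_apply, Matrix.one_apply, Matrix.map_apply]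
    split <;> push_cast <;> simp
  have hNc_spec : ∀ z ∈ spectrum ℂ Nc, z.re < α := by
    intro z hz
    rw [hNc_eq, ← spectrum.add_singleton_eq] at hz
    obtain ⟨w, hw, b, hb, hz'⟩ := Set.mem_add.mp hz
    have hb' : b = (α : ℂ) := by simpa using hb
    have hwre := hspec w hw
    have : z.re = w.re + α := by rw [← hz', hb']; simp
    linarith
  have hunit : ∀ γ : ℝ, α ≤ γ → IsUnit ((γ : ℂ) • (1 : Matrix (Fin p) (Fin p) ℂ) - Nc) := by
    intro γ hγ
    rw [← Algebra.algebraMap_eq_smul_one]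
    by_contra h
    have h2 : (γ : ℂ) ∈ spectrum ℂ Nc := spectrum.mem_iff.mpr h
    have h3 := hNc_spec _ h2
    rw [Complex.ofReal_re] at h3
    linarith
  set u := (hunit β hβα.le).unit with hu_def
  have hu : (u : Matrix (Fin p) (Fin p) ℂ) = (β : ℂ) • 1 - Nc := IsUnit.unit_spec _
  set Rc := φ Pβ with hRc_def
  have hmapβ : φ (β • 1 - N) = (β : ℂ) • 1 - Nc := by
    ext i j
    simp only [hφ_apply, Matrix.sub_apply, Matrix.smul_apply, Matrix.one_apply, hNc_def]
    split <;> push_cast <;> simp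
  have hRc1 : ((β : ℂ) • 1 - Nc) * Rc = 1 := by
    have h := _root_.map_mul φ (β • 1 - N) Pβ
    rw [hPβ1] at h
    simp only [_root_.map_one] at h
    rw [← hmapβ, hRc_def, ← h]
  have hRc_eq : Rc = (↑u⁻¹ : Matrix (Fin p) (Fin p) ℂ) := by
    rw [← one_mul Rc, ← Units.inv_mul u, mul_assoc, hu, hRc1, mul_one]
  have hRc2 : Rc * ((β : ℂ) • 1 - Nc) = 1 := by
    rw [hRc_eq, ← hu]; exact Units.inv_mul u
  set t : ℝ := β - α with ht_def
  have ht : 0 < t := by rw [ht_def]; linarith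
  have hx_spec : ∀ z ∈ spectrum ℂ ((t : ℂ) • Rc), ‖z‖₊ < 1 := by
    intro z hz
    have htne : (t : ℂ) ≠ 0 := by exact_mod_cast ht.ne'
    rw [hRc_eq] at hz
    have hz2 : z ∈ (Units.mk0 (t : ℂ) htne) • spectrum ℂ (↑u⁻¹ : Matrix (Fin p) (Fin p) ℂ) := by
      rw [← spectrum.unit_smul_eq_smul]
      simpa [Units.smul_def] using hz
    obtain ⟨y, hy, rfl⟩ := hz2
    have hy0 : y ≠ 0 := by
      rintro rfl
      exact (spectrum.zero_mem_iff ℂ).mp hy (u⁻¹).isUnit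
    have hyinv : (↑(Units.mk0 y hy0)⁻¹ : ℂ) ∈ spectrum ℂ ((↑(u⁻¹)⁻¹ : Matrix (Fin p) (Fin p) ℂ)) :=
      spectrum.inv_mem_iff.mp hy
    rw [inv_inv] at hyinv
    have hyinv' : (y⁻¹ : ℂ) ∈ spectrum ℂ ((β : ℂ) • 1 - Nc) := by
      rw [← hu]; simpa using hyinv
    rw [← Algebra.algebraMap_eq_smul_one, ← spectrum.singleton_sub_eq] at hyinv'
    obtain ⟨b, hb, w, hw, hbw⟩ := Set.mem_sub.mp hyinv'
    have hb' : b = (β : ℂ) := by simpa using hb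
    have hwre := hNc_spec w hw
    have hnorm : t < ‖(y⁻¹ : ℂ)‖ := by
      have h1 : ((β : ℂ) - w).re ≤ ‖(β : ℂ) - w‖ := Complex.re_le_norm _
      have h2 : ((β : ℂ) - w).re = β - w.re := by simp
      rw [← hbw, hb']
      calc t = β - α := ht_def
        _ < β - w.re := by linarith
        _ ≤ ‖(β:ℂ) - w‖ := by rw [← h2]; exact h1
    have hyn : ‖y‖ < t⁻¹ := by
      rw [norm_inv] at hnorm
      have hy0n : 0 < ‖y‖ := norm_pos_iff.mpr hy0
      exact (lt_inv_comm₀ ht hy0n).mp hnorm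
    have : ‖(Units.mk0 (t:ℂ) htne) • y‖ < 1 := by
      rw [Units.smul_def, norm_smul, Units.val_mk0]
      have : ‖(t : ℂ)‖ = t := by rw [Complex.norm_real, Real.norm_of_nonneg ht.le]
      rw [this]
      calc t * ‖y‖ < t * t⁻¹ := by exact (mul_lt_mul_iff_right₀ ht).mpr hyn
        _ = 1 := mul_inv_cancel₀ ht.ne'
    exact_mod_cast this
  obtain ⟨S, hS, hS1, hS2⟩ := spectral_geom ((t : ℂ) • Rc) hx_spec
  -- the inverse at α
  have hMα : ((α : ℂ) • 1 - Nc) * (Rc * S) = 1 := by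
    have h1 : ((α : ℂ) • (1 : Matrix (Fin p) (Fin p) ℂ) - Nc)
        = ((β : ℂ) • 1 - Nc) - (t : ℂ) • 1 := by
      have h0 : (t : ℂ) = (β : ℂ) - (α : ℂ) := by rw [ht_def]; push_cast; ring
      rw [h0, sub_smul]; abel
    have h2 : ((((β : ℂ) • 1 - Nc) - (t : ℂ) • 1) * Rc) = 1 - (t : ℂ) • Rc := by
      rw [sub_mul, hRc1, smul_mul_assoc, one_mul]
    rw [h1, ← mul_assoc, h2, hS1]
  have hterm : ∀ k : ℕ, Rc * ((t : ℂ) • Rc) ^ k = φ (t ^ k • Pβ ^ (k + 1)) := by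
    intro k
    calc Rc * ((t : ℂ) • Rc) ^ k = ((t : ℂ)) ^ k • Rc ^ (k + 1) := by
          rw [smul_pow, mul_smul_comm, ← pow_succ']
      _ = φ (t ^ k • Pβ ^ (k + 1)) := by
          rw [hRc_def, ← map_pow]
          ext i j
          rw [hφ_apply, Matrix.smul_apply, Matrix.smul_apply, hφ_apply, smul_eq_mul, smul_eq_mul]
          push_cast
          ring
  have hhs2 : HasSum (fun k => Rc * ((t : ℂ) • Rc) ^ k) (Rc * S) := hS.mul_left Rc
  have hPαc_entry : ∀ i j, ((Rc * S) i j).im = 0 ∧ 0 ≤ ((Rc * S) i j).re := by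
    intro i j
    have htd : Tendsto (fun s : Finset ℕ => (∑ k ∈ s, Rc * ((t : ℂ) • Rc) ^ k) i j) atTop
        (𝓝 ((Rc * S) i j)) := (entry_continuous i j).continuousAt.tendsto.comp hhs2
    have hps : ∀ s : Finset ℕ, ∃ c : ℝ, 0 ≤ c ∧
        (∑ k ∈ s, Rc * ((t : ℂ) • Rc) ^ k) i j = (c : ℂ) := by
      intro s
      refine ⟨(∑ k ∈ s, t ^ k • Pβ ^ (k + 1)) i j, ?_, ?_⟩
      · rw [Matrix.sum_apply]
        refine Finset.sum_nonneg fun k _ => ?_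
        rw [Matrix.smul_apply, smul_eq_mul]
        exact mul_nonneg (by positivity) (pow_entry_nonneg_s7 hPβ_nonneg (k + 1) i j)
      · simp_rw [hterm]
        rw [← map_sum φ _ s, hφ_apply]
    constructor
    · have h2 : Tendsto (fun s : Finset ℕ =>
          ((∑ k ∈ s, Rc * ((t : ℂ) • Rc) ^ k) i j).im) atTop (𝓝 (((Rc * S) i j).im)) :=
        (Complex.continuous_im.continuousAt.tendsto.comp htd)
      have h3 : (fun s : Finset ℕ => ((∑ k ∈ s, Rc * ((t : ℂ) • Rc) ^ k) i j).im)
          = fun _ => (0 : ℝ) := by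
        funext s
        obtain ⟨c, hc0, hc⟩ := hps s
        rw [hc, Complex.ofReal_im]
      rw [h3] at h2
      exact tendsto_nhds_unique h2 tendsto_const_nhds
    · refine ge_of_tendsto' (Complex.continuous_re.continuousAt.tendsto.comp htd) fun s => ?_
      obtain ⟨c, hc0, hc⟩ := hps s
      show 0 ≤ ((∑ k ∈ s, Rc * ((t : ℂ) • Rc) ^ k) i j).re
      rw [hc, Complex.ofReal_re]
      exact hc0
  set P : Matrix (Fin p) (Fin p) ℝ := Matrix.of (fun i j => ((Rc * S) i j).re) with hP_def
  have hφP : φ P = Rc * S := by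
    ext i j
    rw [hφ_apply]
    have h1 : P i j = ((Rc * S) i j).re := rfl
    rw [h1]
    exact Complex.ext (by simp) (by simp [(hPαc_entry i j).1])
  have hmapC : φ (-C) = (α : ℂ) • 1 - Nc := by
    have : (Nc : Matrix (Fin p) (Fin p) ℂ) = C.map Complex.ofReal + (α : ℂ) • 1 := by
      rw [hNc_eq, Algebra.algebraMap_eq_smul_one]
    rw [this]
    ext i j
    simp [hφ_apply, Matrix.sub_apply, Matrix.add_apply, Matrix.neg_apply, Matrix.map_apply]
  have hmain : (-C) * P = 1 := by
    have h2 : φ ((-C) * P) = φ 1 := by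
      rw [_root_.map_mul, hφP, hmapC, hMα, _root_.map_one]
    ext i j
    have h3 := congrFun (congrFun h2 i) j
    rw [hφ_apply, hφ_apply] at h3
    exact_mod_cast h3
  exact ⟨P, α, hα, hdiag, hmain, fun i j => (hPαc_entry i j).2⟩
end MatAux


section BlockAux

lemma mul_entry_nonneg' {n : Type*} [Fintype n] {A B : Matrix n n ℝ}
    (hA : ∀ i j, 0 ≤ A i j) (hB : ∀ i j, 0 ≤ B i j) : ∀ i j, 0 ≤ (A * B) i j := by
  intro i j
  rw [Matrix.mul_apply]
  exact Finset.sum_nonneg fun k _ => mul_nonneg (hA i k) (hB k j)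

lemma inv_block_zero {n : Type*} [Fintype n] [DecidableEq n] (M P : Matrix n n ℝ)
    (hMP : M * P = 1) (S : Set n) [DecidablePred (· ∈ S)]
    (hS : ∀ a b, a ∈ S → b ∉ S → M a b = 0) {i j : n} (hi : i ∈ S) (hj : j ∉ S) :
    P i j = 0 := by
  set e : {a // a ∈ S} ⊕ {a // a ∉ S} ≃ n := Equiv.sumCompl (· ∈ S) with he_def
  set M' := M.submatrix e e with hM'_def
  set P' := P.submatrix e e with hP'_def
  have hM'P' : M' * P' = 1 := by
    rw [hM'_def, hP'_def, Matrix.submatrix_mul_equiv, hMP, Matrix.submatrix_one_equiv]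
  have h12 : M'.toBlocks₁₂ = 0 := by
    ext a b
    simp only [Matrix.toBlocks₁₂, Matrix.of_apply, hM'_def, Matrix.submatrix_apply,
      Matrix.zero_apply]
    exact hS _ _ a.2 b.2
  set A := M'.toBlocks₁₁ with hA_def
  set Cb := M'.toBlocks₂₁ with hCb_def
  set D := M'.toBlocks₂₂ with hD_def
  have hblock : M' = Matrix.fromBlocks A 0 Cb D := by
    rw [← h12, hA_def, hCb_def, hD_def, Matrix.fromBlocks_toBlocks]
  have hdet : IsUnit M'.det := Matrix.isUnit_det_of_right_inverse hM'P'
  have hdet2 : IsUnit (A.det * D.det) := by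
    rwa [hblock, Matrix.det_fromBlocks_zero₁₂] at hdet
  have hAdet : IsUnit A.det := isUnit_of_mul_isUnit_left hdet2
  have hDdet : IsUnit D.det := isUnit_of_mul_isUnit_right hdet2
  set X := Matrix.fromBlocks A⁻¹ 0 (-(D⁻¹ * Cb * A⁻¹)) D⁻¹ with hX_def
  have hX : M' * X = 1 := by
    rw [hblock, hX_def, Matrix.fromBlocks_multiply]
    have h1 : A * A⁻¹ = 1 := Matrix.mul_nonsing_inv A hAdet
    have h2 : D * D⁻¹ = 1 := Matrix.mul_nonsing_inv D hDdet
    have h3 : Cb * A⁻¹ + D * -(D⁻¹ * Cb * A⁻¹) = 0 := by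
      rw [Matrix.mul_neg, ← Matrix.mul_assoc, ← Matrix.mul_assoc, h2, Matrix.one_mul, add_neg_cancel]
    rw [h3]
    simp [h1, h2, Matrix.fromBlocks_one]
  have hP'X : P' = X := by
    have e1 : M'⁻¹ = P' := Matrix.inv_eq_right_inv hM'P'
    have e2 : M'⁻¹ = X := Matrix.inv_eq_right_inv hX
    rw [← e1, e2]
  have hij : P i j = P' (Sum.inl ⟨i, hi⟩) (Sum.inr ⟨j, hj⟩) := by
    rw [hP'_def]
    simp [he_def]
  rw [hij, hP'X, hX_def]
  rfl

lemma pow_le_inv_entry {n : Type*} [Fintype n] [DecidableEq n]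
    {N P : Matrix n n ℝ} {α : ℝ} (hα : 0 < α)
    (hN : ∀ i j, 0 ≤ N i j) (hP : ∀ i j, 0 ≤ P i j)
    (heq : (α • 1 - N) * P = 1) :
    ∀ (k : ℕ) (i j : n), (N ^ k) i j ≤ α ^ (k + 1) * P i j := by
  have hrec : ∀ i j, α * P i j = (1 : Matrix n n ℝ) i j + (N * P) i j := by
    intro i j
    have h1 : (α • 1 - N) * P = α • P - N * P := by
      rw [sub_mul, smul_mul_assoc, one_mul]
    rw [h1] at heq
    have h2 := congrFun (congrFun heq i) j
    rw [Matrix.sub_apply, Matrix.smul_apply, smul_eq_mul] at h2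
    linarith
  have hNP : ∀ i j, (N * P) i j ≤ α * P i j := by
    intro i j
    have := hrec i j
    have h1 : 0 ≤ (1 : Matrix n n ℝ) i j := by
      by_cases h : i = j <;> simp [Matrix.one_apply, h]
    linarith
  intro k
  induction k with
  | zero =>
    intro i j
    have h := hrec i j
    have h2 : 0 ≤ (N * P) i j := mul_entry_nonneg' hN hP i j
    rw [pow_zero, pow_one]
    linarith
  | succ k ih =>
    intro i j
    have h1 : (N ^ (k + 1)) i j = ∑ b, N i b * (N ^ k) b j := by
      rw [pow_succ']; rw [Matrix.mul_apply]
    rw [h1]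
    calc ∑ b, N i b * (N ^ k) b j ≤ ∑ b, N i b * (α ^ (k + 1) * P b j) := by
          refine Finset.sum_le_sum fun b _ => ?_
          exact mul_le_mul_of_nonneg_left (ih b j) (hN i b)
      _ = α ^ (k + 1) * (N * P) i j := by
          rw [Matrix.mul_apply, Finset.mul_sum]
          exact Finset.sum_congr rfl fun b _ => by ring
      _ ≤ α ^ (k + 1) * (α * P i j) :=
          mul_le_mul_of_nonneg_left (hNP i j) (by positivity)
      _ = α ^ (k + 1 + 1) * P i j := by ring

end BlockAux

section WalkAux
variable {m p : ℕ}



lemma exists_walk_of_rel (G : SimpleGraph (Fin m ⊕ Fin p)) {i j : Fin p}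
    (h : Relation.ReflTransGen (fun a b => G.Adj (Sum.inr a) (Sum.inr b)) i j) :
    ∃ w : G.Walk (Sum.inr i) (Sum.inr j), ∀ v ∈ w.support, ∃ a : Fin p, v = Sum.inr a := by
  induction h with
  | refl => exact ⟨SimpleGraph.Walk.nil, by simp⟩
  | @tail b c hab hbc ih =>
    obtain ⟨w, hw⟩ := ih
    refine ⟨w.concat hbc, ?_⟩
    intro v hv
    rw [SimpleGraph.Walk.support_concat, List.mem_append] at hv
    rcases hv with hv | hv
    · exact hw v hv
    · exact ⟨c, List.mem_singleton.mp hv⟩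

lemma rel_of_walk (G : SimpleGraph (Fin m ⊕ Fin p)) (s : Fin m) :
    ∀ (u v : Fin m ⊕ Fin p) (w : G.Walk u v), v = Sum.inl s →
      (∀ x ∈ w.support, x ≠ Sum.inl s → ∃ b : Fin p, x = Sum.inr b) →
      ∀ a : Fin p, u = Sum.inr a →
      ∃ j : Fin p, Relation.ReflTransGen (fun a b => G.Adj (Sum.inr a) (Sum.inr b)) a j ∧
        G.Adj (Sum.inr j) (Sum.inl s) := by
  intro u v w
  induction w with
  | nil =>
    intro hv _ a ha
    rw [hv] at ha
    exact absurd ha (by simp)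
  | @cons u' v' w' h w ih =>
    intro hv hsupp a ha
    subst hv
    subst ha
    by_cases hvs : v' = Sum.inl s
    · subst hvs
      exact ⟨a, Relation.ReflTransGen.refl, h⟩
    · have hv' : v' ∈ (SimpleGraph.Walk.cons h w).support := by
        rw [SimpleGraph.Walk.support_cons]
        exact List.mem_cons_of_mem _ w.start_mem_support
      obtain ⟨b, hb⟩ := hsupp v' hv' hvs
      obtain ⟨j, hrel, hadj⟩ := ih rfl
        (fun x hx hne => hsupp x (by
          rw [SimpleGraph.Walk.support_cons]; exact List.mem_cons_of_mem _ hx) hne) b hb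
      refine ⟨j, Relation.ReflTransGen.head ?_ hrel, hadj⟩
      rw [← hb]
      exact h

end WalkAux

/-- Let `G` be a finite connected simple graph on `V₀ ⊕ V₁`, and let
`Q ∈ ℝ^{n×n}` be in the class `A(G)` with block form `[[A, Bᵀ],[B, C]]`, `Q_{kj} > 0` on all
edges and `spb(C) < 0`.  With `M = A + Bᵀ(−C)⁻¹B` the Schur complement, for all distinct
`r, s ∈ V₀` one has `M_{rs} = A_{rs}` if and only if there is no path in `G` from `r` to `s`
with at least one intermediate vertex, all of whose intermediate vertices lie in `V₁`. -/
theorem schur_complement_entry_eq_iff {m p : ℕ} (hm : 1 ≤ m) (hp : 1 ≤ p)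
    (G : SimpleGraph (Fin m ⊕ Fin p)) (hconn : G.Connected)
    (Q : Matrix (Fin m ⊕ Fin p) (Fin m ⊕ Fin p) ℝ)
    (hQ : ∀ k j, k ≠ j → ¬ G.Adj k j → Q k j = 0)
    (hsym : Q.toBlocks₁₂ = (Q.toBlocks₂₁)ᵀ)
    (hpos : ∀ k j, G.Adj k j → 0 < Q k j)
    (hspb : ∀ z ∈ spectrum ℂ ((Q.toBlocks₂₂).map Complex.ofReal), z.re < 0) :
    ∀ r s : Fin m, r ≠ s →
      ((Q.toBlocks₁₁ + (Q.toBlocks₂₁)ᵀ * (-Q.toBlocks₂₂)⁻¹ * Q.toBlocks₂₁) r s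
          = Q.toBlocks₁₁ r s ↔
        ¬ ∃ w : G.Walk (Sum.inl r) (Sum.inl s), w.IsPath ∧ 2 ≤ w.length ∧
            ∀ v ∈ w.support, v ≠ Sum.inl r → v ≠ Sum.inl s → ∃ i : Fin p, v = Sum.inr i) := by
  classical
  intro r s hrs
  set C := Q.toBlocks₂₂ with hC_def
  have hC_app : ∀ i j, C i j = Q (Sum.inr i) (Sum.inr j) := fun i j => rfl
  have hB_app : ∀ i j, Q.toBlocks₂₁ i j = Q (Sum.inr i) (Sum.inl j) := fun i j => rfl
  have hCoff : ∀ i j, i ≠ j → 0 ≤ C i j := by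
    intro i j hij
    rw [hC_app]
    by_cases hadj : G.Adj (Sum.inr i) (Sum.inr j)
    · exact (hpos _ _ hadj).le
    · rw [hQ _ _ (by simpa using hij) hadj]
  obtain ⟨P, α, hα, hdiag, hmain, hPnn⟩ := key_inverse hp C hCoff hspb
  have hPinv : (-C)⁻¹ = P := Matrix.inv_eq_right_inv hmain
  set N : Matrix (Fin p) (Fin p) ℝ := C + α • 1 with hN_def
  have hN : ∀ i j, 0 ≤ N i j := by
    intro i j
    by_cases h : i = j
    · subst h
      have : N i i = C i i + α := by simp [hN_def, Matrix.one_apply]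
      rw [this]; exact (hdiag i).le
    · have : N i j = C i j := by simp [hN_def, Matrix.one_apply, h]
      rw [this]; exact hCoff i j h
  have hCN : (α • 1 - N : Matrix (Fin p) (Fin p) ℝ) = -C := by rw [hN_def]; abel
  have hineq := pow_le_inv_entry hα hN hPnn (by rw [hCN]; exact hmain)
  have hNoffpos : ∀ a b, G.Adj (Sum.inr a) (Sum.inr b) → 0 < N a b := by
    intro a b hadj
    have hne : a ≠ b := by
      intro h; subst h; exact G.irrefl hadj
    have h1 : N a b = C a b := by simp [hN_def, Matrix.one_apply, hne]
    rw [h1, hC_app]; exact hpos _ _ hadj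
  have hrel_pos : ∀ i j,
      Relation.ReflTransGen (fun a b => G.Adj (Sum.inr a) (Sum.inr b)) i j → 0 < P i j := by
    intro i j hrel
    have hk : ∃ k, 0 < (N ^ k) i j := by
      induction hrel with
      | refl => exact ⟨0, by simp [Matrix.one_apply]⟩
      | @tail b c hib hbc ih =>
        obtain ⟨k, hk⟩ := ih
        refine ⟨k + 1, ?_⟩
        have h1 : (N ^ (k + 1)) i c = ∑ x, (N ^ k) i x * N x c := by
          rw [pow_succ, Matrix.mul_apply]
        rw [h1]
        calc (0 : ℝ) < (N ^ k) i b * N b c := mul_pos hk (hNoffpos b c hbc)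
          _ ≤ ∑ x, (N ^ k) i x * N x c :=
            Finset.single_le_sum (f := fun x => (N ^ k) i x * N x c)
              (fun x _ => mul_nonneg (pow_entry_nonneg_s7 hN k i x) (hN x c)) (Finset.mem_univ b)
    obtain ⟨k, hk⟩ := hk
    have h2 := hineq k i j
    nlinarith [pow_pos hα (k + 1)]
  have hrel_zero : ∀ i j,
      ¬ Relation.ReflTransGen (fun a b => G.Adj (Sum.inr a) (Sum.inr b)) i j → P i j = 0 := by
    intro i j hnrel
    refine inv_block_zero (-C) P hmain
      {x | Relation.ReflTransGen (fun a b => G.Adj (Sum.inr a) (Sum.inr b)) i x} ?_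
      Relation.ReflTransGen.refl hnrel
    intro a b ha hb
    by_cases hab : a = b
    · exact absurd (hab ▸ ha) hb
    · have hzero : C a b = 0 := by
        by_contra hC0
        have hadj : G.Adj (Sum.inr a) (Sum.inr b) := by
          by_contra hadj
          exact hC0 (by rw [hC_app]; exact hQ _ _ (by simpa using hab) hadj)
        exact hb (Relation.ReflTransGen.tail ha hadj)
      simp [Matrix.neg_apply, hzero]
  have hBnn : ∀ (i' : Fin p) (r' : Fin m), 0 ≤ Q (Sum.inr i') (Sum.inl r') := by
    intro i' r'
    by_cases hadj : G.Adj (Sum.inr i') (Sum.inl r')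
    · exact (hpos _ _ hadj).le
    · rw [hQ _ _ (by simp) hadj]
  have hBpos : ∀ (i' : Fin p) (r' : Fin m),
      0 < Q (Sum.inr i') (Sum.inl r') ↔ G.Adj (Sum.inr i') (Sum.inl r') := by
    intro i' r'
    constructor
    · intro h
      by_contra hadj
      rw [hQ _ _ (by simp) hadj] at h
      exact lt_irrefl _ h
    · exact hpos _ _
  have hXsum : ((Q.toBlocks₂₁)ᵀ * (-C)⁻¹ * Q.toBlocks₂₁) r s
      = ∑ i' : Fin p, ∑ j' : Fin p,
          Q (Sum.inr i') (Sum.inl r) * P i' j' * Q (Sum.inr j') (Sum.inl s) := by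
    rw [hPinv, Matrix.mul_apply]
    have hrow : ∀ j', ((Q.toBlocks₂₁)ᵀ * P) r j'
        = ∑ i', Q (Sum.inr i') (Sum.inl r) * P i' j' := by
      intro j'
      rw [Matrix.mul_apply]
      exact Finset.sum_congr rfl fun i' _ => by rw [Matrix.transpose_apply, hB_app]
    calc ∑ j', ((Q.toBlocks₂₁)ᵀ * P) r j' * Q.toBlocks₂₁ j' s
        = ∑ j', ∑ i', Q (Sum.inr i') (Sum.inl r) * P i' j' * Q (Sum.inr j') (Sum.inl s) := by
          refine Finset.sum_congr rfl fun j' _ => ?_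
          rw [hrow j', hB_app, Finset.sum_mul]
      _ = ∑ i', ∑ j', Q (Sum.inr i') (Sum.inl r) * P i' j' * Q (Sum.inr j') (Sum.inl s) :=
          Finset.sum_comm
  have hterm_nn : ∀ i' j',
      0 ≤ Q (Sum.inr i') (Sum.inl r) * P i' j' * Q (Sum.inr j') (Sum.inl s) :=
    fun i' j' => mul_nonneg (mul_nonneg (hBnn i' r) (hPnn i' j')) (hBnn j' s)
  have hsum_iff : ((Q.toBlocks₂₁)ᵀ * (-C)⁻¹ * Q.toBlocks₂₁) r s = 0 ↔
      ¬ (∃ i' j' : Fin p, G.Adj (Sum.inl r) (Sum.inr i') ∧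
        Relation.ReflTransGen (fun a b => G.Adj (Sum.inr a) (Sum.inr b)) i' j' ∧
        G.Adj (Sum.inr j') (Sum.inl s)) := by
    rw [hXsum]
    constructor
    · intro h0 hEX
      obtain ⟨i', j', h1, h2, h3⟩ := hEX
      rw [Finset.sum_eq_zero_iff_of_nonneg
        (fun i'' _ => Finset.sum_nonneg fun j'' _ => hterm_nn i'' j'')] at h0
      have h4 := h0 i' (Finset.mem_univ i')
      rw [Finset.sum_eq_zero_iff_of_nonneg (fun j'' _ => hterm_nn i' j'')] at h4
      have h5 := h4 j' (Finset.mem_univ j')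
      have hterm : 0 < Q (Sum.inr i') (Sum.inl r) * P i' j' * Q (Sum.inr j') (Sum.inl s) :=
        mul_pos (mul_pos ((hBpos i' r).mpr h1.symm) (hrel_pos _ _ h2)) ((hBpos j' s).mpr h3)
      rw [h5] at hterm
      exact lt_irrefl _ hterm
    · intro hnEX
      refine Finset.sum_eq_zero fun i' _ => Finset.sum_eq_zero fun j' _ => ?_
      by_cases h1 : G.Adj (Sum.inl r) (Sum.inr i')
      · by_cases h3 : G.Adj (Sum.inr j') (Sum.inl s)
        · have h2 : ¬ Relation.ReflTransGen (fun a b => G.Adj (Sum.inr a) (Sum.inr b)) i' j' :=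
            fun h2 => hnEX ⟨i', j', h1, h2, h3⟩
          rw [hrel_zero _ _ h2]; ring
        · rw [hQ _ _ (by simp) h3]; ring
      · rw [hQ (Sum.inr i') (Sum.inl r) (by simp) (fun h => h1 h.symm)]; ring
  have hEX_iff : (∃ i' j' : Fin p, G.Adj (Sum.inl r) (Sum.inr i') ∧
      Relation.ReflTransGen (fun a b => G.Adj (Sum.inr a) (Sum.inr b)) i' j' ∧
      G.Adj (Sum.inr j') (Sum.inl s)) ↔
      (∃ w : G.Walk (Sum.inl r) (Sum.inl s), w.IsPath ∧ 2 ≤ w.length ∧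
        ∀ v ∈ w.support, v ≠ Sum.inl r → v ≠ Sum.inl s → ∃ i : Fin p, v = Sum.inr i) := by
    constructor
    · rintro ⟨i', j', h1, h2, h3⟩
      obtain ⟨w0, hw0⟩ := exists_walk_of_rel G h2
      set W : G.Walk (Sum.inl r) (Sum.inl s) :=
        SimpleGraph.Walk.cons h1 (w0.concat h3) with hW_def
      have hWsupp : ∀ v ∈ W.support, v ≠ Sum.inl r → v ≠ Sum.inl s →
          ∃ i : Fin p, v = Sum.inr i := by
        intro v hv hvr hvs
        rw [hW_def, SimpleGraph.Walk.support_cons] at hv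
        rcases List.mem_cons.mp hv with hv | hv
        · exact absurd hv hvr
        · rw [SimpleGraph.Walk.support_concat, List.mem_append] at hv
          rcases hv with hv | hv
          · exact hw0 v hv
          · exact absurd (List.mem_singleton.mp hv) hvs
      have hWedge : ∀ e ∈ W.edges, e ≠ s(Sum.inl r, Sum.inl s) := by
        intro e he heq
        subst heq
        rw [hW_def, SimpleGraph.Walk.edges_cons] at he
        rcases List.mem_cons.mp he with he | he
        · rw [Sym2.eq_iff] at he
          rcases he with ⟨-, h⟩ | ⟨h, -⟩ <;> simp at h
        · rw [SimpleGraph.Walk.edges_concat, List.concat_eq_append, List.mem_append] at he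
          rcases he with he | he
          · obtain ⟨a, ha⟩ := hw0 _ (w0.fst_mem_support_of_mem_edges he)
            simp at ha
          · rw [List.mem_singleton, Sym2.eq_iff] at he
            rcases he with ⟨h, -⟩ | ⟨h, -⟩
            · simp at h
            · exact hrs (Sum.inl.inj h)
      refine ⟨W.bypass, SimpleGraph.Walk.bypass_isPath W, ?_, ?_⟩
      · have h0 : W.bypass.length ≠ 0 := fun h =>
          hrs (Sum.inl.inj (SimpleGraph.Walk.eq_of_length_eq_zero h))
        have h1len : W.bypass.length ≠ 1 := by
          intro hL
          obtain ⟨v'', h', w'', hweq⟩ := SimpleGraph.Walk.exists_eq_cons_of_ne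
            (by simp [hrs] : (Sum.inl r : Fin m ⊕ Fin p) ≠ Sum.inl s) W.bypass
          rw [hweq, SimpleGraph.Walk.length_cons] at hL
          have h0' : w''.length = 0 := by omega
          have hv'' : v'' = Sum.inl s := SimpleGraph.Walk.eq_of_length_eq_zero h0'
          have hedge : s(Sum.inl r, v'') ∈ W.bypass.edges := by
            rw [hweq, SimpleGraph.Walk.edges_cons]
            exact List.mem_cons_self
          rw [hv''] at hedge
          exact hWedge _ (SimpleGraph.Walk.edges_bypass_subset W hedge) rfl
        omega
      · intro v hv
        exact hWsupp v (SimpleGraph.Walk.support_bypass_subset W hv)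
    · rintro ⟨w, hpath, hlen, hsupp⟩
      obtain ⟨v', h1, w', hweq⟩ := SimpleGraph.Walk.exists_eq_cons_of_ne
        (by simp [hrs] : (Sum.inl r : Fin m ⊕ Fin p) ≠ Sum.inl s) w
      by_cases hvs : v' = Sum.inl s
      · exfalso
        subst hvs
        have hw' : w'.IsPath := by
          rw [hweq] at hpath
          exact hpath.of_cons
        have : w' = SimpleGraph.Walk.nil := SimpleGraph.Walk.isPath_iff_eq_nil.mp hw'
        rw [hweq, SimpleGraph.Walk.length_cons, this] at hlen
        simp at hlen
      · have hvr : v' ≠ Sum.inl r := h1.ne'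
        have hv'mem : v' ∈ w.support := by
          rw [hweq, SimpleGraph.Walk.support_cons]
          exact List.mem_cons_of_mem _ w'.start_mem_support
        obtain ⟨i', hi'⟩ := hsupp v' hv'mem hvr hvs
        have hrnotmem : Sum.inl r ∉ w'.support := by
          rw [hweq] at hpath
          exact ((SimpleGraph.Walk.cons_isPath_iff h1 w').mp hpath).2
        have hsupp' : ∀ x ∈ w'.support, x ≠ Sum.inl s → ∃ b : Fin p, x = Sum.inr b := by
          intro x hx hxs
          refine hsupp x ?_ ?_ hxs
          · rw [hweq, SimpleGraph.Walk.support_cons]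
            exact List.mem_cons_of_mem _ hx
          · intro hxr
            exact hrnotmem (hxr ▸ hx)
        obtain ⟨j', hrel, hadj⟩ := rel_of_walk G s v' (Sum.inl s) w' rfl hsupp' i' hi'
        refine ⟨i', j', ?_, hrel, hadj⟩
        rw [← hi']
        exact h1
  rw [Matrix.add_apply]
  constructor
  · intro h
    intro hpath
    have hX0 : ((Q.toBlocks₂₁)ᵀ * (-C)⁻¹ * Q.toBlocks₂₁) r s = 0 := by linarith
    exact (hsum_iff.mp hX0) (hEX_iff.mpr hpath)
  · intro hnpath
    have hnEX : ¬ (∃ i' j' : Fin p, G.Adj (Sum.inl r) (Sum.inr i') ∧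
        Relation.ReflTransGen (fun a b => G.Adj (Sum.inr a) (Sum.inr b)) i' j' ∧
        G.Adj (Sum.inr j') (Sum.inl s)) := fun hEX => hnpath (hEX_iff.mp hEX)
    rw [hsum_iff.mpr hnEX, add_zero]
end
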